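/- arXiv:2306.10513 — 3 statements merged into one kernel-verified Lean document; each statement's English description precedes it below -/
import Mathlib

section
/- Let (s₀,i₀) ∈ B with i₀ > 0 and let u be an optimal control for the infinite-horizon problem P^∞_{λ₁,λ₂} with λ₁ > 0. Then s^u_∞ := lim_{t→∞} s^u(t) < γ/β; that is, herd immunity is reached in finite time along the optimal trajectory. -/
open MeasureTheory Filter Set intervalIntegral
open scoped ENNReal

noncomputable section

/-- A control: a measurable (essentially bounded) function with values in `[0, umax]`. -/
def IsControl (umax : ℝ) (u : ℝ → ℝ) : Prop :=
  Measurable u ∧ ∀ t : ℝ, u t ∈ Set.Icc (0 : ℝ) umax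

/-- Solution of the controlled SIR system on `[0,∞)`, in integral (i.e. locally absolutely
continuous) form: `s' = -(β-u)·s·i`, `i' = (β-u)·s·i - γ·i` a.e., `s 0 = s₀`, `i 0 = i₀`. -/
def SIRSol (β γ : ℝ) (u s i : ℝ → ℝ) (s₀ i₀ : ℝ) : Prop :=
  Continuous s ∧ Continuous i ∧
  (∀ t : ℝ, 0 ≤ t → s t = s₀ + ∫ τ in (0:ℝ)..t, -((β - u τ) * s τ * i τ)) ∧
  (∀ t : ℝ, 0 ≤ t → i t = i₀ + ∫ τ in (0:ℝ)..t, ((β - u τ) * s τ * i τ - γ * i τ))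

/-- Solution of the controlled SIR system on `[0,T]`, in integral form. -/
def SIRSolOn (β γ T : ℝ) (u s i : ℝ → ℝ) (s₀ i₀ : ℝ) : Prop :=
  ContinuousOn s (Set.Icc 0 T) ∧ ContinuousOn i (Set.Icc 0 T) ∧
  (∀ t ∈ Set.Icc (0:ℝ) T, s t = s₀ + ∫ τ in (0:ℝ)..t, -((β - u τ) * s τ * i τ)) ∧
  (∀ t ∈ Set.Icc (0:ℝ) T, i t = i₀ + ∫ τ in (0:ℝ)..t, ((β - u τ) * s τ * i τ - γ * i τ))

/-- The triangle `T = {(s,i) ∈ (0,1]² : s + i ≤ 1}`. -/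
def Triangle : Set (ℝ × ℝ) :=
  {p | 0 < p.1 ∧ p.1 ≤ 1 ∧ 0 < p.2 ∧ p.2 ≤ 1 ∧ p.1 + p.2 ≤ 1}

/-- The curve `Φ_max`. -/
def PhiMax (β γ umax iM : ℝ) (x : ℝ) : ℝ :=
  if x < γ / (β - umax) then iM
  else γ / (β - umax) + iM - x + (γ / (β - umax)) * (Real.log x - Real.log (γ / (β - umax)))

/-- The curve `Φ₀`. -/
def Phi0 (β γ iM : ℝ) (x : ℝ) : ℝ :=
  if x < γ / β then iM
  else γ / β + iM - x + (γ / β) * (Real.log x - Real.log (γ / β))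

/-- The ICU (state) constraint `i(t) ≤ i_M` for all `t ≥ 0`. -/
def Admissible (iM : ℝ) (i : ℝ → ℝ) : Prop := ∀ t : ℝ, 0 ≤ t → i t ≤ iM

/-- Infinite-horizon cost `J^∞(u) = ∫₀^∞ (λ₁ u + λ₂ i) dt`, with values in `[0,∞]`. -/
def Cost (l1 l2 : ℝ) (u i : ℝ → ℝ) : ℝ≥0∞ :=
  ∫⁻ t in Set.Ioi (0:ℝ), ENNReal.ofReal (l1 * u t + l2 * i t)

/-- Finite-horizon cost `J^T(u) = ∫₀^T (λ₁ u + λ₂ i) dt`. -/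
def CostT (l1 l2 T : ℝ) (u i : ℝ → ℝ) : ℝ≥0∞ :=
  ∫⁻ t in Set.Ioc (0:ℝ) T, ENNReal.ofReal (l1 * u t + l2 * i t)

/-- The safe (no-effort) zone `A`. -/
def SafeZone (β γ iM : ℝ) : Set (ℝ × ℝ) :=
  {p | p ∈ Triangle ∧ ∃ s i : ℝ → ℝ,
    SIRSol β γ (fun _ => 0) s i p.1 p.2 ∧ Admissible iM i}

/-- The viable (feasible) set `B`. -/
def ViableSet (β γ umax iM : ℝ) : Set (ℝ × ℝ) :=
  {p | p ∈ Triangle ∧ ∃ u s i : ℝ → ℝ, IsControl umax u ∧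
    SIRSol β γ u s i p.1 p.2 ∧ Admissible iM i}

/-- Weak* convergence in `L^∞(0,∞)`: testing against every `L¹` function. -/
def WeakStarLim (un : ℕ → ℝ → ℝ) (u : ℝ → ℝ) : Prop :=
  ∀ g : ℝ → ℝ, MeasureTheory.IntegrableOn g (Set.Ioi 0) →
    Filter.Tendsto (fun n => ∫ t in Set.Ioi (0:ℝ), un n t * g t) Filter.atTop
      (nhds (∫ t in Set.Ioi (0:ℝ), u t * g t))


section SIRAuxSection
namespace SIRAux
open Topology
set_option linter.unusedVariables false
/-- interval integrability of `g * f₁ * f₂` with `g` measurable globally bounded,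
`f₁ f₂` continuous. -/
lemma II {g f₁ f₂ : ℝ → ℝ} {C : ℝ} (hg : Measurable g) (hC : ∀ τ, |g τ| ≤ C)
    (h₁ : Continuous f₁) (h₂ : Continuous f₂) (a b : ℝ) :
    IntervalIntegrable (fun τ => g τ * f₁ τ * f₂ τ) volume a b := by
  obtain ⟨M₁, hM₁⟩ := isCompact_uIcc.exists_bound_of_continuousOn (h₁.continuousOn (s := uIcc a b))
  obtain ⟨M₂, hM₂⟩ := isCompact_uIcc.exists_bound_of_continuousOn (h₂.continuousOn (s := uIcc a b))
  have hmeas : AEStronglyMeasurable (fun τ => g τ * f₁ τ * f₂ τ)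
      (volume.restrict (Set.uIoc a b)) :=
    ((hg.mul h₁.measurable).mul h₂.measurable).aestronglyMeasurable
  rw [intervalIntegrable_iff]
  refine Integrable.mono' (g := fun _ => C * M₁ * M₂) ?_ hmeas ?_
  · exact integrableOn_const measure_Ioc_lt_top.ne
  · refine (ae_restrict_iff' measurableSet_uIoc).2 (Filter.Eventually.of_forall ?_)
    intro x hx
    have hx' : x ∈ uIcc a b := uIoc_subset_uIcc hx
    have h1 := hM₁ x hx'
    have h2 := hM₂ x hx'
    have h0 : (0:ℝ) ≤ C := le_trans (abs_nonneg _) (hC 0)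
    have hM₁0 : (0:ℝ) ≤ M₁ := le_trans (norm_nonneg _) h1
    calc ‖g x * f₁ x * f₂ x‖ = |g x| * ‖f₁ x‖ * ‖f₂ x‖ := by
          simp [abs_mul, Real.norm_eq_abs]
      _ ≤ C * M₁ * M₂ := by
          apply mul_le_mul (mul_le_mul (hC x) h1 (norm_nonneg _) h0) h2 (norm_nonneg _)
          positivity



lemma two_point {f q : ℝ → ℝ}
    (hInt : ∀ a b : ℝ, IntervalIntegrable (fun τ => q τ * f τ) volume a b)
    (heq : ∀ t : ℝ, 0 ≤ t → f t = f 0 + ∫ τ in (0:ℝ)..t, q τ * f τ)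
    {a b : ℝ} (ha : 0 ≤ a) (hb : 0 ≤ b) :
    f b = f a + ∫ τ in a..b, q τ * f τ := by
  have h1 := heq a ha
  have h2 := heq b hb
  have h3 := intervalIntegral.integral_add_adjacent_intervals (hInt 0 a) (hInt a b)
  rw [h2, ← h3]; rw [h1]; ring

lemma pos_of_integral {f q : ℝ → ℝ} (hf : Continuous f)
    (hInt : ∀ a b : ℝ, IntervalIntegrable (fun τ => q τ * f τ) volume a b)
    (hbd : ∀ T : ℝ, 0 < T → ∃ A, 0 ≤ A ∧ ∀ τ ∈ Icc (0:ℝ) T, |q τ| ≤ A)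
    (heq : ∀ t : ℝ, 0 ≤ t → f t = f 0 + ∫ τ in (0:ℝ)..t, q τ * f τ)
    (h0 : 0 < f 0) : ∀ t : ℝ, 0 ≤ t → 0 < f t := by
  intro t₀ ht₀
  rcases eq_or_lt_of_le ht₀ with h | hT
  · rwa [← h]
  by_contra hcon
  push_neg at hcon
  obtain ⟨A, hA0, hA⟩ := hbd t₀ hT
  set E : Set ℝ := {t ∈ Icc (0:ℝ) t₀ | f t ≤ 0} with hE
  have hEclosed : IsClosed E := by
    have : E = Icc (0:ℝ) t₀ ∩ f ⁻¹' (Iic 0) := by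
      ext x; simp [hE, Set.mem_setOf_eq, Set.mem_inter_iff, and_comm]
    rw [this]
    exact isClosed_Icc.inter (isClosed_Iic.preimage hf)
  have hEne : E.Nonempty := ⟨t₀, ⟨le_of_lt hT, le_refl _⟩, hcon⟩
  have hEbdd : BddBelow E := ⟨0, fun x hx => hx.1.1⟩
  set ts := sInf E with hts
  have htsE : ts ∈ E := hEclosed.csInf_mem hEne hEbdd
  have hts0 : 0 ≤ ts := htsE.1.1
  have htsT : ts ≤ t₀ := htsE.1.2
  have htsf : f ts ≤ 0 := htsE.2
  -- f > 0 strictly before ts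
  have hpos : ∀ t, 0 ≤ t → t < ts → 0 < f t := by
    intro t h1 h2
    by_contra hc
    push_neg at hc
    have : t ∈ E := ⟨⟨h1, le_trans (le_of_lt h2) htsT⟩, hc⟩
    exact absurd (csInf_le hEbdd this) (not_le.2 h2)
  -- f ≥ 0 on [0, ts]
  have hnn : ∀ t, 0 ≤ t → t ≤ ts → 0 ≤ f t := by
    intro t h1 h2
    rcases eq_or_lt_of_le h2 with h | h
    · subst h
      -- f ts ≥ 0 by continuity from the left (or ts = 0)
      rcases eq_or_lt_of_le hts0 with h' | h'
      · rw [← h']; exact le_of_lt h0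
      · -- ts > 0
        have hne : (𝓝[Ico 0 ts] ts).NeBot := by
          apply mem_closure_iff_nhdsWithin_neBot.1
          rw [closure_Ico (ne_of_lt h')]
          exact ⟨hts0, le_refl _⟩
        have htend : Filter.Tendsto f (𝓝[Ico 0 ts] ts) (𝓝 (f ts)) :=
          (hf.tendsto ts).mono_left nhdsWithin_le_nhds
        refine ge_of_tendsto htend ?_
        filter_upwards [self_mem_nhdsWithin] with x hx
        exact le_of_lt (hpos x hx.1 hx.2)
    · exact le_of_lt (hpos t h1 h)
  set ε : ℝ := 1 / (4 * (A + 1)) with hε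
  have hεpos : 0 < ε := by positivity
  have hAε : A * ε ≤ 1 / 4 := by
    rw [hε, mul_one_div, div_le_div_iff₀ (by positivity) (by norm_num)]
    nlinarith
  -- one step estimate
  have step : ∀ a b : ℝ, 0 ≤ a → a ≤ b → b ≤ ts → b - a ≤ ε → (2/3) * f a ≤ f b := by
    intro a b ha hab hbts hlen
    obtain ⟨τm, hτm, hmax⟩ := isCompact_Icc.exists_isMaxOn (nonempty_Icc.2 hab)
      (hf.continuousOn (s := Icc a b))
    set M := f τm with hM
    have hfa_nn : 0 ≤ f a := hnn a ha (le_trans hab hbts)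
    have hMfa : f a ≤ M := hmax (left_mem_Icc.2 hab)
    have hM0 : 0 ≤ M := le_trans hfa_nn hMfa
    have hsub : Icc a τm ⊆ Icc (0:ℝ) t₀ := by
      intro x hx
      exact ⟨le_trans ha hx.1, le_trans hx.2 (le_trans hτm.2 (le_trans hbts htsT))⟩
    have hbound : ∀ c, a ≤ c → c ≤ b →
        ∫ τ in a..c, q τ * f τ ≤ A * M * (c - a) := by
      intro c hac hcb
      have hmono := intervalIntegral.integral_mono_on (μ := volume) hac (hInt a c)
        (_root_.intervalIntegrable_const (c := A * M)) ?_
      · calc ∫ τ in a..c, q τ * f τ ≤ ∫ _ in a..c, A * M := hmono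
          _ = A * M * (c - a) := by simp [intervalIntegral.integral_const]; ring
      · intro x hx
        have hx0 : 0 ≤ x := le_trans ha hx.1
        have hxts : x ≤ ts := le_trans hx.2 (le_trans hcb hbts)
        have hfx : 0 ≤ f x := hnn x hx0 hxts
        have hfxM : f x ≤ M := hmax ⟨hx.1, le_trans hx.2 hcb⟩
        have hqx : |q x| ≤ A := hA x ⟨hx0, le_trans hxts htsT⟩
        calc q x * f x ≤ |q x| * f x := by
              exact mul_le_mul_of_nonneg_right (le_abs_self _) hfx
          _ ≤ A * M := mul_le_mul hqx hfxM hfx hA0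
    have hbound' : ∀ c, a ≤ c → c ≤ b →
        -(A * M * (c - a)) ≤ ∫ τ in a..c, q τ * f τ := by
      intro c hac hcb
      have hmono := intervalIntegral.integral_mono_on (μ := volume) hac
        (_root_.intervalIntegrable_const (c := -(A * M))) (hInt a c) ?_
      · calc -(A * M * (c - a)) = ∫ _ in a..c, -(A*M) := by
              simp [intervalIntegral.integral_const]; ring
          _ ≤ ∫ τ in a..c, q τ * f τ := hmono
      · intro x hx
        have hx0 : 0 ≤ x := le_trans ha hx.1
        have hxts : x ≤ ts := le_trans hx.2 (le_trans hcb hbts)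
        have hfx : 0 ≤ f x := hnn x hx0 hxts
        have hfxM : f x ≤ M := hmax ⟨hx.1, le_trans hx.2 hcb⟩
        have hqx : |q x| ≤ A := hA x ⟨hx0, le_trans hxts htsT⟩
        have : -(A * M) ≤ -( |q x| * f x) := by
          apply neg_le_neg
          exact mul_le_mul hqx hfxM hfx hA0
        refine le_trans this ?_
        rw [neg_le]
        calc -(q x * f x) ≤ |q x| * f x := by
              rw [← neg_mul]
              exact mul_le_mul_of_nonneg_right (neg_le_abs _) hfx
          _ ≤ |q x| * f x := le_refl _
    -- M ≤ (4/3) f a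
    have htp := two_point hInt heq ha (le_trans ha hτm.1) (b := τm)
    have hMle : M ≤ f a + 1/4 * M := by
      rw [hM, htp]
      have h1 := hbound τm hτm.1 hτm.2
      have h2 : A * M * (τm - a) ≤ 1/4 * M := by
        have hτa : τm - a ≤ ε := le_trans (by linarith [hτm.2] : τm - a ≤ b - a) hlen
        have : A * M * (τm - a) ≤ A * M * ε :=
          mul_le_mul_of_nonneg_left hτa (by positivity)
        calc A * M * (τm - a) ≤ A * M * ε := this
          _ = (A * ε) * M := by ring
          _ ≤ 1/4 * M := mul_le_mul_of_nonneg_right hAε hM0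
      linarith
    have hM43 : M ≤ 4/3 * f a := by linarith
    -- conclude
    have htp2 := two_point hInt heq ha (le_trans ha hab) (b := b)
    have h2 := hbound' b hab (le_refl b)
    have h3 : A * M * (b - a) ≤ 1/3 * f a := by
      have : A * M * (b - a) ≤ (A * ε) * M := by
        have := mul_le_mul_of_nonneg_left hlen (show (0:ℝ) ≤ A * M by positivity)
        linarith [this]
      calc A * M * (b - a) ≤ (A*ε) * M := this
        _ ≤ 1/4 * M := mul_le_mul_of_nonneg_right hAε hM0
        _ ≤ 1/4 * (4/3 * f a) := by linarith
        _ = 1/3 * f a := by ring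
    rw [htp2]
    linarith [hbound' b hab (le_refl b)]
  -- iterate
  have iterate : ∀ n : ℕ, ∀ t : ℝ, 0 ≤ t → t ≤ ts → t ≤ n * ε → (2/3)^n * f 0 ≤ f t := by
    intro n
    induction n with
    | zero =>
      intro t h1 h2 h3
      simp only [Nat.cast_zero, zero_mul] at h3
      have : t = 0 := le_antisymm h3 h1
      subst this; simp
    | succ n ih =>
      intro t h1 h2 h3
      rcases le_or_gt t (n * ε) with h | h
      · refine le_trans ?_ (ih t h1 h2 h)
        have : (2/3:ℝ)^(n+1) ≤ (2/3)^n := by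
          apply pow_le_pow_of_le_one <;> norm_num
        exact mul_le_mul_of_nonneg_right this (le_of_lt h0)
      · set a := max (t - ε) 0 with ha
        have ha0 : 0 ≤ a := le_max_right _ _
        have hat : a ≤ t := by
          apply max_le _ h1
          linarith [hεpos]
        have hanε : a ≤ n * ε := by
          apply max_le _ (by positivity)
          push_cast at h3 ⊢
          linarith
        have hlen : t - a ≤ ε := by
          have : t - ε ≤ a := le_max_left _ _
          linarith
        have hstep := step a t ha0 hat h2 hlen
        have hih := ih a ha0 (le_trans hat h2) hanε
        calc (2/3:ℝ)^(n+1) * f 0 = (2/3) * ((2/3)^n * f 0) := by ring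
          _ ≤ (2/3) * f a := by
              apply mul_le_mul_of_nonneg_left hih (by norm_num)
          _ ≤ f t := hstep
  obtain ⟨n, hn⟩ := exists_nat_ge (ts / ε)
  have : ts ≤ n * ε := by
    rw [div_le_iff₀ hεpos] at hn
    linarith
  have hfinal := iterate n ts hts0 (le_refl _) this
  have : (0:ℝ) < (2/3)^n * f 0 := by positivity
  linarith

/-- Collected basic facts about an admissible-type trajectory. -/
structure TF (β γ umax : ℝ) (u s i : ℝ → ℝ) (s₀ i₀ : ℝ) : Prop where
  spos : ∀ t, 0 ≤ t → 0 < s t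
  ipos : ∀ t, 0 ≤ t → 0 < i t
  santi : ∀ t₁ t₂, 0 ≤ t₁ → t₁ ≤ t₂ → s t₂ ≤ s t₁
  sle : ∀ t, 0 ≤ t → s t ≤ s₀
  intbound : ∀ t, 0 ≤ t → (∫ τ in (0:ℝ)..t, i τ) ≤ (s₀ + i₀)/γ
  ismall : ∀ ε, 0 < ε → ∀ T, 0 ≤ T → ∃ t, T ≤ t ∧ i t < ε
  heqi : ∀ a b, 0 ≤ a → 0 ≤ b → i b = i a + ∫ τ in a..b, ((β - u τ) * s τ - γ) * i τ
  heqs : ∀ a b, 0 ≤ a → 0 ≤ b → s b = s a + ∫ τ in a..b, (-((β - u τ) * i τ)) * s τ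
  hIqi : ∀ a b, IntervalIntegrable (fun τ => ((β - u τ) * s τ - γ) * i τ) volume a b
  hIqs : ∀ a b, IntervalIntegrable (fun τ => (-((β - u τ) * i τ)) * s τ) volume a b
  hIusi : ∀ a b, IntervalIntegrable (fun τ => u τ * s τ * i τ) volume a b
  s0 : s 0 = s₀
  i0 : i 0 = i₀

lemma mkTF {β γ umax s₀ i₀ : ℝ} {u s i : ℝ → ℝ}
    (hβ : 0 < β) (hγ : 0 < γ) (humax : 0 ≤ umax) (humaxβ : umax < β)
    (hu : IsControl umax u) (hsol : SIRSol β γ u s i s₀ i₀)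
    (hs₀ : 0 < s₀) (hi₀ : 0 < i₀) :
    TF β γ umax u s i s₀ i₀ := by
  obtain ⟨hs, hi, heqs0, heqi0⟩ := hsol
  have hubd : ∀ τ, |β - u τ| ≤ β := by
    intro τ
    obtain ⟨h1, h2⟩ := hu.2 τ
    rw [abs_le]; constructor <;> nlinarith
  have humeas : Measurable (fun τ => β - u τ) := measurable_const.sub hu.1
  -- integrability of the i-equation integrand
  have hIqi : ∀ a b, IntervalIntegrable (fun τ => ((β - u τ) * s τ - γ) * i τ) volume a b := by
    intro a b
    have e : (fun τ => ((β - u τ) * s τ - γ) * i τ)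
        = fun τ => (β - u τ) * s τ * i τ + (fun τ => -γ * i τ) τ := by
      funext τ; ring
    rw [e]
    exact (II humeas hubd hs hi a b).add ((continuous_const.mul hi).intervalIntegrable a b)
  have hIqs : ∀ a b, IntervalIntegrable (fun τ => (-((β - u τ) * i τ)) * s τ) volume a b := by
    intro a b
    have e : (fun τ => (-((β - u τ) * i τ)) * s τ)
        = fun τ => -((β - u τ) * i τ * s τ) := by funext τ; ring
    rw [e]
    exact (II humeas hubd hi hs a b).neg
  have hIusi : ∀ a b, IntervalIntegrable (fun τ => u τ * s τ * i τ) volume a b := by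
    intro a b
    refine II hu.1 (C := umax) ?_ hs hi a b
    intro τ
    obtain ⟨h1, h2⟩ := hu.2 τ
    rw [abs_of_nonneg h1]; exact h2
  have hIbsi : ∀ a b, IntervalIntegrable (fun τ => (β - u τ) * s τ * i τ) volume a b :=
    fun a b => II humeas hubd hs hi a b
  -- rewrite the base equations in q·f form
  have heqi' : ∀ t : ℝ, 0 ≤ t → i t = i 0 + ∫ τ in (0:ℝ)..t, ((β - u τ) * s τ - γ) * i τ := by
    have hi0 : i 0 = i₀ := by
      have := heqi0 0 (le_refl 0); simpa using this
    intro t ht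
    rw [hi0, heqi0 t ht]
    congr 1
    apply intervalIntegral.integral_congr
    intro τ _; ring
  have heqs' : ∀ t : ℝ, 0 ≤ t → s t = s 0 + ∫ τ in (0:ℝ)..t, (-((β - u τ) * i τ)) * s τ := by
    have hs0 : s 0 = s₀ := by
      have := heqs0 0 (le_refl 0); simpa using this
    intro t ht
    rw [hs0, heqs0 t ht]
    congr 1
    apply intervalIntegral.integral_congr
    intro τ _; ring
  have hs0 : s 0 = s₀ := by have := heqs0 0 (le_refl 0); simpa using this
  have hi0 : i 0 = i₀ := by have := heqi0 0 (le_refl 0); simpa using this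
  -- boundedness of q's on compacts
  have hbdi : ∀ T : ℝ, 0 < T → ∃ A, 0 ≤ A ∧ ∀ τ ∈ Icc (0:ℝ) T,
      |(β - u τ) * s τ - γ| ≤ A := by
    intro T hT
    obtain ⟨Ms, hMs⟩ := isCompact_Icc.exists_bound_of_continuousOn
      (hs.continuousOn (s := Icc (0:ℝ) T))
    refine ⟨β * Ms + γ, ?_, ?_⟩
    · have : (0:ℝ) ≤ Ms := le_trans (norm_nonneg _) (hMs 0 ⟨le_refl _, le_of_lt hT⟩)
      positivity
    · intro τ hτ
      have h1 := hMs τ hτ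
      have habs : |(β - u τ) * s τ - γ| ≤ |(β - u τ) * s τ| + |γ| := abs_sub _ _
      have h2 : |s τ| ≤ Ms := h1
      have h3 : |(β - u τ) * s τ| ≤ β * Ms := by
        rw [abs_mul]
        exact mul_le_mul (hubd τ) h2 (abs_nonneg _) (le_of_lt hβ)
      have h4 : |γ| = γ := abs_of_pos hγ
      linarith
  have hbds : ∀ T : ℝ, 0 < T → ∃ A, 0 ≤ A ∧ ∀ τ ∈ Icc (0:ℝ) T,
      |(-((β - u τ) * i τ))| ≤ A := by
    intro T hT
    obtain ⟨Mi, hMi⟩ := isCompact_Icc.exists_bound_of_continuousOn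
      (hi.continuousOn (s := Icc (0:ℝ) T))
    refine ⟨β * Mi, ?_, ?_⟩
    · have : (0:ℝ) ≤ Mi := le_trans (norm_nonneg _) (hMi 0 ⟨le_refl _, le_of_lt hT⟩)
      positivity
    · intro τ hτ
      have h1 : |i τ| ≤ Mi := hMi τ hτ
      rw [abs_neg, abs_mul]
      exact mul_le_mul (hubd τ) h1 (abs_nonneg _) (le_of_lt hβ)
  -- positivity
  have ipos : ∀ t, 0 ≤ t → 0 < i t :=
    pos_of_integral hi hIqi hbdi heqi' (by rw [hi0]; exact hi₀)
  have spos : ∀ t, 0 ≤ t → 0 < s t :=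
    pos_of_integral hs hIqs hbds heqs' (by rw [hs0]; exact hs₀)
  -- monotonicity of s
  have santi : ∀ t₁ t₂, 0 ≤ t₁ → t₁ ≤ t₂ → s t₂ ≤ s t₁ := by
    intro t₁ t₂ h1 h12
    have h2 : (0:ℝ) ≤ t₂ := le_trans h1 h12
    have htp := two_point hIqs heqs' h1 h2
    have hint : (∫ τ in t₁..t₂, (-((β - u τ) * i τ)) * s τ) ≤ 0 := by
      have : 0 ≤ ∫ τ in t₁..t₂, -((-((β - u τ) * i τ)) * s τ) := by
        apply intervalIntegral.integral_nonneg h12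
        intro x hx
        have hx0 : 0 ≤ x := le_trans h1 hx.1
        have h3 := ipos x hx0
        have h4 := spos x hx0
        obtain ⟨hu1, hu2⟩ := hu.2 x
        have h5 : 0 < β - u x := by linarith
        nlinarith [mul_pos (mul_pos h5 h3) h4]
      rw [intervalIntegral.integral_neg] at this
      linarith
    rw [htp]; linarith
  have sle : ∀ t, 0 ≤ t → s t ≤ s₀ := by
    intro t ht
    have := santi 0 t (le_refl _) ht
    rwa [hs0] at this
  -- sum identity and integral bound
  have isum : ∀ t, 0 ≤ t → s t + i t + γ * ∫ τ in (0:ℝ)..t, i τ = s₀ + i₀ := by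
    intro t ht
    have h1 := heqs0 t ht
    have h2 := heqi0 t ht
    have hIneg : IntervalIntegrable (fun τ => -((β - u τ) * s τ * i τ)) volume 0 t := by
      have := (hIbsi 0 t).neg
      exact this
    have hIsub : IntervalIntegrable (fun τ => (β - u τ) * s τ * i τ - γ * i τ) volume 0 t := by
      have hc : Continuous (fun τ => γ * i τ) := continuous_const.mul hi
      have := (hIbsi 0 t).sub (hc.intervalIntegrable 0 t)
      simpa using this
    have h3 : (∫ τ in (0:ℝ)..t, -((β - u τ) * s τ * i τ))
        + (∫ τ in (0:ℝ)..t, ((β - u τ) * s τ * i τ - γ * i τ))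
        = ∫ τ in (0:ℝ)..t, -(γ * i τ) := by
      rw [← intervalIntegral.integral_add hIneg hIsub]
      apply intervalIntegral.integral_congr
      intro τ _; ring
    have h4 : (∫ τ in (0:ℝ)..t, -(γ * i τ)) = -(γ * ∫ τ in (0:ℝ)..t, i τ) := by
      rw [intervalIntegral.integral_neg, intervalIntegral.integral_const_mul]
    have : s t + i t = s₀ + i₀ + ((∫ τ in (0:ℝ)..t, -((β - u τ) * s τ * i τ))
        + (∫ τ in (0:ℝ)..t, ((β - u τ) * s τ * i τ - γ * i τ))) := by
      rw [h1, h2]; ring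
    rw [h3, h4] at this
    linarith
  have intbound : ∀ t, 0 ≤ t → (∫ τ in (0:ℝ)..t, i τ) ≤ (s₀ + i₀)/γ := by
    intro t ht
    have h1 := isum t ht
    have h2 := spos t ht
    have h3 := ipos t ht
    rw [le_div_iff₀ hγ]
    nlinarith
  have ismall : ∀ ε, 0 < ε → ∀ T, 0 ≤ T → ∃ t, T ≤ t ∧ i t < ε := by
    intro ε hε T hT
    by_contra hc
    push_neg at hc
    set Y : ℝ := (s₀ + i₀)/γ with hY
    have hYpos : 0 < Y := by positivity
    set X : ℝ := Y/ε + 1 with hX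
    have hXpos : 0 < X := by positivity
    have h1 : (∫ τ in (0:ℝ)..T, i τ) ≥ 0 := by
      apply intervalIntegral.integral_nonneg hT
      intro x hx; exact le_of_lt (ipos x hx.1)
    have h2 : (∫ τ in T..(T + X), i τ) ≥ ε * X := by
      have := intervalIntegral.integral_mono_on (μ := volume)
        (by linarith : T ≤ T + X)
        (_root_.intervalIntegrable_const (c := ε))
        (hi.intervalIntegrable T (T + X)) ?_
      · calc ε * X = ((T + X) - T) • ε := by rw [smul_eq_mul]; ring
          _ = ∫ _ in T..(T+X), ε := (intervalIntegral.integral_const ε).symm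
          _ ≤ _ := this
      · intro x hx
        exact hc x (hx.1)
    have h3 : (∫ τ in (0:ℝ)..(T + X), i τ) = (∫ τ in (0:ℝ)..T, i τ) + ∫ τ in T..(T+X), i τ :=
      (intervalIntegral.integral_add_adjacent_intervals
        (hi.intervalIntegrable 0 T) (hi.intervalIntegrable T (T+X))).symm
    have h4 := intbound (T + X) (by linarith)
    rw [h3] at h4
    have h5 : ε * X ≤ Y := by linarith
    have h6 : ε * X = Y + ε := by
      rw [hX]; field_simp
    linarith
  exact ⟨spos, ipos, santi, sle, intbound, ismall,
    fun a b ha hb => two_point hIqi heqi' ha hb,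
    fun a b ha hb => two_point hIqs heqs' ha hb,
    hIqi, hIqs, hIusi, hs0, hi0⟩

lemma slimit {s : ℝ → ℝ} (santi : ∀ t₁ t₂ : ℝ, 0 ≤ t₁ → t₁ ≤ t₂ → s t₂ ≤ s t₁)
    (snn : ∀ t, 0 ≤ t → 0 ≤ s t) :
    ∃ L, Filter.Tendsto s Filter.atTop (nhds L) ∧ 0 ≤ L ∧ ∀ t, 0 ≤ t → L ≤ s t := by
  set g : ℝ → ℝ := fun t => s (max t 0) with hg
  have hganti : Antitone g := by
    intro a b hab
    exact santi (max a 0) (max b 0) (le_max_right _ _) (max_le_max hab (le_refl 0))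
  have hgbdd : BddBelow (Set.range g) := by
    refine ⟨0, ?_⟩
    rintro x ⟨t, rfl⟩
    exact snn _ (le_max_right _ _)
  have htends : Filter.Tendsto g Filter.atTop (nhds (⨅ t, g t)) :=
    tendsto_atTop_ciInf hganti hgbdd
  refine ⟨⨅ t, g t, ?_, ?_, ?_⟩
  · apply htends.congr'
    filter_upwards [Filter.eventually_ge_atTop (0:ℝ)] with t ht
    rw [hg]; simp [max_eq_left ht]
  · exact le_ciInf fun t => snn _ (le_max_right _ _)
  · intro t ht
    have := ciInf_le hgbdd t
    simpa [hg, max_eq_left ht] using this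

/-- The tail of the integral of an integrable nonneg function can be made small. -/
lemma tail_small {u : ℝ → ℝ} (hU : IntegrableOn u (Set.Ioi (0:ℝ)))
    (hnn : ∀ t, 0 ≤ u t) {ε : ℝ} (hε : 0 < ε) :
    ∃ a₀ : ℝ, 0 ≤ a₀ ∧ (∫ t in Set.Ioi a₀, u t) ≤ ε := by
  have htend := MeasureTheory.intervalIntegral_tendsto_integral_Ioi (μ := volume)
    (b := fun n : ℕ => (n:ℝ)) 0 hU tendsto_natCast_atTop_atTop
  have : ∀ᶠ n : ℕ in Filter.atTop,
      (∫ t in Set.Ioi (0:ℝ), u t) - ε < ∫ x in (0:ℝ)..(n:ℝ), u x := by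
    have := htend.eventually (eventually_gt_nhds (by linarith :
      (∫ t in Set.Ioi (0:ℝ), u t) - ε < ∫ t in Set.Ioi (0:ℝ), u t))
    exact this
  obtain ⟨n, hn⟩ := this.exists
  refine ⟨(n:ℝ), Nat.cast_nonneg n, ?_⟩
  have hsplit : (∫ t in Set.Ioc (0:ℝ) (n:ℝ), u t) + (∫ t in Set.Ioi (n:ℝ), u t)
      = ∫ t in Set.Ioi (0:ℝ), u t := by
    rw [← MeasureTheory.setIntegral_union]
    · rw [Set.Ioc_union_Ioi_eq_Ioi (Nat.cast_nonneg n)]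
    · exact Set.Ioc_disjoint_Ioi (le_refl _)
    · exact measurableSet_Ioi
    · exact hU.mono_set Set.Ioc_subset_Ioi_self
    · exact hU.mono_set (Set.Ioi_subset_Ioi (Nat.cast_nonneg n))
  rw [intervalIntegral.integral_of_le (Nat.cast_nonneg n)] at hn
  linarith

/-- Main contradiction: if the susceptible never drops below `γ/β` and the control
has finite total effort, the trajectory cannot be admissible. -/
lemma no_herd {β γ umax iM s₀ i₀ : ℝ} {u s i : ℝ → ℝ}
    (hβ : 0 < β) (hγ : 0 < γ)
    (hu : IsControl umax u) (tf : TF β γ umax u s i s₀ i₀)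
    (hs1 : s₀ ≤ 1)
    (hadm : ∀ t, 0 ≤ t → i t ≤ iM)
    (hsL : ∀ t, 0 ≤ t → γ / β ≤ s t)
    (hcont_s : Continuous s) (hcont_i : Continuous i)
    (hUint : IntegrableOn u (Set.Ioi (0:ℝ))) : False := by
  have hunn : ∀ t, 0 ≤ u t := fun t => (hu.2 t).1
  obtain ⟨a₀, ha₀0, ha₀⟩ := tail_small hUint hunn (by norm_num : (0:ℝ) < 1/2)
  set W := ∫ t in Set.Ioi a₀, u t with hW
  have hUa₀ : IntegrableOn u (Set.Ioi a₀) :=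
    hUint.mono_set (Set.Ioi_subset_Ioi ha₀0)
  have hWnn : 0 ≤ W := by
    rw [hW]
    apply MeasureTheory.setIntegral_nonneg measurableSet_Ioi
    exact fun t _ => hunn t
  have hiM : 0 < iM := lt_of_lt_of_le (tf.ipos 0 (le_refl _)) (hadm 0 (le_refl _))
  -- key step inequality
  have key : ∀ M : ℝ, 0 ≤ M → (∀ σ, a₀ ≤ σ → i σ ≤ M) →
      ∀ a, a₀ ≤ a → ∀ t, a ≤ t → i a - M * W ≤ i t := by
    intro M hM hIH a ha t hat
    have ha0 : (0:ℝ) ≤ a := le_trans ha₀0 ha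
    have ht0 : (0:ℝ) ≤ t := le_trans ha0 hat
    have heq := tf.heqi a t ha0 ht0
    have hIbsi : IntervalIntegrable (fun τ => (β * s τ - γ) * i τ) volume a t :=
      (((continuous_const.mul hcont_s).sub continuous_const).mul hcont_i).intervalIntegrable a t
    have hsplit : (∫ τ in a..t, ((β - u τ) * s τ - γ) * i τ)
        = (∫ τ in a..t, (β * s τ - γ) * i τ) - ∫ τ in a..t, u τ * s τ * i τ := by
      rw [← intervalIntegral.integral_sub hIbsi (tf.hIusi a t)]
      apply intervalIntegral.integral_congr
      intro τ _; ring
    have h1 : 0 ≤ ∫ τ in a..t, (β * s τ - γ) * i τ := by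
      apply intervalIntegral.integral_nonneg hat
      intro x hx
      have hx0 : (0:ℝ) ≤ x := le_trans ha0 hx.1
      have h2 := hsL x hx0
      have h3 : γ ≤ β * s x := by
        rw [div_le_iff₀ hβ] at h2; linarith
      have := le_of_lt (tf.ipos x hx0)
      nlinarith
    have hsubIoc : Set.Ioc a t ⊆ Set.Ioi a₀ := fun x hx => lt_of_le_of_lt ha hx.1
    have h2 : (∫ τ in a..t, u τ * s τ * i τ) ≤ M * W := by
      rw [intervalIntegral.integral_of_le hat]
      have hInt1 : IntegrableOn (fun τ => u τ * s τ * i τ) (Set.Ioc a t) :=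
        (intervalIntegrable_iff_integrableOn_Ioc_of_le hat).1 (tf.hIusi a t)
      have hInt2 : IntegrableOn (fun τ => M * u τ) (Set.Ioc a t) :=
        (hUa₀.mono_set hsubIoc).const_mul M
      have hmono : (∫ τ in Set.Ioc a t, u τ * s τ * i τ)
          ≤ ∫ τ in Set.Ioc a t, M * u τ := by
        apply MeasureTheory.setIntegral_mono_on hInt1 hInt2 measurableSet_Ioc
        intro x hx
        have hx0 : (0:ℝ) ≤ x := le_trans ha0 (le_of_lt hx.1)
        have hs1' : s x ≤ 1 := le_trans (tf.sle x hx0) hs1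
        have hs0' : 0 < s x := tf.spos x hx0
        have hi0' : 0 < i x := tf.ipos x hx0
        have hiM' : i x ≤ M := hIH x (le_trans ha (le_of_lt hx.1))
        have hux := hunn x
        have e1 : u x * s x * i x ≤ u x * i x := by
          nlinarith [mul_nonneg (mul_nonneg hux (le_of_lt hi0')) (by linarith : (0:ℝ) ≤ 1 - s x)]
        have e2 : u x * i x ≤ u x * M := mul_le_mul_of_nonneg_left hiM' hux
        calc u x * s x * i x ≤ u x * M := le_trans e1 e2
          _ = M * u x := mul_comm _ _
      have hmono2 : (∫ τ in Set.Ioc a t, M * u τ) = M * ∫ τ in Set.Ioc a t, u τ :=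
        MeasureTheory.integral_const_mul M u
      have hmono3 : (∫ τ in Set.Ioc a t, u τ) ≤ W := by
        rw [hW]
        apply MeasureTheory.setIntegral_mono_set hUa₀
        · exact Filter.Eventually.of_forall fun x => hunn x
        · exact Filter.Eventually.of_forall hsubIoc
      calc (∫ τ in Set.Ioc a t, u τ * s τ * i τ) ≤ ∫ τ in Set.Ioc a t, M * u τ := hmono
        _ = M * ∫ τ in Set.Ioc a t, u τ := hmono2
        _ ≤ M * W := mul_le_mul_of_nonneg_left hmono3 hM
    rw [heq, hsplit]
    linarith
  -- geometric descent
  have descent : ∀ n : ℕ, ∀ a, a₀ ≤ a → i a ≤ iM * (1/2)^n := by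
    intro n
    induction n with
    | zero =>
      intro a ha
      simpa using hadm a (le_trans ha₀0 ha)
    | succ n ih =>
      intro a ha
      set M := iM * (1/2:ℝ)^n with hM
      have hMnn : 0 ≤ M := by positivity
      have hkey := key M hMnn ih a ha
      have : ∀ η : ℝ, 0 < η → i a ≤ M * W + η := by
        intro η hη
        obtain ⟨t, hta, hts⟩ := tf.ismall η hη a (le_trans ha₀0 ha)
        have := hkey t hta
        linarith
      have h3 : i a ≤ M * W := le_of_forall_pos_le_add this
      have h4 : M * W ≤ M * (1/2) := mul_le_mul_of_nonneg_left ha₀ hMnn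
      calc i a ≤ M * (1/2) := le_trans h3 h4
        _ = iM * (1/2)^(n+1) := by rw [hM]; ring
  -- contradiction
  have hia₀ : 0 < i a₀ := tf.ipos a₀ ha₀0
  obtain ⟨n, hn⟩ := exists_pow_lt_of_lt_one (show (0:ℝ) < i a₀ / iM by positivity)
    (show (1/2:ℝ) < 1 by norm_num)
  have := descent n a₀ (le_refl _)
  rw [lt_div_iff₀ hiM] at hn
  nlinarith


noncomputable section

/-- decaying exponential `e^{-b (t - T)}` -/
def yf (b T t : ℝ) : ℝ := Real.exp (-(b * (t - T)))

def svf (Si c δ T : ℝ) (t : ℝ) : ℝ := Si + c * yf δ T t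

def ivf (A I₂ δ γ T : ℝ) (t : ℝ) : ℝ := A * yf δ T t + (I₂ - A) * yf γ T t

def vf (β a Si c A I₂ δ γ T : ℝ) (t : ℝ) : ℝ :=
  β - a * yf δ T t / (svf Si c δ T t * ivf A I₂ δ γ T t)

section phase
variable {β γ umax S₂ I₂ Si δ c a A T : ℝ}

/-- hypothesis bundle for the final phase parameters -/
structure PH (β γ umax S₂ I₂ Si δ c a A : ℝ) : Prop where
  hβ : 0 < β
  hγ : 0 < γ
  humax : 0 < umax
  humaxβ : umax < β
  hS₂ : 0 < S₂
  hI₂ : 0 < I₂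
  hSi : 0 < Si
  hSilt : Si < S₂
  hδdef : δ = γ - β * Si
  hcdef : c = S₂ - Si
  hadef : a = (β - umax) * S₂ * I₂
  hδc : δ * c = a
  hAid : β * Si * A = a
  hApos : 0 < A
  hAI₂ : A ≤ I₂
  hδpos : 0 < δ
  hδγ : δ < γ

lemma PH.hcpos (h : PH β γ umax S₂ I₂ Si δ c a A) : 0 < c := by
  rw [h.hcdef]; linarith [h.hSilt]

lemma PH.hapos (h : PH β γ umax S₂ I₂ Si δ c a A) : 0 < a := by
  rw [h.hadef]
  have hbu : 0 < β - umax := by linarith [h.humaxβ]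
  exact mul_pos (mul_pos hbu h.hS₂) h.hI₂

lemma yf_pos (b T t : ℝ) : 0 < yf b T t := Real.exp_pos _

lemma yf_at (b T : ℝ) : yf b T T = 1 := by simp [yf]

lemma yf_le_one {b T t : ℝ} (hb : 0 ≤ b) (ht : T ≤ t) : yf b T t ≤ 1 := by
  rw [yf, Real.exp_le_one_iff]
  have : 0 ≤ b * (t - T) := mul_nonneg hb (by linarith)
  linarith

lemma yf_mono {b b' T t : ℝ} (hbb : b ≤ b') (ht : T ≤ t) : yf b' T t ≤ yf b T t := by
  rw [yf, yf, Real.exp_le_exp]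
  have h1 : 0 ≤ t - T := by linarith
  nlinarith

lemma yf_mul (b b' T t : ℝ) : yf b T t * yf b' T t = yf (b + b') T t := by
  rw [yf, yf, yf, ← Real.exp_add]
  ring_nf

lemma yf_hasDeriv (b T t : ℝ) : HasDerivAt (yf b T) (-(b * yf b T t)) t := by
  have h1 : HasDerivAt (fun t : ℝ => -(b * (t - T))) (-b) t := by
    have := ((hasDerivAt_id t).sub_const T).const_mul b
    have h2 : HasDerivAt (fun y : ℝ => b * (y - T)) b t := by simpa using this
    exact h2.neg
  have := h1.exp
  rw [show Real.exp (-(b * (t - T))) = yf b T t from rfl] at this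
  convert this using 1
  · rfl
  · ring

lemma yf_cont (b T : ℝ) : Continuous (yf b T) := by
  apply Real.continuous_exp.comp
  exact (continuous_const.mul (continuous_id.sub continuous_const)).neg

lemma svf_cont (Si c δ T : ℝ) : Continuous (svf Si c δ T) :=
  continuous_const.add (continuous_const.mul (yf_cont δ T))

lemma ivf_cont (A I₂ δ γ T : ℝ) : Continuous (ivf A I₂ δ γ T) :=
  (continuous_const.mul (yf_cont δ T)).add (continuous_const.mul (yf_cont γ T))

lemma svf_pos (h : PH β γ umax S₂ I₂ Si δ c a A) (t : ℝ) : 0 < svf Si c δ T t := by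
  have := h.hSi; have := h.hcpos; have := yf_pos δ T t
  rw [svf]; positivity

lemma svf_ge (h : PH β γ umax S₂ I₂ Si δ c a A) (t : ℝ) : Si ≤ svf Si c δ T t := by
  have := h.hcpos; have := yf_pos δ T t
  rw [svf]; nlinarith

lemma svf_le (h : PH β γ umax S₂ I₂ Si δ c a A) {t : ℝ} (ht : T ≤ t) :
    svf Si c δ T t ≤ S₂ := by
  have h1 := yf_le_one (le_of_lt h.hδpos) ht
  have h2 := h.hcpos
  rw [svf, h.hcdef]
  have h3 : 0 < S₂ - Si := h.hcdef ▸ h2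
  nlinarith [mul_nonneg (le_of_lt h3) (by linarith : (0:ℝ) ≤ 1 - yf δ T t)]

lemma svf_at (h : PH β γ umax S₂ I₂ Si δ c a A) : svf Si c δ T T = S₂ := by
  rw [svf, yf_at, h.hcdef]; ring

lemma ivf_pos (h : PH β γ umax S₂ I₂ Si δ c a A) (t : ℝ) : 0 < ivf A I₂ δ γ T t := by
  have h1 := yf_pos δ T t
  have h2 := yf_pos γ T t
  have h3 := h.hApos
  have h4 : 0 ≤ I₂ - A := by linarith [h.hAI₂]
  rw [ivf]
  nlinarith

lemma ivf_ge (h : PH β γ umax S₂ I₂ Si δ c a A) (t : ℝ) :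
    A * yf δ T t ≤ ivf A I₂ δ γ T t := by
  have h2 := yf_pos γ T t
  have h4 : 0 ≤ I₂ - A := by linarith [h.hAI₂]
  rw [ivf]; nlinarith

lemma ivf_le (h : PH β γ umax S₂ I₂ Si δ c a A) {t : ℝ} (ht : T ≤ t) :
    ivf A I₂ δ γ T t ≤ I₂ * yf δ T t := by
  have h1 := yf_mono (le_of_lt h.hδγ) ht
  have h4 : 0 ≤ I₂ - A := by linarith [h.hAI₂]
  rw [ivf]; nlinarith

lemma ivf_at (h : PH β γ umax S₂ I₂ Si δ c a A) : ivf A I₂ δ γ T T = I₂ := by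
  rw [ivf, yf_at, yf_at]; ring

lemma vf_cont (h : PH β γ umax S₂ I₂ Si δ c a A) :
    Continuous (vf β a Si c A I₂ δ γ T) := by
  apply continuous_const.sub
  apply Continuous.div ((continuous_const.mul (yf_cont δ T)))
    ((svf_cont Si c δ T).mul (ivf_cont A I₂ δ γ T))
  intro t
  exact ne_of_gt (mul_pos (svf_pos h t) (ivf_pos h t))

lemma vf_nonneg (h : PH β γ umax S₂ I₂ Si δ c a A) {t : ℝ} (ht : T ≤ t) :
    0 ≤ vf β a Si c A I₂ δ γ T t := by
  have hD : 0 < svf Si c δ T t * ivf A I₂ δ γ T t :=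
    mul_pos (svf_pos h t) (ivf_pos h t)
  rw [vf, sub_nonneg, div_le_iff₀ hD]
  have h1 := svf_ge (T := T) h t
  have h2 := ivf_ge (T := T) h t
  have h3 := yf_pos δ T t
  have h4 := h.hAid
  have h5 := ivf_pos (T := T) h t
  have h6 := h.hSi
  have h7 := h.hApos
  have h8 := h.hβ
  -- a * yf = β * Si * A * yf ≤ β * svf * ivf
  calc a * yf δ T t = β * (Si * (A * yf δ T t)) := by rw [← h4]; ring
    _ ≤ β * (svf Si c δ T t * ivf A I₂ δ γ T t) := by
        apply mul_le_mul_of_nonneg_left _ (le_of_lt h8)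
        apply mul_le_mul h1 h2 (by positivity) (le_of_lt (svf_pos h t))

lemma vf_le_umax (h : PH β γ umax S₂ I₂ Si δ c a A) {t : ℝ} (ht : T ≤ t) :
    vf β a Si c A I₂ δ γ T t ≤ umax := by
  have hD : 0 < svf Si c δ T t * ivf A I₂ δ γ T t :=
    mul_pos (svf_pos h t) (ivf_pos h t)
  rw [vf, sub_le_iff_le_add]
  rw [← sub_le_iff_le_add']
  rw [le_div_iff₀ hD]
  have h1 := svf_le (T := T) h ht
  have h2 := ivf_le (T := T) h ht
  have h3 := yf_pos δ T t
  have h5 := ivf_pos (T := T) h t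
  have h6 := svf_pos (T := T) h t
  have hbu : 0 < β - umax := by linarith [h.humaxβ]
  calc (β - umax) * (svf Si c δ T t * ivf A I₂ δ γ T t)
      ≤ (β - umax) * (S₂ * (I₂ * yf δ T t)) := by
        apply mul_le_mul_of_nonneg_left _ (le_of_lt hbu)
        apply mul_le_mul h1 h2 (le_of_lt h5) (le_of_lt h.hS₂)
    _ = a * yf δ T t := by rw [h.hadef]; ring


/-- the s-equation integrand identity -/
lemma vf_s_integrand (h : PH β γ umax S₂ I₂ Si δ c a A) (t : ℝ) :
    (β - vf β a Si c A I₂ δ γ T t) * svf Si c δ T t * ivf A I₂ δ γ T t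
      = a * yf δ T t := by
  have hD : svf Si c δ T t * ivf A I₂ δ γ T t ≠ 0 :=
    ne_of_gt (mul_pos (svf_pos h t) (ivf_pos h t))
  rw [vf]
  rw [sub_sub_cancel, mul_assoc, div_mul_cancel₀ _ hD]

lemma svf_hasDeriv (h : PH β γ umax S₂ I₂ Si δ c a A) (t : ℝ) :
    HasDerivAt (svf Si c δ T) (-(a * yf δ T t)) t := by
  have h1 := (yf_hasDeriv δ T t).const_mul c
  have h2 := (hasDerivAt_const t Si).add h1
  have h2' : HasDerivAt (svf Si c δ T) (0 + c * -(δ * yf δ T t)) t := h2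
  convert h2' using 1
  rw [← h.hδc]; ring

lemma ivf_hasDeriv (h : PH β γ umax S₂ I₂ Si δ c a A) (t : ℝ) :
    HasDerivAt (ivf A I₂ δ γ T) (a * yf δ T t - γ * ivf A I₂ δ γ T t) t := by
  have h1 := ((yf_hasDeriv δ T t).const_mul A).add ((yf_hasDeriv γ T t).const_mul (I₂ - A))
  have : HasDerivAt (ivf A I₂ δ γ T)
      (A * -(δ * yf δ T t) + (I₂ - A) * -(γ * yf γ T t)) t := h1
  convert this using 1
  have h4 := h.hAid
  have h5 : δ = γ - β * Si := h.hδdef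
  simp only [ivf]
  linear_combination (-(yf δ T t)) * h4 + (A * yf δ T t) * h5

lemma svf_integral (h : PH β γ umax S₂ I₂ Si δ c a A) (t : ℝ) :
    ∫ τ in T..t, -(a * yf δ T τ) = svf Si c δ T t - S₂ := by
  rw [← svf_at (T := T) h]
  apply intervalIntegral.integral_eq_sub_of_hasDerivAt
  · intro x _
    exact svf_hasDeriv h x
  · apply Continuous.intervalIntegrable
    exact (continuous_const.mul (yf_cont δ T)).neg

lemma ivf_integral (h : PH β γ umax S₂ I₂ Si δ c a A) (t : ℝ) :
    ∫ τ in T..t, (a * yf δ T τ - γ * ivf A I₂ δ γ T τ)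
      = ivf A I₂ δ γ T t - I₂ := by
  have h1 : ∫ τ in T..t, (a * yf δ T τ - γ * ivf A I₂ δ γ T τ)
      = ivf A I₂ δ γ T t - ivf A I₂ δ γ T T := by
    apply intervalIntegral.integral_eq_sub_of_hasDerivAt
    · intro x _
      exact ivf_hasDeriv h x
    · apply Continuous.intervalIntegrable
      exact (continuous_const.mul (yf_cont δ T)).sub
        (continuous_const.mul (ivf_cont A I₂ δ γ T))
  rw [h1, ivf_at (T := T) h]

/-- exponential decay bound for the control -/
lemma vf_decay (h : PH β γ umax S₂ I₂ Si δ c a A) {t : ℝ} (ht : T ≤ t) :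
    vf β a Si c A I₂ δ γ T t
      ≤ (2 * β * S₂ * I₂ / (Si * A)) * (yf δ T t + yf (γ - δ) T t) := by
  set D := svf Si c δ T t * ivf A I₂ δ γ T t with hD
  have hDpos : 0 < D := mul_pos (svf_pos h t) (ivf_pos h t)
  set K : ℝ := 2 * β * S₂ * I₂ / (Si * A) with hK
  have hKpos : 0 < K := by
    rw [hK]
    have := h.hβ; have := h.hS₂; have := h.hI₂; have := h.hSi; have := h.hApos
    positivity
  have hSA : Si * A ≠ 0 := by
    have := h.hSi; have := h.hApos; positivity
  have hKey : K * (Si * A) = 2 * β * S₂ * I₂ := by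
    rw [hK, div_mul_cancel₀ _ hSA]
  -- notation
  set yδ := yf δ T t with hyδ
  set yγ := yf γ T t with hyγ
  set w := yf (γ - δ) T t with hw
  have hyδpos : 0 < yδ := yf_pos _ _ _
  have hyγpos : 0 < yγ := yf_pos _ _ _
  have hwpos : 0 < w := yf_pos _ _ _
  have hyδ1 : yδ ≤ 1 := yf_le_one (le_of_lt h.hδpos) ht
  have hwy : w * yδ = yγ := by
    rw [hyδ, hyγ, hw, yf_mul]
    congr 1
    ring
  -- numerator bound : β * D - a * yδ ≤ 2βS₂I₂ (yδ² + yγ)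
  have hnum : β * D - a * yδ ≤ 2 * β * S₂ * I₂ * (yδ^2 + yγ) := by
    have hexp : β * D - a * yδ
        = β * (Si * (I₂ - A) * yγ + c * A * yδ^2 + c * (I₂ - A) * (yδ * yγ)) := by
      rw [hD, svf, ivf, ← hyδ, ← hyγ, ← h.hAid]
      ring
    rw [hexp]
    have hβ := h.hβ
    have hc := h.hcpos
    have hIA : 0 ≤ I₂ - A := by linarith [h.hAI₂]
    have hb1 : Si * (I₂ - A) * yγ ≤ S₂ * I₂ * yγ := by
      apply mul_le_mul_of_nonneg_right _ (le_of_lt hyγpos)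
      apply mul_le_mul (le_of_lt h.hSilt) (by linarith [h.hApos]) hIA (le_of_lt h.hS₂)
    have hb2 : c * A * yδ^2 ≤ S₂ * I₂ * yδ^2 := by
      apply mul_le_mul_of_nonneg_right _ (by positivity)
      apply mul_le_mul _ h.hAI₂ (le_of_lt h.hApos) (le_of_lt h.hS₂)
      rw [h.hcdef]; linarith [h.hSi]
    have hb3 : c * (I₂ - A) * (yδ * yγ) ≤ S₂ * I₂ * yγ := by
      have e1 : c * (I₂ - A) * (yδ * yγ) ≤ c * (I₂ - A) * yγ := by
        apply mul_le_mul_of_nonneg_left _ (mul_nonneg (le_of_lt hc) hIA)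
        nlinarith
      refine le_trans e1 ?_
      apply mul_le_mul_of_nonneg_right _ (le_of_lt hyγpos)
      apply mul_le_mul _ (by linarith [h.hApos]) hIA (le_of_lt h.hS₂)
      rw [h.hcdef]; linarith [h.hSi]
    have hb0 : 0 ≤ β * (S₂ * I₂ * yδ^2) :=
      mul_nonneg (le_of_lt hβ) (mul_nonneg
        (mul_nonneg (le_of_lt h.hS₂) (le_of_lt h.hI₂)) (sq_nonneg _))
    nlinarith [mul_le_mul_of_nonneg_left hb1 (le_of_lt hβ),
      mul_le_mul_of_nonneg_left hb2 (le_of_lt hβ),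
      mul_le_mul_of_nonneg_left hb3 (le_of_lt hβ)]
  -- denominator lower bound
  have hden : Si * A * yδ ≤ D := by
    rw [hD]
    have h1 := svf_ge (T := T) h t
    have h2 := ivf_ge (T := T) h t
    calc Si * A * yδ = Si * (A * yδ) := by ring
      _ ≤ svf Si c δ T t * ivf A I₂ δ γ T t := by
          apply mul_le_mul h1 h2
            (mul_nonneg (le_of_lt h.hApos) (le_of_lt hyδpos)) (le_of_lt (svf_pos h t))
  -- conclude
  have hvfD : vf β a Si c A I₂ δ γ T t * D = β * D - a * yδ := by
    rw [vf, ← hyδ, ← hD]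
    field_simp
  have hRD : 2 * β * S₂ * I₂ * (yδ^2 + yγ) ≤ (K * (yδ + w)) * D := by
    have e1 : (K * (yδ + w)) * (Si * A * yδ) = 2 * β * S₂ * I₂ * (yδ^2 + yγ) := by
      rw [← hwy, ← hKey]; ring
    rw [← e1]
    apply mul_le_mul_of_nonneg_left hden
    exact mul_nonneg (le_of_lt hKpos) (by positivity)
  have hfin : vf β a Si c A I₂ δ γ T t * D ≤ (K * (yδ + w)) * D := by
    rw [hvfD]
    exact le_trans hnum hRD
  exact le_of_mul_le_mul_right hfin hDpos

end phase

end

noncomputable section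

lemma yf_integrableOn {b : ℝ} (hb : 0 < b) (T : ℝ) :
    IntegrableOn (yf b T) (Set.Ioi T) := by
  have h1 : IntegrableOn (fun t => Real.exp (-b * t)) (Set.Ioi T) :=
    exp_neg_integrableOn_Ioi T hb
  have h2 := h1.const_mul (Real.exp (b * T))
  have hfun : (fun t => Real.exp (b * T) * Real.exp (-b * t)) = yf b T := by
    funext t
    rw [yf, ← Real.exp_add]
    congr 1
    ring
  exact hfun ▸ h2

variable {β γ umax iM l1 l2 s₀ i₀ S₂ I₂ Si δ c a A T₂ : ℝ} {u₂ s₂ i₂ : ℝ → ℝ}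

lemma glue (ph : PH β γ umax S₂ I₂ Si δ c a A)
    (hl1 : 0 ≤ l1) (hl2 : 0 ≤ l2)
    (hu₂ : IsControl umax u₂) (hsol₂ : SIRSol β γ u₂ s₂ i₂ s₀ i₀)
    (hadm₂ : ∀ t, 0 ≤ t → i₂ t ≤ iM)
    (hT₂0 : 0 ≤ T₂) (hS₂v : s₂ T₂ = S₂) (hI₂v : i₂ T₂ = I₂) (hI₂iM : I₂ ≤ iM) :
    ∃ v sv iv : ℝ → ℝ, IsControl umax v ∧ SIRSol β γ v sv iv s₀ i₀ ∧
      (∀ t, 0 ≤ t → iv t ≤ iM) ∧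
      (∫⁻ t in Set.Ioi (0:ℝ), ENNReal.ofReal (l1 * v t + l2 * iv t)) < ⊤ := by
  classical
  obtain ⟨hs₂c, hi₂c, heqs₂, heqi₂⟩ := hsol₂
  set v : ℝ → ℝ := fun t => if T₂ ≤ t then vf β a Si c A I₂ δ γ T₂ t else u₂ t with hv
  set sv : ℝ → ℝ := fun t => if T₂ ≤ t then svf Si c δ T₂ t else s₂ t with hsv
  set iv : ℝ → ℝ := fun t => if T₂ ≤ t then ivf A I₂ δ γ T₂ t else i₂ t with hiv
  have hv_of : ∀ x : ℝ, T₂ ≤ x → v x = vf β a Si c A I₂ δ γ T₂ x := fun x hx => if_pos hx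
  have hv_of' : ∀ x : ℝ, x < T₂ → v x = u₂ x := fun x hx => if_neg (not_le.2 hx)
  have hsv_of : ∀ x : ℝ, T₂ ≤ x → sv x = svf Si c δ T₂ x := fun x hx => if_pos hx
  have hsv_of' : ∀ x : ℝ, x < T₂ → sv x = s₂ x := fun x hx => if_neg (not_le.2 hx)
  have hiv_of : ∀ x : ℝ, T₂ ≤ x → iv x = ivf A I₂ δ γ T₂ x := fun x hx => if_pos hx
  have hiv_of' : ∀ x : ℝ, x < T₂ → iv x = i₂ x := fun x hx => if_neg (not_le.2 hx)
  -- control property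
  have hvctrl : IsControl umax v := by
    constructor
    · apply Measurable.ite (measurableSet_Ici (a := T₂)) (vf_cont ph).measurable hu₂.1
    · intro t
      by_cases h : T₂ ≤ t
      · rw [hv_of t h]
        exact ⟨vf_nonneg ph h, vf_le_umax ph h⟩
      · rw [hv_of' t (not_le.1 h)]
        exact hu₂.2 t
  have hvbd : ∀ τ, |β - v τ| ≤ β := by
    intro τ
    obtain ⟨h1, h2⟩ := hvctrl.2 τ
    rw [abs_le]
    constructor <;> nlinarith [ph.hβ, ph.humax, ph.humaxβ]
  -- continuity
  have hsvc : Continuous sv := by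
    rw [hsv]
    apply Continuous.if_le (svf_cont Si c δ T₂) hs₂c continuous_const continuous_id
    intro x hx
    have hx' : T₂ = x := hx
    rw [← hx', svf_at (T := T₂) ph, hS₂v]
  have hivc : Continuous iv := by
    rw [hiv]
    apply Continuous.if_le (ivf_cont A I₂ δ γ T₂) hi₂c continuous_const continuous_id
    intro x hx
    have hx' : T₂ = x := hx
    rw [← hx', ivf_at (T := T₂) ph, hI₂v]
  -- admissibility
  have hadmv : ∀ t, 0 ≤ t → iv t ≤ iM := by
    intro t ht
    by_cases h : T₂ ≤ t
    · rw [hiv_of t h]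
      have h1 := ivf_le (T := T₂) ph h
      have h2 := yf_le_one (le_of_lt ph.hδpos) h
      calc ivf A I₂ δ γ T₂ t ≤ I₂ * yf δ T₂ t := h1
        _ ≤ I₂ * 1 := mul_le_mul_of_nonneg_left h2 (le_of_lt ph.hI₂)
        _ = I₂ := mul_one _
        _ ≤ iM := hI₂iM
    · rw [hiv_of' t (not_le.1 h)]
      exact hadm₂ t ht
  -- integrability of glued integrands
  have hvmeas : Measurable (fun τ => -(β - v τ)) := (measurable_const.sub hvctrl.1).neg
  have hvbd' : ∀ τ, |(-(β - v τ))| ≤ β := by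
    intro τ; rw [abs_neg]; exact hvbd τ
  have hI1 : ∀ p q : ℝ, IntervalIntegrable
      (fun τ => -((β - v τ) * sv τ * iv τ)) volume p q := by
    intro p q
    have e : (fun τ => -((β - v τ) * sv τ * iv τ))
        = fun τ => (-(β - v τ)) * sv τ * iv τ := by funext τ; ring
    rw [e]
    exact II hvmeas hvbd' hsvc hivc p q
  have hI2 : ∀ p q : ℝ, IntervalIntegrable
      (fun τ => (β - v τ) * sv τ * iv τ - γ * iv τ) volume p q := by
    intro p q
    have e : (fun τ => (β - v τ) * sv τ * iv τ - γ * iv τ)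
        = fun τ => (β - v τ) * sv τ * iv τ + (fun τ => (-γ) * iv τ) τ := by
      funext τ; ring
    rw [e]
    exact (II (measurable_const.sub hvctrl.1) hvbd hsvc hivc p q).add
      ((continuous_const.mul hivc).intervalIntegrable p q)
  -- witness integrands
  have hu₂bd : ∀ τ, |β - u₂ τ| ≤ β := by
    intro τ
    obtain ⟨h1, h2⟩ := hu₂.2 τ
    rw [abs_le]
    constructor <;> nlinarith [ph.hβ, ph.humax, ph.humaxβ]
  have hI1w : ∀ p q : ℝ, IntervalIntegrable
      (fun τ => -((β - u₂ τ) * s₂ τ * i₂ τ)) volume p q := by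
    intro p q
    have e : (fun τ => -((β - u₂ τ) * s₂ τ * i₂ τ))
        = fun τ => (-(β - u₂ τ)) * s₂ τ * i₂ τ := by funext τ; ring
    rw [e]
    refine II (C := β) ((measurable_const.sub hu₂.1).neg) ?_ hs₂c hi₂c p q
    intro τ; exact (abs_neg (β - u₂ τ)).trans_le (hu₂bd τ)
  have hI2w : ∀ p q : ℝ, IntervalIntegrable
      (fun τ => (β - u₂ τ) * s₂ τ * i₂ τ - γ * i₂ τ) volume p q := by
    intro p q
    have e : (fun τ => (β - u₂ τ) * s₂ τ * i₂ τ - γ * i₂ τ)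
        = fun τ => (β - u₂ τ) * s₂ τ * i₂ τ + (fun τ => (-γ) * i₂ τ) τ := by
      funext τ; ring
    rw [e]
    exact (II (measurable_const.sub hu₂.1) hu₂bd hs₂c hi₂c p q).add
      ((continuous_const.mul hi₂c).intervalIntegrable p q)
  -- a.e. equality of glued and witness integrands on [0, T₂]
  have haeT₂ : ∀ᵐ x : ℝ ∂volume, x ≠ T₂ := by
    rw [MeasureTheory.ae_iff]
    have e : {x : ℝ | ¬ x ≠ T₂} = {T₂} := by ext x; simp
    rw [e]
    exact Real.volume_singleton
  have hprefix_eq : ∀ x : ℝ, x < T₂ → (v x = u₂ x ∧ sv x = s₂ x ∧ iv x = i₂ x) :=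
    fun x hx => ⟨hv_of' x hx, hsv_of' x hx, hiv_of' x hx⟩
  -- the two prefix integral identities
  have hpre1 : (∫ τ in (0:ℝ)..T₂, -((β - v τ) * sv τ * iv τ))
      = ∫ τ in (0:ℝ)..T₂, -((β - u₂ τ) * s₂ τ * i₂ τ) := by
    apply intervalIntegral.integral_congr_ae
    filter_upwards [haeT₂] with x hx hmem
    rw [Set.uIoc_of_le hT₂0] at hmem
    have hlt : x < T₂ := lt_of_le_of_ne hmem.2 hx
    obtain ⟨e1, e2, e3⟩ := hprefix_eq x hlt
    rw [e1, e2, e3]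
  have hpre2 : (∫ τ in (0:ℝ)..T₂, ((β - v τ) * sv τ * iv τ - γ * iv τ))
      = ∫ τ in (0:ℝ)..T₂, ((β - u₂ τ) * s₂ τ * i₂ τ - γ * i₂ τ) := by
    apply intervalIntegral.integral_congr_ae
    filter_upwards [haeT₂] with x hx hmem
    rw [Set.uIoc_of_le hT₂0] at hmem
    have hlt : x < T₂ := lt_of_le_of_ne hmem.2 hx
    obtain ⟨e1, e2, e3⟩ := hprefix_eq x hlt
    rw [e1, e2, e3]
  -- the s equation
  have heqsv : ∀ t : ℝ, 0 ≤ t → sv t = s₀ + ∫ τ in (0:ℝ)..t, -((β - v τ) * sv τ * iv τ) := by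
    intro t ht
    rcases lt_or_ge t T₂ with hlt | hge
    · have e1 : sv t = s₂ t := (hprefix_eq t hlt).2.1
      rw [e1]
      rw [heqs₂ t ht]
      congr 1
      apply intervalIntegral.integral_congr
      intro x hxm
      rw [Set.uIcc_of_le ht] at hxm
      have hxlt : x < T₂ := lt_of_le_of_lt hxm.2 hlt
      obtain ⟨e1, e2, e3⟩ := hprefix_eq x hxlt
      show -((β - u₂ x) * s₂ x * i₂ x) = -((β - v x) * sv x * iv x)
      rw [e1, e2, e3]
    · have e1 : sv t = svf Si c δ T₂ t := hsv_of t hge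
      have hsplit : (∫ τ in (0:ℝ)..t, -((β - v τ) * sv τ * iv τ))
          = (∫ τ in (0:ℝ)..T₂, -((β - v τ) * sv τ * iv τ))
            + ∫ τ in T₂..t, -((β - v τ) * sv τ * iv τ) :=
        (intervalIntegral.integral_add_adjacent_intervals (hI1 0 T₂) (hI1 T₂ t)).symm
      have hsecond : (∫ τ in T₂..t, -((β - v τ) * sv τ * iv τ))
          = svf Si c δ T₂ t - S₂ := by
        rw [← svf_integral (T := T₂) ph t]
        apply intervalIntegral.integral_congr
        intro x hxm
        rw [Set.uIcc_of_le hge] at hxm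
        have hxge : T₂ ≤ x := hxm.1
        have ev : v x = vf β a Si c A I₂ δ γ T₂ x := hv_of x hxge
        have es : sv x = svf Si c δ T₂ x := hsv_of x hxge
        have ei : iv x = ivf A I₂ δ γ T₂ x := hiv_of x hxge
        show -((β - v x) * sv x * iv x) = -(a * yf δ T₂ x)
        rw [ev, es, ei, vf_s_integrand (T := T₂) ph x]
      have hwit : (∫ τ in (0:ℝ)..T₂, -((β - u₂ τ) * s₂ τ * i₂ τ)) = s₂ T₂ - s₀ := by
        have := heqs₂ T₂ hT₂0
        linarith
      rw [e1, hsplit, hpre1, hwit, hsecond, hS₂v]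
      ring
  -- the i equation
  have heqiv : ∀ t : ℝ, 0 ≤ t →
      iv t = i₀ + ∫ τ in (0:ℝ)..t, ((β - v τ) * sv τ * iv τ - γ * iv τ) := by
    intro t ht
    rcases lt_or_ge t T₂ with hlt | hge
    · have e1 : iv t = i₂ t := (hprefix_eq t hlt).2.2
      rw [e1]
      rw [heqi₂ t ht]
      congr 1
      apply intervalIntegral.integral_congr
      intro x hxm
      rw [Set.uIcc_of_le ht] at hxm
      have hxlt : x < T₂ := lt_of_le_of_lt hxm.2 hlt
      obtain ⟨e1, e2, e3⟩ := hprefix_eq x hxlt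
      show ((β - u₂ x) * s₂ x * i₂ x - γ * i₂ x) = ((β - v x) * sv x * iv x - γ * iv x)
      rw [e1, e2, e3]
    · have e1 : iv t = ivf A I₂ δ γ T₂ t := hiv_of t hge
      have hsplit : (∫ τ in (0:ℝ)..t, ((β - v τ) * sv τ * iv τ - γ * iv τ))
          = (∫ τ in (0:ℝ)..T₂, ((β - v τ) * sv τ * iv τ - γ * iv τ))
            + ∫ τ in T₂..t, ((β - v τ) * sv τ * iv τ - γ * iv τ) :=
        (intervalIntegral.integral_add_adjacent_intervals (hI2 0 T₂) (hI2 T₂ t)).symm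
      have hsecond : (∫ τ in T₂..t, ((β - v τ) * sv τ * iv τ - γ * iv τ))
          = ivf A I₂ δ γ T₂ t - I₂ := by
        rw [← ivf_integral (T := T₂) ph t]
        apply intervalIntegral.integral_congr
        intro x hxm
        rw [Set.uIcc_of_le hge] at hxm
        have hxge : T₂ ≤ x := hxm.1
        have ev : v x = vf β a Si c A I₂ δ γ T₂ x := hv_of x hxge
        have es : sv x = svf Si c δ T₂ x := hsv_of x hxge
        have ei : iv x = ivf A I₂ δ γ T₂ x := hiv_of x hxge
        show ((β - v x) * sv x * iv x - γ * iv x) = (a * yf δ T₂ x - γ * ivf A I₂ δ γ T₂ x)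
        rw [ev, es, ei, vf_s_integrand (T := T₂) ph x]
      have hwit : (∫ τ in (0:ℝ)..T₂, ((β - u₂ τ) * s₂ τ * i₂ τ - γ * i₂ τ)) = i₂ T₂ - i₀ := by
        have := heqi₂ T₂ hT₂0
        linarith
      rw [e1, hsplit, hpre2, hwit, hsecond, hI₂v]
      ring
  -- the cost is finite
  have hcost : (∫⁻ t in Set.Ioi (0:ℝ), ENNReal.ofReal (l1 * v t + l2 * iv t)) < ⊤ := by
    have hunion : Set.Ioc (0:ℝ) T₂ ∪ Set.Ioi T₂ = Set.Ioi (0:ℝ) :=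
      Set.Ioc_union_Ioi_eq_Ioi hT₂0
    rw [← hunion, MeasureTheory.lintegral_union measurableSet_Ioi
      (Set.Ioc_disjoint_Ioi (le_refl T₂))]
    have hiM0 : 0 ≤ iM := le_trans (le_of_lt ph.hI₂) hI₂iM
    have hpiece1 : (∫⁻ t in Set.Ioc (0:ℝ) T₂, ENNReal.ofReal (l1 * v t + l2 * iv t))
        ≤ ENNReal.ofReal (l1 * umax + l2 * iM) * ENNReal.ofReal T₂ := by
      have hb : ∀ x ∈ Set.Ioc (0:ℝ) T₂,
          ENNReal.ofReal (l1 * v x + l2 * iv x) ≤ ENNReal.ofReal (l1 * umax + l2 * iM) := by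
        intro x hx
        apply ENNReal.ofReal_le_ofReal
        have h1 := (hvctrl.2 x).2
        have h2 := hadmv x (le_of_lt hx.1)
        have h3 := (hvctrl.2 x).1
        nlinarith [mul_le_mul_of_nonneg_left h1 hl1, mul_le_mul_of_nonneg_left h2 hl2]
      calc (∫⁻ t in Set.Ioc (0:ℝ) T₂, ENNReal.ofReal (l1 * v t + l2 * iv t))
          ≤ ∫⁻ _ in Set.Ioc (0:ℝ) T₂, ENNReal.ofReal (l1 * umax + l2 * iM) :=
            MeasureTheory.setLIntegral_mono measurable_const hb
        _ = ENNReal.ofReal (l1 * umax + l2 * iM) * volume (Set.Ioc (0:ℝ) T₂) :=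
            MeasureTheory.setLIntegral_const _ _
        _ = ENNReal.ofReal (l1 * umax + l2 * iM) * ENNReal.ofReal (T₂ - 0) := by
            rw [Real.volume_Ioc]
        _ = ENNReal.ofReal (l1 * umax + l2 * iM) * ENNReal.ofReal T₂ := by
            norm_num
    set K : ℝ := 2 * β * S₂ * I₂ / (Si * A) with hK
    set g : ℝ → ℝ := fun t =>
      l1 * (K * (yf δ T₂ t + yf (γ - δ) T₂ t)) + l2 * (I₂ * yf δ T₂ t) with hg
    have hgcont : Continuous g := by
      rw [hg]
      apply Continuous.add
      · exact continuous_const.mul (continuous_const.mul ((yf_cont δ T₂).add (yf_cont (γ - δ) T₂)))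
      · exact continuous_const.mul (continuous_const.mul (yf_cont δ T₂))
    have hgint : IntegrableOn g (Set.Ioi T₂) := by
      rw [hg]
      apply MeasureTheory.Integrable.add
      · apply MeasureTheory.Integrable.const_mul
        apply MeasureTheory.Integrable.const_mul
        exact (yf_integrableOn ph.hδpos T₂).add
          (yf_integrableOn (by linarith [ph.hδγ] : 0 < γ - δ) T₂)
      · apply MeasureTheory.Integrable.const_mul
        exact (yf_integrableOn ph.hδpos T₂).const_mul I₂
    have hpiece2 : (∫⁻ t in Set.Ioi T₂, ENNReal.ofReal (l1 * v t + l2 * iv t))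
        < ⊤ := by
      have hb : ∀ x ∈ Set.Ioi T₂,
          ENNReal.ofReal (l1 * v x + l2 * iv x) ≤ ENNReal.ofReal (g x) := by
        intro x hx
        apply ENNReal.ofReal_le_ofReal
        have hxge : T₂ ≤ x := le_of_lt hx
        have ev : v x = vf β a Si c A I₂ δ γ T₂ x := hv_of x hxge
        have ei : iv x = ivf A I₂ δ γ T₂ x := hiv_of x hxge
        have h1 : v x ≤ K * (yf δ T₂ x + yf (γ - δ) T₂ x) := by
          rw [ev, hK]
          exact vf_decay ph hxge
        have h2 : iv x ≤ I₂ * yf δ T₂ x := by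
          rw [ei]
          exact ivf_le (T := T₂) ph hxge
        rw [hg]
        have := mul_le_mul_of_nonneg_left h1 hl1
        have := mul_le_mul_of_nonneg_left h2 hl2
        dsimp only
        linarith
      calc (∫⁻ t in Set.Ioi T₂, ENNReal.ofReal (l1 * v t + l2 * iv t))
          ≤ ∫⁻ t in Set.Ioi T₂, ENNReal.ofReal (g t) :=
            MeasureTheory.setLIntegral_mono
              (ENNReal.measurable_ofReal.comp hgcont.measurable) hb
        _ ≤ ∫⁻ t in Set.Ioi T₂, (‖g t‖₊ : ℝ≥0∞) := by
            apply MeasureTheory.lintegral_mono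
            intro t
            exact Real.ofReal_le_enorm (g t)
        _ < ⊤ := hgint.2
    have hfin1 : ENNReal.ofReal (l1 * umax + l2 * iM) * ENNReal.ofReal T₂ < ⊤ :=
      ENNReal.mul_lt_top ENNReal.ofReal_lt_top ENNReal.ofReal_lt_top
    exact ENNReal.add_lt_top.2 ⟨lt_of_le_of_lt hpiece1 hfin1, hpiece2⟩
  exact ⟨v, sv, iv, hvctrl, ⟨hsvc, hivc, heqsv, heqiv⟩, hadmv, hcost⟩

end
noncomputable section
set_option maxHeartbeats 1000000 in
/-- From a viable trajectory, construct an admissible control with finite cost. -/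
lemma exists_finite_cost {β γ umax iM l1 l2 s₀ i₀ : ℝ} {u₂ s₂ i₂ : ℝ → ℝ}
    (hβ : 0 < β) (hγ : 0 < γ) (humax : 0 < umax) (humaxβ : umax < β)
    (hl1 : 0 ≤ l1) (hl2 : 0 ≤ l2)
    (hu₂ : IsControl umax u₂) (hsol₂ : SIRSol β γ u₂ s₂ i₂ s₀ i₀)
    (hadm₂ : ∀ t, 0 ≤ t → i₂ t ≤ iM)
    (tf₂ : TF β γ umax u₂ s₂ i₂ s₀ i₀)
    (hs₀ : 0 < s₀) (hi₀ : 0 < i₀) :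
    ∃ v sv iv : ℝ → ℝ, IsControl umax v ∧ SIRSol β γ v sv iv s₀ i₀ ∧
      (∀ t, 0 ≤ t → iv t ≤ iM) ∧
      (∫⁻ t in Set.Ioi (0:ℝ), ENNReal.ofReal (l1 * v t + l2 * iv t)) < ⊤ := by
  obtain ⟨hs₂c, hi₂c, heqs₂, heqi₂⟩ := hsol₂
  have hbu : 0 < β - umax := by linarith
  set σmax : ℝ := γ / (β - umax) with hσmax
  have hσpos : 0 < σmax := by positivity
  have hσid : (β - umax) * σmax = γ := by
    rw [hσmax]; field_simp
  clear_value σmax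
  -- the limit of s₂ is strictly below σmax
  obtain ⟨L₂, hL₂tend, hL₂0, hL₂le⟩ := slimit tf₂.santi (fun t ht => le_of_lt (tf₂.spos t ht))
  have hL₂lt : L₂ < σmax := by
    by_contra hcon
    push_neg at hcon
    -- then s₂ ≥ σmax everywhere and i₂ is nondecreasing
    have hs₂ge : ∀ t, 0 ≤ t → σmax ≤ s₂ t := fun t ht => le_trans hcon (hL₂le t ht)
    have himono : ∀ t, 0 ≤ t → i₀ ≤ i₂ t := by
      intro t ht
      have heq := tf₂.heqi 0 t (le_refl _) ht
      rw [tf₂.i0] at heq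
      have hnn : 0 ≤ ∫ τ in (0:ℝ)..t, ((β - u₂ τ) * s₂ τ - γ) * i₂ τ := by
        apply intervalIntegral.integral_nonneg ht
        intro x hx
        have h1 := hs₂ge x hx.1
        have h2 := tf₂.ipos x hx.1
        obtain ⟨h3, h4⟩ := hu₂.2 x
        have h5 : γ ≤ (β - u₂ x) * s₂ x := by
          calc γ = (β - umax) * σmax := hσid.symm
            _ ≤ (β - u₂ x) * s₂ x := by
                apply mul_le_mul (by linarith) h1 (le_of_lt hσpos) (by linarith)
        have h6 : 0 ≤ (β - u₂ x) * s₂ x - γ := by linarith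
        exact mul_nonneg h6 (le_of_lt h2)
      linarith
    -- contradiction with the integral bound
    obtain ⟨X, hXpos, hXbig⟩ : ∃ X : ℝ, 0 < X ∧ (s₀ + i₀)/γ < i₀ * X := by
      refine ⟨((s₀ + i₀)/γ + 1)/i₀, by positivity, ?_⟩
      rw [mul_div_cancel₀ _ (ne_of_gt hi₀)]
      linarith
    have h1 : i₀ * X ≤ ∫ τ in (0:ℝ)..X, i₂ τ := by
      have := intervalIntegral.integral_mono_on (μ := volume) (le_of_lt hXpos)
        (_root_.intervalIntegrable_const (c := i₀)) (hi₂c.intervalIntegrable 0 X) ?_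
      · calc i₀ * X = (X - 0) • i₀ := by rw [smul_eq_mul]; ring
          _ = ∫ _ in (0:ℝ)..X, i₀ := (intervalIntegral.integral_const i₀).symm
          _ ≤ _ := this
      · intro x hx; exact himono x hx.1
    have h2 := tf₂.intbound X (le_of_lt hXpos)
    linarith
  -- choose the switching time T₂
  set σb : ℝ := (L₂ + σmax)/2 with hσb
  have hσbpos : 0 < σb := by positivity
  have hσblt : σb < σmax := by rw [hσb]; linarith
  have hL₂σb : L₂ < σb := by rw [hσb]; linarith
  clear_value σb
  have hev : ∀ᶠ t in Filter.atTop, s₂ t < σb :=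
    hL₂tend.eventually (eventually_lt_nhds hL₂σb)
  obtain ⟨T₀, hT₀⟩ := hev.exists_forall_of_atTop
  set εs : ℝ := umax * (σmax - σb) / β with hεs
  have hεspos : 0 < εs := by
    rw [hεs]
    have : 0 < σmax - σb := by linarith
    positivity
  clear_value εs
  obtain ⟨T₂, hT₂ge, hT₂i⟩ := tf₂.ismall εs hεspos (max T₀ 0) (le_max_right _ _)
  have hT₂0 : (0:ℝ) ≤ T₂ := le_trans (le_max_right _ _) hT₂ge
  set S₂ : ℝ := s₂ T₂ with hS₂
  set I₂ : ℝ := i₂ T₂ with hI₂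
  have hS₂pos : 0 < S₂ := tf₂.spos T₂ hT₂0
  have hI₂pos : 0 < I₂ := tf₂.ipos T₂ hT₂0
  have hI₂iM : I₂ ≤ iM := hadm₂ T₂ hT₂0
  have hS₂σb : S₂ < σb := hT₀ T₂ (le_trans (le_max_left _ _) hT₂ge)
  have hI₂εs : I₂ < εs := hT₂i
  clear_value S₂ I₂
  -- the parameters of the explicit final phase
  set a : ℝ := (β - umax) * S₂ * I₂ with ha
  have hapos : 0 < a := by positivity
  clear_value a
  set x₀ : ℝ := S₂ * (β - umax) / β with hx₀
  have hx₀pos : 0 < x₀ := by positivity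
  have hx₀lt : x₀ < S₂ := by
    rw [hx₀, div_lt_iff₀ hβ]
    nlinarith
  clear_value x₀
  set F : ℝ → ℝ := fun x => (γ - β * x) * (S₂ - x) with hF
  have hFcont : ContinuousOn F (Icc x₀ S₂) := by
    apply Continuous.continuousOn
    exact (continuous_const.sub (continuous_const.mul continuous_id)).mul
      (continuous_const.sub continuous_id)
  have hFx₀ : a ≤ F x₀ := by
    have e0 : F x₀ = ((β - umax) * (σmax - S₂)) * (S₂ * umax / β) := by
      simp only [hF, hx₀]
      have e2 : (β - umax) * σmax = γ := hσid
      field_simp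
      rw [← e2]; ring
    rw [e0, ha]
    have h1 : (β - umax) * (σmax - σb) ≤ (β - umax) * (σmax - S₂) := by
      apply mul_le_mul_of_nonneg_left (by linarith) (le_of_lt hbu)
    calc (β - umax) * S₂ * I₂ ≤ (β - umax) * S₂ * εs := by
          apply mul_le_mul_of_nonneg_left (le_of_lt hI₂εs) (by positivity)
      _ = ((β - umax) * (σmax - σb)) * (S₂ * umax / β) := by rw [hεs]; field_simp
      _ ≤ ((β - umax) * (σmax - S₂)) * (S₂ * umax / β) := by
          apply mul_le_mul_of_nonneg_right h1 (by positivity)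
  have hFS₂ : F S₂ = 0 := by simp only [hF]; ring
  obtain ⟨Si, hSimem, hSiF⟩ := intermediate_value_Icc' (le_of_lt hx₀lt) hFcont
    (show a ∈ Icc (F S₂) (F x₀) by rw [hFS₂]; exact ⟨le_of_lt hapos, hFx₀⟩)
  obtain ⟨hSix₀, hSiS₂⟩ := hSimem
  have hSipos : 0 < Si := lt_of_lt_of_le hx₀pos hSix₀
  have hSilt : Si < S₂ := by
    rcases eq_or_lt_of_le hSiS₂ with h | h
    · exfalso; rw [h, hFS₂] at hSiF; exact absurd hSiF.symm (ne_of_gt hapos)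
    · exact h
  set δ : ℝ := γ - β * Si with hδ
  set c : ℝ := S₂ - Si with hc
  have hcpos : 0 < c := by rw [hc]; linarith
  have hδc : δ * c = a := by rw [hδ, hc, ← hSiF]
  clear hSiF hFcont hFS₂ hFx₀ hF
  clear F
  have hγδ : γ - δ = β * Si := by rw [hδ]; ring
  clear_value δ c
  have hδpos : 0 < δ := by
    by_contra hcon
    push_neg at hcon
    nlinarith [mul_nonpos_of_nonpos_of_nonneg hcon (le_of_lt hcpos)]
  have hδγ : δ < γ := by linarith [mul_pos hβ hSipos, hγδ]
  set A : ℝ := a / (β * Si) with hA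
  have hApos : 0 < A := by positivity
  have hAid : β * Si * A = a := by
    rw [hA]; field_simp
  clear_value A
  have hAI₂ : A ≤ I₂ := by
    have h1 : (β - umax) * S₂ ≤ β * Si := by
      have h2 : x₀ ≤ Si := hSix₀
      rw [hx₀, div_le_iff₀ hβ] at h2
      nlinarith
    have h3 : a ≤ β * Si * I₂ := by
      rw [ha]
      nlinarith
    nlinarith [mul_pos hβ hSipos]
  have ph : PH β γ umax S₂ I₂ Si δ c a A :=
    ⟨hβ, hγ, humax, humaxβ, hS₂pos, hI₂pos, hSipos, hSilt, hδ, hc, ha, hδc,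
      hAid, hApos, hAI₂, hδpos, hδγ⟩
  exact glue ph hl1 hl2 hu₂ ⟨hs₂c, hi₂c, heqs₂, heqi₂⟩ hadm₂ hT₂0 hS₂.symm hI₂.symm hI₂iM

end

end SIRAux
end SIRAuxSection

open SIRAux

/-- Along an optimal control for `P^∞_{λ₁,λ₂}`, herd immunity is reached:
`s^u_∞ < γ/β`. -/
theorem statement11 (β γ umax iM l1 l2 : ℝ) (hβ : 0 < β) (hγ : 0 < γ)
    (humax : 0 < umax) (humaxβ : umax < β) (hiM : iM ∈ Set.Ioo (0:ℝ) 1)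
    (hl1 : 0 < l1) (hl2 : 0 ≤ l2)
    (s₀ i₀ : ℝ) (hB : (s₀, i₀) ∈ ViableSet β γ umax iM) (hi₀ : 0 < i₀)
    (u s i : ℝ → ℝ) (hu : IsControl umax u) (hsol : SIRSol β γ u s i s₀ i₀)
    (hadm : Admissible iM i)
    (hopt : ∀ v sv iv : ℝ → ℝ, IsControl umax v → SIRSol β γ v sv iv s₀ i₀ →
      Admissible iM iv → Cost l1 l2 u i ≤ Cost l1 l2 v iv) :
    ∃ sInf : ℝ, Filter.Tendsto s Filter.atTop (nhds sInf) ∧ sInf < γ / β := by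
  obtain ⟨htri, u₂, s₂, i₂, hu₂, hsol₂, hadm₂⟩ := hB
  obtain ⟨hs₀pos, hs₀le, _, _, _⟩ := htri
  -- basic facts for the optimal trajectory and the viability witness
  have tf : TF β γ umax u s i s₀ i₀ :=
    mkTF hβ hγ (le_of_lt humax) humaxβ hu hsol hs₀pos hi₀
  have tf₂ : TF β γ umax u₂ s₂ i₂ s₀ i₀ :=
    mkTF hβ hγ (le_of_lt humax) humaxβ hu₂ hsol₂ hs₀pos hi₀
  obtain ⟨L, hLtend, hL0, hLle⟩ := slimit tf.santi (fun t ht => le_of_lt (tf.spos t ht))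
  refine ⟨L, hLtend, ?_⟩
  by_contra hcon
  push_neg at hcon
  have hsL : ∀ t, 0 ≤ t → γ / β ≤ s t := fun t ht => le_trans hcon (hLle t ht)
  -- a finite cost admissible competitor exists
  obtain ⟨v, sv, iv, hvc, hvsol, hva, hvcost⟩ :=
    exists_finite_cost hβ hγ humax humaxβ (le_of_lt hl1) hl2 hu₂ hsol₂ hadm₂ tf₂ hs₀pos hi₀
  have hcost : Cost l1 l2 u i < ⊤ :=
    lt_of_le_of_lt (hopt v sv iv hvc hvsol hva) hvcost
  -- hence the total control effort is finite
  have hsc : Continuous s := hsol.1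
  have hic : Continuous i := hsol.2.1
  have hUlint : (∫⁻ t in Set.Ioi (0:ℝ), ENNReal.ofReal (u t)) < ⊤ := by
    have hmeas1 : Measurable fun t => ENNReal.ofReal (l1 * u t + l2 * i t) :=
      ENNReal.measurable_ofReal.comp ((measurable_const.mul hu.1).add
        (measurable_const.mul hic.measurable))
    have h1 : (∫⁻ t in Set.Ioi (0:ℝ), ENNReal.ofReal (l1 * u t)) ≤ Cost l1 l2 u i := by
      apply MeasureTheory.setLIntegral_mono hmeas1
      intro x hx
      apply ENNReal.ofReal_le_ofReal
      have h0 := tf.ipos x (le_of_lt hx)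
      nlinarith
    have h2 : (∫⁻ t in Set.Ioi (0:ℝ), ENNReal.ofReal (l1 * u t))
        = ENNReal.ofReal l1 * ∫⁻ t in Set.Ioi (0:ℝ), ENNReal.ofReal (u t) := by
      have hm : Measurable fun t => ENNReal.ofReal (u t) :=
        ENNReal.measurable_ofReal.comp hu.1
      rw [← MeasureTheory.lintegral_const_mul (ENNReal.ofReal l1) hm]
      apply MeasureTheory.lintegral_congr
      intro t
      rw [← ENNReal.ofReal_mul (le_of_lt hl1)]
    have h3 : ENNReal.ofReal l1 * (∫⁻ t in Set.Ioi (0:ℝ), ENNReal.ofReal (u t)) < ⊤ :=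
      lt_of_le_of_lt (le_of_eq h2.symm) (lt_of_le_of_lt h1 hcost)
    by_contra hc
    push_neg at hc
    have hTop : (∫⁻ t in Set.Ioi (0:ℝ), ENNReal.ofReal (u t)) = ⊤ := top_le_iff.1 hc
    rw [hTop, ENNReal.mul_top (by simp [ENNReal.ofReal_eq_zero]; linarith)] at h3
    exact absurd h3 (lt_irrefl _)
  have hUint : IntegrableOn u (Set.Ioi (0:ℝ)) := by
    constructor
    · exact hu.1.aestronglyMeasurable
    · rw [MeasureTheory.hasFiniteIntegral_iff_ofReal
        (Filter.Eventually.of_forall (fun t => (hu.2 t).1))]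
      exact hUlint
  exact no_herd hβ hγ hu tf hs₀le hadm hsL hsc hic hUint
end
end

section
/- Assume λ₂ = 0 and λ₁ > 0. Let u be an optimal control for the infinite-horizon problem P^∞_{λ₁,0} with initial data (s₀,i₀) ∈ B, i₀ > 0, and let T^u_{γ/β} < ∞ denote the (finite) time at which s^u reaches the level γ/β. Then for every T > T^u_{γ/β}, the restriction of u to [0,T] is optimal for the finite-horizon problem with target: it minimizes ∫₀^T λ₁·ū(t) dt among all controls ū : (0,T) → [0,u_max] whose trajectory satisfies i^ū(t) ≤ i_M on [0,T] and s^ū(T) < γ/β. -/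
open MeasureTheory Filter Set intervalIntegral
open scoped ENNReal

noncomputable section

namespace S12


def cl (c x : ℝ) : ℝ := max 0 (min x c)

lemma cl_nonneg (c x : ℝ) : 0 ≤ cl c x := le_max_left _ _

lemma cl_le (c x : ℝ) (hc : 0 ≤ c) : cl c x ≤ c := max_le hc (min_le_right _ _)

lemma cl_le_abs (c x : ℝ) : cl c x ≤ |x| :=
  max_le (abs_nonneg x) ((min_le_left _ _).trans (le_abs_self x))

lemma cl_eq {c x : ℝ} (h0 : 0 ≤ x) (hc : x ≤ c) : cl c x = x := by
  unfold cl; rw [min_eq_left hc, max_eq_right h0]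

lemma cl_le_of_le {c x d : ℝ} (hd : 0 ≤ d) (h : x ≤ d) : cl c x ≤ d :=
  max_le hd ((min_le_left _ _).trans h)

lemma abs_cl_sub (c x y : ℝ) : |cl c x - cl c y| ≤ |x - y| := by
  unfold cl
  calc |max 0 (min x c) - max 0 (min y c)| ≤ max |(0:ℝ) - 0| |min x c - min y c| :=
        abs_max_sub_max_le_max 0 (min x c) 0 (min y c)
    _ ≤ max |(0:ℝ) - 0| (max |x - y| |c - c|) := by
        apply max_le_max le_rfl (abs_min_sub_min_le_max x c y c)
    _ = |x - y| := by simp [abs_nonneg]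

lemma abs_cl_mul_sub (c x y x' y' : ℝ) (hc : 0 ≤ c) :
    |cl c x * cl c y - cl c x' * cl c y'| ≤ c * (|x - x'| + |y - y'|) := by
  have e : cl c x * cl c y - cl c x' * cl c y'
      = cl c x * (cl c y - cl c y') + cl c y' * (cl c x - cl c x') := by ring
  rw [e]
  have h1 : |cl c x * (cl c y - cl c y')| ≤ c * |y - y'| := by
    rw [abs_mul, abs_of_nonneg (cl_nonneg c x)]
    exact mul_le_mul (cl_le c x hc) (abs_cl_sub c y y') (abs_nonneg _) hc
  have h2 : |cl c y' * (cl c x - cl c x')| ≤ c * |x - x'| := by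
    rw [abs_mul, abs_of_nonneg (cl_nonneg c y')]
    exact mul_le_mul (cl_le c y' hc) (abs_cl_sub c x x') (abs_nonneg _) hc
  calc |cl c x * (cl c y - cl c y') + cl c y' * (cl c x - cl c x')|
      ≤ |cl c x * (cl c y - cl c y')| + |cl c y' * (cl c x - cl c x')| := abs_add_le _ _
    _ ≤ c * |y - y'| + c * |x - x'| := add_le_add h1 h2
    _ = c * (|x - x'| + |y - y'|) := by ring

def F (β γ c : ℝ) (p : ℝ × ℝ) : ℝ × ℝ :=
  (-(β * (cl c p.1 * cl c p.2)), β * (cl c p.1 * cl c p.2) - γ * cl c p.2)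

lemma F_cont (β γ c : ℝ) : Continuous (F β γ c) := by
  unfold F cl
  fun_prop

lemma F_lip {β γ c : ℝ} (hβ : 0 ≤ β) (hγ : 0 ≤ γ) (hc : 0 ≤ c) :
    LipschitzWith (Real.toNNReal (2 * β * c + γ)) (F β γ c) := by
  apply LipschitzWith.of_dist_le_mul
  intro p q
  have hK : (Real.toNNReal (2 * β * c + γ) : ℝ) = 2 * β * c + γ :=
    Real.coe_toNNReal _ (by positivity)
  rw [hK]
  have h1 : |p.1 - q.1| ≤ max (dist p.1 q.1) (dist p.2 q.2) := by
    rw [Real.dist_eq]; exact le_max_left _ _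
  have h2 : |p.2 - q.2| ≤ max (dist p.1 q.1) (dist p.2 q.2) := by
    rw [Real.dist_eq, Real.dist_eq]; exact le_max_right _ _
  have hm : 0 ≤ max (dist p.1 q.1) (dist p.2 q.2) := le_trans dist_nonneg (le_max_left _ _)
  have key : |cl c p.1 * cl c p.2 - cl c q.1 * cl c q.2|
      ≤ 2 * c * max (dist p.1 q.1) (dist p.2 q.2) := by
    calc |cl c p.1 * cl c p.2 - cl c q.1 * cl c q.2|
        ≤ c * (|p.1 - q.1| + |p.2 - q.2|) := abs_cl_mul_sub c _ _ _ _ hc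
      _ ≤ c * (max (dist p.1 q.1) (dist p.2 q.2) + max (dist p.1 q.1) (dist p.2 q.2)) := by
          apply mul_le_mul_of_nonneg_left (add_le_add h1 h2) hc
      _ = 2 * c * max (dist p.1 q.1) (dist p.2 q.2) := by ring
  rw [Prod.dist_eq]
  apply max_le
  · rw [Real.dist_eq]
    have e : (F β γ c p).1 - (F β γ c q).1
        = -(β * (cl c p.1 * cl c p.2 - cl c q.1 * cl c q.2)) := by
      simp only [F]; ring
    rw [e, abs_neg, abs_mul, abs_of_nonneg hβ]
    calc β * |cl c p.1 * cl c p.2 - cl c q.1 * cl c q.2|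
        ≤ β * (2 * c * max (dist p.1 q.1) (dist p.2 q.2)) :=
          mul_le_mul_of_nonneg_left key hβ
      _ ≤ (2 * β * c + γ) * max (dist p.1 q.1) (dist p.2 q.2) := by nlinarith
  · rw [Real.dist_eq]
    have e : (F β γ c p).2 - (F β γ c q).2
        = β * (cl c p.1 * cl c p.2 - cl c q.1 * cl c q.2) - γ * (cl c p.2 - cl c q.2) := by
      simp only [F]; ring
    rw [e]
    calc |β * (cl c p.1 * cl c p.2 - cl c q.1 * cl c q.2) - γ * (cl c p.2 - cl c q.2)|
        ≤ |β * (cl c p.1 * cl c p.2 - cl c q.1 * cl c q.2)| + |γ * (cl c p.2 - cl c q.2)| :=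
          abs_sub _ _
      _ = β * |cl c p.1 * cl c p.2 - cl c q.1 * cl c q.2| + γ * |cl c p.2 - cl c q.2| := by
          rw [abs_mul, abs_mul, abs_of_nonneg hβ, abs_of_nonneg hγ]
      _ ≤ β * (2 * c * max (dist p.1 q.1) (dist p.2 q.2))
            + γ * max (dist p.1 q.1) (dist p.2 q.2) := by
          apply add_le_add (mul_le_mul_of_nonneg_left key hβ)
          exact mul_le_mul_of_nonneg_left ((abs_cl_sub c _ _).trans h2) hγ
      _ = (2 * β * c + γ) * max (dist p.1 q.1) (dist p.2 q.2) := by ring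

lemma F_norm_le {β γ c : ℝ} (hβ : 0 ≤ β) (hγ : 0 ≤ γ) (hc : 0 ≤ c) (p : ℝ × ℝ) :
    ‖F β γ c p‖ ≤ β * c * c + (β * c * c + γ * c) := by
  rw [Prod.norm_def]
  have hb : ∀ x y : ℝ, |cl c x * cl c y| ≤ c * c := by
    intro x y
    rw [abs_mul, abs_of_nonneg (cl_nonneg _ _), abs_of_nonneg (cl_nonneg _ _)]
    exact mul_le_mul (cl_le _ _ hc) (cl_le _ _ hc) (cl_nonneg _ _) hc
  have hb2 : |cl c p.2| ≤ c := by
    rw [abs_of_nonneg (cl_nonneg _ _)]; exact cl_le _ _ hc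
  apply max_le
  · show |(F β γ c p).1| ≤ _
    have e : (F β γ c p).1 = -(β * (cl c p.1 * cl c p.2)) := rfl
    rw [e, abs_neg, abs_of_nonneg (mul_nonneg hβ (mul_nonneg (cl_nonneg _ _) (cl_nonneg _ _)))]
    have h1 : cl c p.1 * cl c p.2 ≤ c * c :=
      mul_le_mul (cl_le _ _ hc) (cl_le _ _ hc) (cl_nonneg _ _) hc
    nlinarith
  · show |(F β γ c p).2| ≤ _
    have e : (F β γ c p).2 = β * (cl c p.1 * cl c p.2) - γ * cl c p.2 := rfl
    have h1 : cl c p.1 * cl c p.2 ≤ c * c :=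
      mul_le_mul (cl_le _ _ hc) (cl_le _ _ hc) (cl_nonneg _ _) hc
    rw [e]
    calc |β * (cl c p.1 * cl c p.2) - γ * cl c p.2|
        ≤ |β * (cl c p.1 * cl c p.2)| + |γ * cl c p.2| := abs_sub _ _
      _ = β * (cl c p.1 * cl c p.2) + γ * cl c p.2 := by
          rw [abs_of_nonneg (mul_nonneg hβ (mul_nonneg (cl_nonneg _ _) (cl_nonneg _ _))),
            abs_of_nonneg (mul_nonneg hγ (cl_nonneg _ _))]
      _ ≤ β * c * c + (β * c * c + γ * c) := by
          have h2 : cl c p.2 ≤ c := cl_le _ _ hc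
          have h3 : 0 ≤ cl c p.1 * cl c p.2 := mul_nonneg (cl_nonneg _ _) (cl_nonneg _ _)
          nlinarith



lemma II_of_bound {g : ℝ → ℝ} {a b C : ℝ} (hm : Measurable g)
    (hb : ∀ t ∈ uIcc a b, |g t| ≤ C) : IntervalIntegrable g volume a b := by
  rw [intervalIntegrable_iff]
  apply MeasureTheory.Integrable.mono' (g := fun _ => C)
    (integrableOn_const measure_Ioc_lt_top.ne)
    hm.aestronglyMeasurable
  refine (ae_restrict_iff' measurableSet_uIoc).2 (ae_of_all _ fun x hx => ?_)
  rw [Real.norm_eq_abs]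
  exact hb x (uIoc_subset_uIcc hx)

lemma gronwall_fwd {h : ℝ → ℝ} {a b K : ℝ} (hK : 0 ≤ K) (hc : Continuous h)
    (hnn : ∀ t ∈ Icc a b, 0 ≤ h t)
    (hineq : ∀ t ∈ Icc a b, h t ≤ K * ∫ τ in a..t, h τ) :
    ∀ t ∈ Icc a b, h t = 0 := by
  intro t ht
  have hab : a ≤ b := le_trans ht.1 ht.2
  set H : ℝ → ℝ := fun t => ∫ τ in a..t, h τ with hHdef
  have hH : ∀ x : ℝ, HasDerivAt H (h x) x := fun x =>
    intervalIntegral.integral_hasDerivAt_right (hc.intervalIntegrable _ _)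
      (hc.stronglyMeasurableAtFilter _ _) hc.continuousAt
  set G : ℝ → ℝ := fun t => H t * Real.exp (-K * t) with hGdef
  have hG : ∀ x : ℝ, HasDerivAt G ((h x - K * H x) * Real.exp (-K * x)) x := by
    intro x
    have hexp : HasDerivAt (fun t : ℝ => Real.exp (-K * t)) (Real.exp (-K * x) * (-K)) x := by
      have h1 : HasDerivAt (fun t : ℝ => -K * t) (-K) x := by
        simpa using (hasDerivAt_id x).const_mul (-K)
      exact h1.exp
    have := (hH x).mul hexp
    exact this.congr_deriv (by ring)
  have hHnn : ∀ x ∈ Icc a b, 0 ≤ H x := by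
    intro x hx
    exact intervalIntegral.integral_nonneg hx.1 fun u hu =>
      hnn u ⟨hu.1, hu.2.trans hx.2⟩
  have hanti : AntitoneOn G (Icc a b) := by
    apply antitoneOn_of_deriv_nonpos (convex_Icc a b)
    · exact fun x _ => (hG x).continuousAt.continuousWithinAt
    · intro x hx
      exact (hG x).differentiableAt.differentiableWithinAt
    · intro x hx
      rw [interior_Icc] at hx
      rw [(hG x).deriv]
      apply mul_nonpos_of_nonpos_of_nonneg _ (Real.exp_pos _).le
      have := hineq x ⟨hx.1.le, hx.2.le⟩
      linarith
  have hGa : G a = 0 := by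
    simp [hGdef, hHdef, intervalIntegral.integral_same]
  have hGt : G t ≤ 0 := by
    rw [← hGa]
    exact hanti ⟨le_refl a, hab⟩ ht ht.1
  have hGtt : G t = H t * Real.exp (-K * t) := rfl
  have hHt : H t ≤ 0 := by
    by_contra hcon
    push_neg at hcon
    nlinarith [Real.exp_pos (-K * t)]
  have hH0 : H t = 0 := le_antisymm hHt (hHnn t ht)
  have h1 : h t ≤ K * H t := hineq t ht
  rw [hH0] at h1
  have h2 := hnn t ht
  linarith

lemma gronwall_bwd {h : ℝ → ℝ} {a b K : ℝ} (hK : 0 ≤ K) (hc : Continuous h)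
    (hnn : ∀ t ∈ Icc a b, 0 ≤ h t)
    (hineq : ∀ t ∈ Icc a b, h t ≤ K * ∫ τ in t..b, h τ) :
    ∀ t ∈ Icc a b, h t = 0 := by
  intro t ht
  have key : ∀ x ∈ Icc a b, h (a + b - x) = 0 := by
    apply gronwall_fwd hK (hc.comp (by continuity))
    · intro x hx
      exact hnn _ ⟨by linarith [hx.2], by linarith [hx.1]⟩
    · intro x hx
      simp only [Function.comp]
      have e : (∫ τ in a..x, h (a + b - τ)) = ∫ τ in (a + b - x)..(a + b - a), h τ :=
        intervalIntegral.integral_comp_sub_left h (a + b)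
      have e2 : a + b - a = b := by ring
      rw [e2] at e
      rw [e]
      exact hineq _ ⟨by linarith [hx.2], by linarith [hx.1]⟩
  have := key (a + b - t) ⟨by linarith [ht.2], by linarith [ht.1]⟩
  simpa using this

lemma key_pos {φ : ℝ → ℝ} {a b K : ℝ} (hφ : Continuous φ) (hK : 0 ≤ K) (ha : 0 < φ a)
    (hbound : ∀ t₁ ∈ Icc a b, φ t₁ = 0 → ∀ t ∈ Icc a t₁, |φ t| ≤ K * ∫ τ in t..t₁, |φ τ|) :
    ∀ t ∈ Icc a b, 0 < φ t := by
  intro t₂ ht₂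
  by_contra hcon
  push_neg at hcon
  have h0 : (0:ℝ) ∈ Icc (φ t₂) (φ a) := ⟨hcon, ha.le⟩
  obtain ⟨t₁, ht₁, hφt₁⟩ := intermediate_value_Icc' ht₂.1 hφ.continuousOn h0
  have hz : ∀ t ∈ Icc a t₁, |φ t| = 0 := by
    apply gronwall_bwd hK (hφ.abs) (fun t _ => abs_nonneg _)
    intro t ht
    exact hbound t₁ ⟨ht₁.1, ht₁.2.trans ht₂.2⟩ hφt₁ t ht
  have := hz a ⟨le_refl a, ht₁.1⟩
  rw [abs_eq_zero] at this
  exact ha.ne' this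

lemma key_nonneg {φ ψ : ℝ → ℝ} {a b K : ℝ} (hφ : Continuous φ) (hψ : Continuous ψ)
    (hψnn : ∀ t, 0 ≤ ψ t) (hψφ : ∀ t, ψ t ≤ |φ t|) (hK : 0 ≤ K) (ha : 0 < φ a)
    (hbound : ∀ t₁ ∈ Icc a b, φ t₁ = 0 → ∀ t ∈ Icc t₁ b, |φ t| ≤ K * ∫ τ in t₁..t, ψ τ) :
    ∀ t ∈ Icc a b, 0 ≤ φ t := by
  intro t₂ ht₂
  by_contra hcon
  push_neg at hcon
  have h0 : (0:ℝ) ∈ Icc (φ t₂) (φ a) := ⟨hcon.le, ha.le⟩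
  obtain ⟨t₁, ht₁, hφt₁⟩ := intermediate_value_Icc' ht₂.1 hφ.continuousOn h0
  have ht₁b : t₁ ∈ Icc a b := ⟨ht₁.1, ht₁.2.trans ht₂.2⟩
  have hz : ∀ t ∈ Icc t₁ b, ψ t = 0 := by
    apply gronwall_fwd hK hψ (fun t _ => hψnn t)
    intro t ht
    exact le_trans (hψφ t) (hbound t₁ ht₁b hφt₁ t ht)
  have ht₂' : t₂ ∈ Icc t₁ b := ⟨ht₁.2, ht₂.2⟩
  have hint : (∫ τ in t₁..t₂, ψ τ) = 0 := by
    rw [show (0:ℝ) = ∫ τ in t₁..t₂, (0:ℝ) by simp]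
    apply intervalIntegral.integral_congr
    intro τ hτ
    rw [uIcc_of_le ht₁.2] at hτ
    exact hz τ ⟨hτ.1, hτ.2.trans ht₂.2⟩
  have := hbound t₁ ht₁b hφt₁ t₂ ht₂'
  rw [hint, mul_zero] at this
  have habs : |φ t₂| = 0 := le_antisymm this (abs_nonneg _)
  rw [abs_eq_zero] at habs
  exact hcon.ne habs

lemma hasDerivAt_fst' {X : ℝ → ℝ × ℝ} {d : ℝ × ℝ} {t : ℝ} (h : HasDerivAt X d t) :
    HasDerivAt (fun t => (X t).1) d.1 t := by
  have := (hasFDerivAt_fst (𝕜 := ℝ) (p := X t)).comp_hasDerivAt t h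
  exact this

lemma hasDerivAt_snd' {X : ℝ → ℝ × ℝ} {d : ℝ × ℝ} {t : ℝ} (h : HasDerivAt X d t) :
    HasDerivAt (fun t => (X t).2) d.2 t := by
  have := (hasFDerivAt_snd (𝕜 := ℝ) (p := X t)).comp_hasDerivAt t h
  exact this

lemma global_sol {β γ c : ℝ} (T : ℝ) (hβ : 0 < β) (hγ : 0 < γ) (hc : 0 < c) (x₀ : ℝ × ℝ) :
    ∃ X : ℝ → ℝ × ℝ, Continuous X ∧ X T = x₀ ∧
      ∀ t, T < t → HasDerivAt X (F β γ c (X t)) t := by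
  set K := Real.toNNReal (2 * β * c + γ) with hK
  set C := β * c * c + (β * c * c + γ * c) with hCdef
  have hC : 0 ≤ C := by positivity
  have hex : ∀ n : ℕ, ∃ α : ℝ → ℝ × ℝ, α T = x₀ ∧
      ∀ t ∈ Icc T (T + n), HasDerivWithinAt α (F β γ c (α t)) (Icc T (T + n)) t := by
    intro n
    obtain ⟨α, h1, h2⟩ := IsPicardLindelof.exists_eq_forall_mem_Icc_hasDerivWithinAt₀
      (f := fun _ => F β γ c)
      (t₀ := (⟨T, le_refl T, le_add_of_nonneg_right n.cast_nonneg⟩ : Icc T (T + (n : ℝ))))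
      (x₀ := x₀) (a := (C * n).toNNReal) (L := C.toNNReal) (K := K)
      { lipschitzOnWith := fun t _ => (F_lip hβ.le hγ.le hc.le).lipschitzOnWith
        continuousOn := fun x _ => continuousOn_const
        norm_le := fun t _ x _ => (F_norm_le hβ.le hγ.le hc.le x).trans (Real.le_coe_toNNReal _)
        mul_max_le := by
          show (C.toNNReal : ℝ) * max (T + n - T) (T - T) ≤ ((C * n).toNNReal : ℝ) - ((0:NNReal):ℝ)
          have : max (T + n - T) (T - T) = (n : ℝ) := by
            rw [max_eq_left] <;> simp [n.cast_nonneg]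
          rw [this, Real.coe_toNNReal _ hC, Real.coe_toNNReal _ (by positivity)]
          simp }
    exact ⟨α, h1, h2⟩
  choose α hα0 hα1 using hex
  have contOn : ∀ n : ℕ, ContinuousOn (α n) (Icc T (T + n)) :=
    fun n t ht => (hα1 n t ht).continuousWithinAt
  have derivIci : ∀ (n : ℕ) (b : ℝ), b ≤ T + n →
      ∀ t ∈ Ico T b, HasDerivWithinAt (α n) (F β γ c (α n t)) (Ici t) t := by
    intro n b hb t ht
    apply (hα1 n t ⟨ht.1, le_trans ht.2.le hb⟩).mono_of_mem_nhdsWithin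
    rw [mem_nhdsWithin]
    refine ⟨Iio (T + n), isOpen_Iio, lt_of_lt_of_le ht.2 hb, ?_⟩
    rintro x ⟨hx1, hx2⟩
    exact ⟨le_trans ht.1 hx2, hx1.le⟩
  have huniq : ∀ (n m : ℕ) (t : ℝ), t ∈ Icc T (T + n) → t ∈ Icc T (T + m) →
      α n t = α m t := by
    intro n m t h1 h2
    set b := min (T + n) (T + m) with hb
    have htb : t ∈ Icc T b := ⟨h1.1, le_min h1.2 h2.2⟩
    have key : EqOn (α n) (α m) (Icc T b) := by
      apply ODE_solution_unique (v := fun _ => F β γ c)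
        (fun _ => F_lip hβ.le hγ.le hc.le)
        ((contOn n).mono (Icc_subset_Icc le_rfl (min_le_left _ _)))
        (derivIci n b (min_le_left _ _))
        ((contOn m).mono (Icc_subset_Icc le_rfl (min_le_right _ _)))
        (derivIci m b (min_le_right _ _))
      rw [hα0 n, hα0 m]
    exact key htb
  have hmem : ∀ t : ℝ, T ≤ t → t ∈ Icc T (T + ((⌈t - T⌉₊ + 1 : ℕ) : ℝ)) := by
    intro t ht
    refine ⟨ht, ?_⟩
    have := Nat.le_ceil (t - T)
    push_cast
    linarith
  refine ⟨fun t => α (⌈t - T⌉₊ + 1) (max T t), ?_, ?_, ?_⟩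
  · rw [continuous_iff_continuousAt]
    intro t
    set n : ℕ := ⌈t - T⌉₊ + 1 with hn
    have htn : t < T + n := by
      rcases le_or_gt T t with h | h
      · have h2 := Nat.le_ceil (t - T)
        push_cast [hn]
        linarith
      · have h3 : (0:ℝ) ≤ (n:ℝ) := n.cast_nonneg
        linarith
    apply ContinuousOn.continuousAt _ (Iic_mem_nhds htn)
    apply ContinuousOn.congr (f := fun x => α n (max T x))
    · apply (contOn n).comp ((continuous_const.max continuous_id).continuousOn)
      intro x hx
      exact ⟨le_max_left _ _, max_le (le_add_of_nonneg_right n.cast_nonneg) hx⟩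
    · intro x hx
      show α (⌈x - T⌉₊ + 1) (max T x) = α n (max T x)
      rcases le_or_gt T x with h | h
      · rw [max_eq_right h]
        exact huniq _ n x (hmem x h) ⟨h, hx⟩
      · rw [max_eq_left h.le, hα0, hα0]
  · show α (⌈T - T⌉₊ + 1) (max T T) = x₀
    rw [max_self, hα0]
  · intro t ht
    set n : ℕ := ⌈t - T⌉₊ + 1 with hn
    have htn : t < T + n := by
      have := Nat.le_ceil (t - T)
      push_cast [hn]
      linarith
    have htIcc : t ∈ Icc T (T + n) := ⟨ht.le, htn.le⟩
    have heq : ∀ x ∈ Icc T (T + (n:ℝ)), α (⌈x - T⌉₊ + 1) (max T x) = α n x := by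
      intro x hx
      rw [max_eq_right hx.1]
      exact huniq _ n x (hmem x hx.1) hx
    have h1 := hα1 n t htIcc
    have h2 : HasDerivWithinAt (fun x => α (⌈x - T⌉₊ + 1) (max T x))
        (F β γ c (α n t)) (Icc T (T + n)) t := h1.congr heq (heq t htIcc)
    have h3 : F β γ c (α n t) = F β γ c (α (⌈t - T⌉₊ + 1) (max T t)) := by
      rw [heq t htIcc]
    rw [← h3]
    exact h2.hasDerivAt (Icc_mem_nhds ht htn)

lemma abs3 {x y z bx by' bz : ℝ} (hx : |x| ≤ bx) (hy : |y| ≤ by') (hz : |z| ≤ bz) :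
    |x * y * z| ≤ bx * by' * bz := by
  rw [abs_mul, abs_mul]
  apply mul_le_mul (mul_le_mul hx hy (abs_nonneg y) ((abs_nonneg x).trans hx)) hz (abs_nonneg z)
  exact mul_nonneg ((abs_nonneg x).trans hx) ((abs_nonneg y).trans hy)

lemma cl_cont (c : ℝ) : Continuous (cl c) := by
  unfold cl
  fun_prop

end S12
set_option maxHeartbeats 1000000 in
/-- Reduction to a finite horizon when `λ₂ = 0`: the restriction of an optimal control of the
infinite-horizon problem to `[0,T]`, for `T` beyond the herd-immunity time `T^u_{γ/β}`, is
optimal for the finite-horizon problem with state constraint `i ≤ i_M` and target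
`s(T) < γ/β`. -/
theorem statement12 (β γ umax iM l1 l2 : ℝ) (hβ : 0 < β) (hγ : 0 < γ)
    (humax : 0 < umax) (humaxβ : umax < β) (hiM : iM ∈ Set.Ioo (0:ℝ) 1)
    (hl1 : 0 < l1) (hl2 : l2 = 0)
    (s₀ i₀ : ℝ) (hB : (s₀, i₀) ∈ ViableSet β γ umax iM) (hi₀ : 0 < i₀)
    (u s i : ℝ → ℝ) (hu : IsControl umax u) (hsol : SIRSol β γ u s i s₀ i₀)
    (hadm : Admissible iM i)
    (hopt : ∀ v sv iv : ℝ → ℝ, IsControl umax v → SIRSol β γ v sv iv s₀ i₀ →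
      Admissible iM iv → Cost l1 l2 u i ≤ Cost l1 l2 v iv)
    (Tγβ : ℝ) (hTγβ : 0 ≤ Tγβ) (hreach : s Tγβ = γ / β)
    (T : ℝ) (hT : Tγβ < T) :
    ∀ v sv iv : ℝ → ℝ, IsControl umax v → SIRSolOn β γ T v sv iv s₀ i₀ →
      (∀ t ∈ Set.Icc (0:ℝ) T, iv t ≤ iM) → sv T < γ / β →
      (∫ t in (0:ℝ)..T, l1 * u t) ≤ ∫ t in (0:ℝ)..T, l1 * v t := by
  intro v sv iv hv hsolv hivM hsvT
  obtain ⟨hvm, hvr⟩ := hv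
  obtain ⟨hsvcont, hivcont, hsveq, hiveq⟩ := hsolv
  obtain ⟨hum, hur⟩ := hu
  have hT0 : 0 ≤ T := le_trans hTγβ hT.le
  have hs₀ : 0 < s₀ := hB.1.1
  have hgb : 0 ≤ γ / β := div_nonneg hγ.le hβ.le
  -- clamped-in-time versions of sv, iv
  set ρ : ℝ → ℝ := fun t => max 0 (min t T) with hρ_def
  have hρc : Continuous ρ := continuous_const.max (continuous_id.min continuous_const)
  have hρmem : ∀ t, ρ t ∈ Icc (0:ℝ) T := fun t => ⟨le_max_left _ _, max_le hT0 (min_le_right _ _)⟩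
  have hρeq : ∀ t ∈ Icc (0:ℝ) T, ρ t = t := by
    intro t ht
    simp only [hρ_def]
    rw [min_eq_left ht.2, max_eq_right ht.1]
  set sc : ℝ → ℝ := fun t => sv (ρ t) with hsc_def
  set ic : ℝ → ℝ := fun t => iv (ρ t) with hic_def
  have hscC : Continuous sc := hsvcont.comp_continuous hρc hρmem
  have hicC : Continuous ic := hivcont.comp_continuous hρc hρmem
  have hsc_eq : ∀ t ∈ Icc (0:ℝ) T, sc t = sv t := by
    intro t ht; simp only [hsc_def]; rw [hρeq t ht]
  have hic_eq : ∀ t ∈ Icc (0:ℝ) T, ic t = iv t := by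
    intro t ht; simp only [hic_def]; rw [hρeq t ht]
  obtain ⟨Ms, hMs⟩ := isCompact_Icc.exists_bound_of_continuousOn hsvcont
  obtain ⟨Mi, hMi⟩ := isCompact_Icc.exists_bound_of_continuousOn hivcont
  have hMs0 : 0 ≤ Ms := le_trans (norm_nonneg _) (hMs 0 ⟨le_rfl, hT0⟩)
  have hMi0 : 0 ≤ Mi := le_trans (norm_nonneg _) (hMi 0 ⟨le_rfl, hT0⟩)
  have hscb : ∀ t, |sc t| ≤ Ms := fun t => by
    have := hMs (ρ t) (hρmem t); rwa [Real.norm_eq_abs] at this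
  have hicb : ∀ t, |ic t| ≤ Mi := fun t => by
    have := hMi (ρ t) (hρmem t); rwa [Real.norm_eq_abs] at this
  have hβv : ∀ τ, |β - v τ| ≤ β := fun τ => by
    have h1 := (hvr τ).1; have h2 := (hvr τ).2
    rw [abs_of_nonneg (by linarith : (0:ℝ) ≤ β - v τ)]
    linarith
  -- clamped integral equations
  have hsceq : ∀ t ∈ Icc (0:ℝ) T, sc t = s₀ + ∫ τ in (0:ℝ)..t, -((β - v τ) * sc τ * ic τ) := by
    intro t ht
    rw [hsc_eq t ht, hsveq t ht]
    congr 1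
    apply intervalIntegral.integral_congr
    intro τ hτ
    rw [uIcc_of_le ht.1] at hτ
    have hτ' : τ ∈ Icc (0:ℝ) T := ⟨hτ.1, hτ.2.trans ht.2⟩
    show -((β - v τ) * sv τ * iv τ) = -((β - v τ) * sc τ * ic τ)
    rw [hsc_eq τ hτ', hic_eq τ hτ']
  have hiceq : ∀ t ∈ Icc (0:ℝ) T, ic t = i₀ + ∫ τ in (0:ℝ)..t,
      ((β - v τ) * sc τ * ic τ - γ * ic τ) := by
    intro t ht
    rw [hic_eq t ht, hiveq t ht]
    congr 1
    apply intervalIntegral.integral_congr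
    intro τ hτ
    rw [uIcc_of_le ht.1] at hτ
    have hτ' : τ ∈ Icc (0:ℝ) T := ⟨hτ.1, hτ.2.trans ht.2⟩
    show (β - v τ) * sv τ * iv τ - γ * iv τ = (β - v τ) * sc τ * ic τ - γ * ic τ
    rw [hsc_eq τ hτ', hic_eq τ hτ']
  -- integrability
  have hmeas_s : Measurable (fun τ => -((β - v τ) * sc τ * ic τ)) :=
    (((measurable_const.sub hvm).mul hscC.measurable).mul hicC.measurable).neg
  have hmeas_i : Measurable (fun τ => ((β - v τ) * sc τ * ic τ - γ * ic τ)) :=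
    (((measurable_const.sub hvm).mul hscC.measurable).mul hicC.measurable).sub
      (measurable_const.mul hicC.measurable)
  have hIIs : ∀ a b : ℝ, IntervalIntegrable (fun τ => -((β - v τ) * sc τ * ic τ)) volume a b := by
    intro a b
    apply S12.II_of_bound hmeas_s (C := β * Ms * Mi)
    intro t _
    rw [abs_neg]
    exact S12.abs3 (hβv t) (hscb t) (hicb t)
  have hIIi : ∀ a b : ℝ, IntervalIntegrable
      (fun τ => ((β - v τ) * sc τ * ic τ - γ * ic τ)) volume a b := by
    intro a b
    apply S12.II_of_bound hmeas_i (C := β * Ms * Mi + γ * Mi)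
    intro t _
    calc |(β - v t) * sc t * ic t - γ * ic t|
        ≤ |(β - v t) * sc t * ic t| + |γ * ic t| := abs_sub _ _
      _ ≤ β * Ms * Mi + γ * Mi := by
          apply add_le_add (S12.abs3 (hβv t) (hscb t) (hicb t))
          rw [abs_mul, abs_of_nonneg hγ.le]
          exact mul_le_mul_of_nonneg_left (hicb t) hγ.le
  -- positivity of ic on [0,T]
  have hic0 : ic 0 = i₀ := by
    rw [hic_eq 0 ⟨le_rfl, hT0⟩]
    have := hiveq 0 ⟨le_rfl, hT0⟩
    simpa using this
  have hsc0 : sc 0 = s₀ := by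
    rw [hsc_eq 0 ⟨le_rfl, hT0⟩]
    have := hsveq 0 ⟨le_rfl, hT0⟩
    simpa using this
  have hicpos : ∀ t ∈ Icc (0:ℝ) T, 0 < ic t := by
    apply S12.key_pos hicC (K := β * Ms + γ) (by positivity)
    · rw [hic0]; exact hi₀
    · intro t₁ ht₁ hz t ht
      have ht' : t ∈ Icc (0:ℝ) T := ⟨ht.1, ht.2.trans ht₁.2⟩
      have e1 := hiceq t₁ ht₁
      have e2 := hiceq t ht'
      have hsub : ic t₁ - ic t
          = ∫ τ in t..t₁, ((β - v τ) * sc τ * ic τ - γ * ic τ) := by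
        rw [e1, e2, add_sub_add_left_eq_sub]
        exact intervalIntegral.integral_interval_sub_left (hIIi 0 t₁) (hIIi 0 t)
      rw [hz, zero_sub] at hsub
      have habs : |ic t| = |∫ τ in t..t₁, ((β - v τ) * sc τ * ic τ - γ * ic τ)| := by
        rw [← abs_neg (ic t), ← hsub]
      rw [habs]
      calc |∫ τ in t..t₁, ((β - v τ) * sc τ * ic τ - γ * ic τ)|
          ≤ ∫ τ in t..t₁, |(β - v τ) * sc τ * ic τ - γ * ic τ| :=
            intervalIntegral.abs_integral_le_integral_abs ht.2
        _ ≤ ∫ τ in t..t₁, (β * Ms + γ) * |ic τ| := by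
            apply intervalIntegral.integral_mono_on ht.2 (hIIi t t₁).abs
              ((continuous_const.mul hicC.abs).intervalIntegrable t t₁)
            intro x _
            calc |(β - v x) * sc x * ic x - γ * ic x|
                ≤ |(β - v x) * sc x * ic x| + |γ * ic x| := abs_sub _ _
              _ ≤ β * Ms * |ic x| + γ * |ic x| := by
                  apply add_le_add (S12.abs3 (hβv x) (hscb x) le_rfl)
                  rw [abs_mul, abs_of_nonneg hγ.le]
              _ = (β * Ms + γ) * |ic x| := by ring
        _ = (β * Ms + γ) * ∫ τ in t..t₁, |ic τ| := intervalIntegral.integral_const_mul _ _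
  -- positivity of sc on [0,T]
  have hscpos : ∀ t ∈ Icc (0:ℝ) T, 0 < sc t := by
    apply S12.key_pos hscC (K := β * Mi) (by positivity)
    · rw [hsc0]; exact hs₀
    · intro t₁ ht₁ hz t ht
      have ht' : t ∈ Icc (0:ℝ) T := ⟨ht.1, ht.2.trans ht₁.2⟩
      have e1 := hsceq t₁ ht₁
      have e2 := hsceq t ht'
      have hsub : sc t₁ - sc t = ∫ τ in t..t₁, -((β - v τ) * sc τ * ic τ) := by
        rw [e1, e2, add_sub_add_left_eq_sub]
        exact intervalIntegral.integral_interval_sub_left (hIIs 0 t₁) (hIIs 0 t)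
      rw [hz, zero_sub] at hsub
      have habs : |sc t| = |∫ τ in t..t₁, -((β - v τ) * sc τ * ic τ)| := by
        rw [← abs_neg (sc t), ← hsub]
      rw [habs]
      calc |∫ τ in t..t₁, -((β - v τ) * sc τ * ic τ)|
          ≤ ∫ τ in t..t₁, |-((β - v τ) * sc τ * ic τ)| :=
            intervalIntegral.abs_integral_le_integral_abs ht.2
        _ ≤ ∫ τ in t..t₁, (β * Mi) * |sc τ| := by
            apply intervalIntegral.integral_mono_on ht.2 (hIIs t t₁).abs
              ((continuous_const.mul hscC.abs).intervalIntegrable t t₁)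
            intro x _
            rw [abs_neg]
            calc |(β - v x) * sc x * ic x| = |(β - v x) * sc x * ic x| := rfl
              _ = |(β - v x) * ic x * sc x| := by ring_nf
              _ ≤ β * Mi * |sc x| := S12.abs3 (hβv x) (hicb x) le_rfl
        _ = (β * Mi) * ∫ τ in t..t₁, |sc τ| := intervalIntegral.integral_const_mul _ _
  have hTmem : T ∈ Icc (0:ℝ) T := ⟨hT0, le_rfl⟩
  have hsvT0 : 0 < sv T := by rw [← hsc_eq T hTmem]; exact hscpos T hTmem
  have hivT0 : 0 < iv T := by rw [← hic_eq T hTmem]; exact hicpos T hTmem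
  have hivTle : iv T ≤ iM := hivM T hTmem
  -- the truncated autonomous SIR flow after time T
  set c : ℝ := γ / β + iM + 1 with hc_def
  have hc0 : 0 < c := by
    have := hiM.1
    simp only [hc_def]
    positivity
  have hsvTc : sv T ≤ c := by simp only [hc_def]; linarith [hsvT, hiM.1]
  have hivTc : iv T ≤ c := by simp only [hc_def]; linarith [hivTle, hgb]
  obtain ⟨X, hXc, hXT, hXd⟩ := S12.global_sol T hβ hγ hc0 (sv T, iv T)
  set sN : ℝ → ℝ := fun t => (X t).1 with hsN_def
  set iN : ℝ → ℝ := fun t => (X t).2 with hiN_def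
  have hsNC : Continuous sN := continuous_fst.comp hXc
  have hiNC : Continuous iN := continuous_snd.comp hXc
  have hsNT : sN T = sv T := by simp only [hsN_def]; rw [hXT]
  have hiNT : iN T = iv T := by simp only [hiN_def]; rw [hXT]
  have hsNd : ∀ t, T < t →
      HasDerivAt sN (-(β * (S12.cl c (sN t) * S12.cl c (iN t)))) t := by
    intro t ht
    exact S12.hasDerivAt_fst' (hXd t ht)
  have hiNd : ∀ t, T < t →
      HasDerivAt iN (β * (S12.cl c (sN t) * S12.cl c (iN t)) - γ * S12.cl c (iN t)) t := by
    intro t ht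
    exact S12.hasDerivAt_snd' (hXd t ht)
  -- monotonicity
  have hsN_anti : AntitoneOn sN (Ici T) := by
    apply antitoneOn_of_deriv_nonpos (convex_Ici T) hsNC.continuousOn
    · intro x hx; rw [interior_Ici] at hx
      exact (hsNd x hx).differentiableAt.differentiableWithinAt
    · intro x hx; rw [interior_Ici] at hx
      rw [(hsNd x hx).deriv]
      have := mul_nonneg (S12.cl_nonneg c (sN x)) (S12.cl_nonneg c (iN x))
      nlinarith [hβ.le]
  have hsN_le : ∀ t, T ≤ t → sN t ≤ sv T := by
    intro t ht
    have := hsN_anti self_mem_Ici ht ht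
    rwa [hsNT] at this
  have hsN_lt : ∀ t, T ≤ t → sN t < γ / β := fun t ht => lt_of_le_of_lt (hsN_le t ht) hsvT
  have hiN_anti : AntitoneOn iN (Ici T) := by
    apply antitoneOn_of_deriv_nonpos (convex_Ici T) hiNC.continuousOn
    · intro x hx; rw [interior_Ici] at hx
      exact (hiNd x hx).differentiableAt.differentiableWithinAt
    · intro x hx; rw [interior_Ici] at hx
      rw [(hiNd x hx).deriv]
      have h1 : S12.cl c (sN x) ≤ γ / β := S12.cl_le_of_le hgb (hsN_lt x hx.le).le
      have h2 : 0 ≤ S12.cl c (iN x) := S12.cl_nonneg _ _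
      have h3 : S12.cl c (sN x) * β ≤ γ := (le_div_iff₀ hβ).1 h1
      nlinarith
  have hiN_le : ∀ t, T ≤ t → iN t ≤ iv T := by
    intro t ht
    have := hiN_anti self_mem_Ici ht ht
    rwa [hiNT] at this
  -- FTC for the flow
  have hclcont : Continuous (S12.cl c) := S12.cl_cont c
  have hGsC : Continuous (fun τ => -(β * (S12.cl c (sN τ) * S12.cl c (iN τ)))) := by
    exact (continuous_const.mul ((hclcont.comp hsNC).mul (hclcont.comp hiNC))).neg
  have hGiC : Continuous
      (fun τ => β * (S12.cl c (sN τ) * S12.cl c (iN τ)) - γ * S12.cl c (iN τ)) := by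
    exact (continuous_const.mul ((hclcont.comp hsNC).mul (hclcont.comp hiNC))).sub
      (continuous_const.mul (hclcont.comp hiNC))
  have hsN_FTC : ∀ a b : ℝ, T ≤ a → a ≤ b →
      (∫ τ in a..b, -(β * (S12.cl c (sN τ) * S12.cl c (iN τ)))) = sN b - sN a := by
    intro a b hTa hab
    apply intervalIntegral.integral_eq_sub_of_hasDeriv_right_of_le hab hsNC.continuousOn
      (fun x hx => (hsNd x (lt_of_le_of_lt hTa hx.1)).hasDerivWithinAt)
      (hGsC.intervalIntegrable _ _)
  have hiN_FTC : ∀ a b : ℝ, T ≤ a → a ≤ b →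
      (∫ τ in a..b, (β * (S12.cl c (sN τ) * S12.cl c (iN τ)) - γ * S12.cl c (iN τ)))
        = iN b - iN a := by
    intro a b hTa hab
    apply intervalIntegral.integral_eq_sub_of_hasDeriv_right_of_le hab hiNC.continuousOn
      (fun x hx => (hiNd x (lt_of_le_of_lt hTa hx.1)).hasDerivWithinAt)
      (hGiC.intervalIntegrable _ _)
  -- nonnegativity of the flow
  have hiN_nonneg : ∀ t, T ≤ t → 0 ≤ iN t := by
    intro t₂ ht₂
    have key : ∀ t ∈ Icc T t₂, 0 ≤ iN t := by
      apply S12.key_nonneg (a := T) (b := t₂) (ψ := fun τ => S12.cl c (iN τ)) hiNC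
        (hclcont.comp hiNC) (fun τ => S12.cl_nonneg _ _) (fun τ => S12.cl_le_abs _ _)
        (K := β * c + γ) (by positivity) (by rw [hiNT]; exact hivT0)
      intro t₁ ht₁ hz t ht
      have hFT := hiN_FTC t₁ t ht₁.1 ht.1
      rw [hz, sub_zero] at hFT
      rw [← hFT]
      calc |∫ τ in t₁..t, (β * (S12.cl c (sN τ) * S12.cl c (iN τ)) - γ * S12.cl c (iN τ))|
          ≤ ∫ τ in t₁..t, |β * (S12.cl c (sN τ) * S12.cl c (iN τ)) - γ * S12.cl c (iN τ)| :=
            intervalIntegral.abs_integral_le_integral_abs ht.1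
        _ ≤ ∫ τ in t₁..t, (β * c + γ) * S12.cl c (iN τ) := by
            apply intervalIntegral.integral_mono_on ht.1 (hGiC.intervalIntegrable _ _).abs
              ((continuous_const.mul (hclcont.comp hiNC)).intervalIntegrable _ _)
            intro x _
            have hS := S12.cl_le c (sN x) hc0.le
            have hS0 := S12.cl_nonneg c (sN x)
            have hI0 := S12.cl_nonneg c (iN x)
            have hI := S12.cl_le c (iN x) hc0.le
            calc |β * (S12.cl c (sN x) * S12.cl c (iN x)) - γ * S12.cl c (iN x)|
                ≤ |β * (S12.cl c (sN x) * S12.cl c (iN x))| + |γ * S12.cl c (iN x)| :=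
                  abs_sub _ _
              _ = β * (S12.cl c (sN x) * S12.cl c (iN x)) + γ * S12.cl c (iN x) := by
                  rw [abs_of_nonneg (by positivity), abs_of_nonneg (by positivity)]
              _ ≤ (β * c + γ) * S12.cl c (iN x) := by
                  have h4 : S12.cl c (sN x) * S12.cl c (iN x) ≤ c * S12.cl c (iN x) :=
                    mul_le_mul_of_nonneg_right hS hI0
                  nlinarith [h4, hβ.le]
        _ = (β * c + γ) * ∫ τ in t₁..t, S12.cl c (iN τ) :=
            intervalIntegral.integral_const_mul _ _
    exact key t₂ ⟨ht₂, le_rfl⟩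
  have hsN_nonneg : ∀ t, T ≤ t → 0 ≤ sN t := by
    intro t₂ ht₂
    have key : ∀ t ∈ Icc T t₂, 0 ≤ sN t := by
      apply S12.key_nonneg (a := T) (b := t₂) (ψ := fun τ => S12.cl c (sN τ)) hsNC
        (hclcont.comp hsNC) (fun τ => S12.cl_nonneg _ _) (fun τ => S12.cl_le_abs _ _)
        (K := β * c) (by positivity) (by rw [hsNT]; exact hsvT0)
      intro t₁ ht₁ hz t ht
      have hFT := hsN_FTC t₁ t ht₁.1 ht.1
      rw [hz, sub_zero] at hFT
      rw [← hFT]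
      calc |∫ τ in t₁..t, -(β * (S12.cl c (sN τ) * S12.cl c (iN τ)))|
          ≤ ∫ τ in t₁..t, |-(β * (S12.cl c (sN τ) * S12.cl c (iN τ)))| :=
            intervalIntegral.abs_integral_le_integral_abs ht.1
        _ ≤ ∫ τ in t₁..t, (β * c) * S12.cl c (sN τ) := by
            apply intervalIntegral.integral_mono_on ht.1 (hGsC.intervalIntegrable _ _).abs
              ((continuous_const.mul (hclcont.comp hsNC)).intervalIntegrable _ _)
            intro x _
            show _ ≤ β * c * S12.cl c (sN x)
            have hS0 := S12.cl_nonneg c (sN x)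
            have hI0 := S12.cl_nonneg c (iN x)
            have hI := S12.cl_le c (iN x) hc0.le
            rw [abs_neg, abs_of_nonneg (by positivity)]
            have h4 : S12.cl c (sN x) * S12.cl c (iN x) ≤ S12.cl c (sN x) * c :=
              mul_le_mul_of_nonneg_left hI hS0
            nlinarith [h4, hβ.le]
        _ = (β * c) * ∫ τ in t₁..t, S12.cl c (sN τ) :=
            intervalIntegral.integral_const_mul _ _
    exact key t₂ ⟨ht₂, le_rfl⟩
  -- unclamping
  have hclS : ∀ t, T ≤ t → S12.cl c (sN t) = sN t := fun t ht =>
    S12.cl_eq (hsN_nonneg t ht) ((hsN_le t ht).trans hsvTc)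
  have hclI : ∀ t, T ≤ t → S12.cl c (iN t) = iN t := fun t ht =>
    S12.cl_eq (hiN_nonneg t ht) ((hiN_le t ht).trans hivTc)
  -- glued control and trajectory
  set w : ℝ → ℝ := fun t => if t ≤ T then v t else 0 with hw_def
  set sw : ℝ → ℝ := fun t => if t ≤ T then sc t else sN t with hsw_def
  set iw : ℝ → ℝ := fun t => if t ≤ T then ic t else iN t with hiw_def
  have hwm : Measurable w := Measurable.ite measurableSet_Iic hvm measurable_const
  have hwr : ∀ t, w t ∈ Icc (0:ℝ) umax := by
    intro t
    by_cases h : t ≤ T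
    · simp only [hw_def, if_pos h]; exact hvr t
    · simp only [hw_def, if_neg h]; exact ⟨le_rfl, humax.le⟩
  have hswC : Continuous sw := by
    apply Continuous.if_le hscC hsNC continuous_id continuous_const
    intro x hx
    rw [show x = T from hx, hsc_eq T hTmem, ← hsNT]
  have hiwC : Continuous iw := by
    apply Continuous.if_le hicC hiNC continuous_id continuous_const
    intro x hx
    rw [show x = T from hx, hic_eq T hTmem, ← hiNT]
  have hsw_eqIcc : ∀ t ∈ Icc (0:ℝ) T, sw t = sv t := by
    intro t ht; simp only [hsw_def, if_pos ht.2]; exact hsc_eq t ht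
  have hiw_eqIcc : ∀ t ∈ Icc (0:ℝ) T, iw t = iv t := by
    intro t ht; simp only [hiw_def, if_pos ht.2]; exact hic_eq t ht
  have hsw_gt : ∀ t, T < t → sw t = sN t := by
    intro t ht; simp only [hsw_def, if_neg (not_le.2 ht)]
  have hiw_gt : ∀ t, T < t → iw t = iN t := by
    intro t ht; simp only [hiw_def, if_neg (not_le.2 ht)]
  -- bounds for the glued trajectory
  have hswb : ∀ τ, |sw τ| ≤ Ms + sv T := by
    intro τ
    by_cases h : τ ≤ T
    · simp only [hsw_def, if_pos h]; linarith [hscb τ]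
    · simp only [hsw_def, if_neg h]
      push_neg at h
      rw [abs_of_nonneg (hsN_nonneg τ h.le)]
      linarith [hsN_le τ h.le]
  have hiwb : ∀ τ, |iw τ| ≤ Mi + iv T := by
    intro τ
    by_cases h : τ ≤ T
    · simp only [hiw_def, if_pos h]; linarith [hicb τ]
    · simp only [hiw_def, if_neg h]
      push_neg at h
      rw [abs_of_nonneg (hiN_nonneg τ h.le)]
      linarith [hiN_le τ h.le]
  have hβw : ∀ τ, |β - w τ| ≤ β := by
    intro τ
    have h1 := (hwr τ).1; have h2 := (hwr τ).2
    rw [abs_of_nonneg (by linarith : (0:ℝ) ≤ β - w τ)]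
    linarith
  have hIIsw : ∀ a b : ℝ,
      IntervalIntegrable (fun τ => -((β - w τ) * sw τ * iw τ)) volume a b := by
    intro a b
    apply S12.II_of_bound (C := β * (Ms + sv T) * (Mi + iv T))
      ((((measurable_const.sub hwm).mul hswC.measurable).mul hiwC.measurable).neg)
    intro t _
    show |-((β - w t) * sw t * iw t)| ≤ _
    rw [abs_neg]
    exact S12.abs3 (hβw t) (hswb t) (hiwb t)
  have hIIiw : ∀ a b : ℝ, IntervalIntegrable
      (fun τ => ((β - w τ) * sw τ * iw τ - γ * iw τ)) volume a b := by
    intro a b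
    apply S12.II_of_bound (C := β * (Ms + sv T) * (Mi + iv T) + γ * (Mi + iv T))
      ((((measurable_const.sub hwm).mul hswC.measurable).mul hiwC.measurable).sub
        (measurable_const.mul hiwC.measurable))
    intro t _
    calc |(β - w t) * sw t * iw t - γ * iw t|
        ≤ |(β - w t) * sw t * iw t| + |γ * iw t| := abs_sub _ _
      _ ≤ β * (Ms + sv T) * (Mi + iv T) + γ * (Mi + iv T) := by
          apply add_le_add (S12.abs3 (hβw t) (hswb t) (hiwb t))
          rw [abs_mul, abs_of_nonneg hγ.le]
          exact mul_le_mul_of_nonneg_left (hiwb t) hγ.le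
  -- the glued integrand agrees with the original one on [0,T]
  have hcongr_sT : ∀ t ∈ Icc (0:ℝ) T,
      (∫ τ in (0:ℝ)..t, -((β - w τ) * sw τ * iw τ))
        = ∫ τ in (0:ℝ)..t, -((β - v τ) * sv τ * iv τ) := by
    intro t ht
    apply intervalIntegral.integral_congr
    intro τ hτ
    rw [uIcc_of_le ht.1] at hτ
    have hτ' : τ ∈ Icc (0:ℝ) T := ⟨hτ.1, hτ.2.trans ht.2⟩
    show -((β - w τ) * sw τ * iw τ) = -((β - v τ) * sv τ * iv τ)
    simp only [hw_def, if_pos hτ'.2]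
    rw [hsw_eqIcc τ hτ', hiw_eqIcc τ hτ']
  have hcongr_iT : ∀ t ∈ Icc (0:ℝ) T,
      (∫ τ in (0:ℝ)..t, ((β - w τ) * sw τ * iw τ - γ * iw τ))
        = ∫ τ in (0:ℝ)..t, ((β - v τ) * sv τ * iv τ - γ * iv τ) := by
    intro t ht
    apply intervalIntegral.integral_congr
    intro τ hτ
    rw [uIcc_of_le ht.1] at hτ
    have hτ' : τ ∈ Icc (0:ℝ) T := ⟨hτ.1, hτ.2.trans ht.2⟩
    show (β - w τ) * sw τ * iw τ - γ * iw τ = (β - v τ) * sv τ * iv τ - γ * iv τ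
    simp only [hw_def, if_pos hτ'.2]
    rw [hsw_eqIcc τ hτ', hiw_eqIcc τ hτ']
  -- glued solution satisfies the infinite-horizon system
  have hseqw : ∀ t : ℝ, 0 ≤ t → sw t = s₀ + ∫ τ in (0:ℝ)..t, -((β - w τ) * sw τ * iw τ) := by
    intro t ht
    by_cases htT : t ≤ T
    · have ht' : t ∈ Icc (0:ℝ) T := ⟨ht, htT⟩
      rw [hsw_eqIcc t ht', hcongr_sT t ht']
      exact hsveq t ht'
    · push_neg at htT
      rw [hsw_gt t htT]
      rw [← intervalIntegral.integral_add_adjacent_intervals (hIIsw 0 T) (hIIsw T t)]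
      have hpart1 : (∫ τ in (0:ℝ)..T, -((β - w τ) * sw τ * iw τ)) = sv T - s₀ := by
        rw [hcongr_sT T hTmem]
        have := hsveq T hTmem
        linarith
      have hpart2 : (∫ τ in T..t, -((β - w τ) * sw τ * iw τ)) = sN t - sN T := by
        rw [← hsN_FTC T t le_rfl htT.le]
        apply intervalIntegral.integral_congr_ae
        apply ae_of_all
        intro τ hτ
        rw [uIoc_of_le htT.le] at hτ
        have hτT : T < τ := hτ.1
        show -((β - w τ) * sw τ * iw τ) = -(β * (S12.cl c (sN τ) * S12.cl c (iN τ)))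
        simp only [hw_def, if_neg (not_le.2 hτT)]
        rw [hsw_gt τ hτT, hiw_gt τ hτT, hclS τ hτT.le, hclI τ hτT.le]
        ring
      rw [hpart1, hpart2, hsNT]
      ring
  have hieqw : ∀ t : ℝ, 0 ≤ t →
      iw t = i₀ + ∫ τ in (0:ℝ)..t, ((β - w τ) * sw τ * iw τ - γ * iw τ) := by
    intro t ht
    by_cases htT : t ≤ T
    · have ht' : t ∈ Icc (0:ℝ) T := ⟨ht, htT⟩
      rw [hiw_eqIcc t ht', hcongr_iT t ht']
      exact hiveq t ht'
    · push_neg at htT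
      rw [hiw_gt t htT]
      rw [← intervalIntegral.integral_add_adjacent_intervals (hIIiw 0 T) (hIIiw T t)]
      have hpart1 : (∫ τ in (0:ℝ)..T, ((β - w τ) * sw τ * iw τ - γ * iw τ)) = iv T - i₀ := by
        rw [hcongr_iT T hTmem]
        have := hiveq T hTmem
        linarith
      have hpart2 : (∫ τ in T..t, ((β - w τ) * sw τ * iw τ - γ * iw τ)) = iN t - iN T := by
        rw [← hiN_FTC T t le_rfl htT.le]
        apply intervalIntegral.integral_congr_ae
        apply ae_of_all
        intro τ hτ
        rw [uIoc_of_le htT.le] at hτ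
        have hτT : T < τ := hτ.1
        show (β - w τ) * sw τ * iw τ - γ * iw τ
            = β * (S12.cl c (sN τ) * S12.cl c (iN τ)) - γ * S12.cl c (iN τ)
        simp only [hw_def, if_neg (not_le.2 hτT)]
        rw [hsw_gt τ hτT, hiw_gt τ hτT, hclS τ hτT.le, hclI τ hτT.le]
        ring
      rw [hpart1, hpart2, hiNT]
      ring
  have hadmw : Admissible iM iw := by
    intro t ht
    by_cases htT : t ≤ T
    · rw [hiw_eqIcc t ⟨ht, htT⟩]
      exact hivM t ⟨ht, htT⟩
    · push_neg at htT
      rw [hiw_gt t htT]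
      exact (hiN_le t htT.le).trans hivTle
  -- apply optimality
  have hcost := hopt w sw iw ⟨hwm, hwr⟩ ⟨hswC, hiwC, hseqw, hieqw⟩ hadmw
  subst hl2
  -- convert interval integrals to lower Lebesgue integrals
  have huII : IntervalIntegrable (fun t => l1 * u t) volume 0 T := by
    apply S12.II_of_bound (measurable_const.mul hum) (C := l1 * umax)
    intro t _
    show |l1 * u t| ≤ _
    rw [abs_mul, abs_of_nonneg hl1.le, abs_of_nonneg (hur t).1]
    exact mul_le_mul_of_nonneg_left (hur t).2 hl1.le
  have hvII : IntervalIntegrable (fun t => l1 * v t) volume 0 T := by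
    apply S12.II_of_bound (measurable_const.mul hvm) (C := l1 * umax)
    intro t _
    show |l1 * v t| ≤ _
    rw [abs_mul, abs_of_nonneg hl1.le, abs_of_nonneg (hvr t).1]
    exact mul_le_mul_of_nonneg_left (hvr t).2 hl1.le
  have h1 : ENNReal.ofReal (∫ t in (0:ℝ)..T, l1 * u t)
      = ∫⁻ t in Ioc (0:ℝ) T, ENNReal.ofReal (l1 * u t) := by
    rw [intervalIntegral.integral_of_le hT0]
    exact MeasureTheory.ofReal_integral_eq_lintegral_ofReal
      ((intervalIntegrable_iff_integrableOn_Ioc_of_le hT0).1 huII)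
      (ae_of_all _ fun t => mul_nonneg hl1.le (hur t).1)
  have h2 : ENNReal.ofReal (∫ t in (0:ℝ)..T, l1 * v t)
      = ∫⁻ t in Ioc (0:ℝ) T, ENNReal.ofReal (l1 * v t) := by
    rw [intervalIntegral.integral_of_le hT0]
    exact MeasureTheory.ofReal_integral_eq_lintegral_ofReal
      ((intervalIntegrable_iff_integrableOn_Ioc_of_le hT0).1 hvII)
      (ae_of_all _ fun t => mul_nonneg hl1.le (hvr t).1)
  have h3 : (∫⁻ t in Ioc (0:ℝ) T, ENNReal.ofReal (l1 * u t)) ≤ Cost l1 0 u i := by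
    have : Cost l1 0 u i = ∫⁻ t in Ioi (0:ℝ), ENNReal.ofReal (l1 * u t) := by
      unfold Cost
      congr 1
      funext t
      rw [zero_mul, add_zero]
    rw [this]
    exact lintegral_mono_set Ioc_subset_Ioi_self
  have h4 : Cost l1 0 w iw = ∫⁻ t in Ioc (0:ℝ) T, ENNReal.ofReal (l1 * v t) := by
    unfold Cost
    have e1 : (∫⁻ t in Ioi (0:ℝ), ENNReal.ofReal (l1 * w t + 0 * iw t))
        = ∫⁻ t in Ioi (0:ℝ), ENNReal.ofReal (l1 * w t) := by
      congr 1
      funext t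
      rw [zero_mul, add_zero]
    rw [e1, ← Ioc_union_Ioi_eq_Ioi hT0,
      lintegral_union measurableSet_Ioi (Ioc_disjoint_Ioi le_rfl)]
    have eA : (∫⁻ t in Ioc (0:ℝ) T, ENNReal.ofReal (l1 * w t))
        = ∫⁻ t in Ioc (0:ℝ) T, ENNReal.ofReal (l1 * v t) := by
      apply setLIntegral_congr_fun measurableSet_Ioc
      intro t ht
      simp only [hw_def, if_pos ht.2]
    have eB : (∫⁻ t in Ioi T, ENNReal.ofReal (l1 * w t)) = 0 := by
      have : (∫⁻ t in Ioi T, ENNReal.ofReal (l1 * w t)) = ∫⁻ _ in Ioi T, 0 := by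
        apply setLIntegral_congr_fun measurableSet_Ioi
        intro t ht
        simp only [hw_def, if_neg (not_le.2 (mem_Ioi.1 ht))]
        simp
      rw [this, lintegral_zero]
    rw [eA, eB, add_zero]
  have hchain : ENNReal.ofReal (∫ t in (0:ℝ)..T, l1 * u t)
      ≤ ENNReal.ofReal (∫ t in (0:ℝ)..T, l1 * v t) := by
    rw [h1, h2]
    calc (∫⁻ t in Ioc (0:ℝ) T, ENNReal.ofReal (l1 * u t))
        ≤ Cost l1 0 u i := h3
      _ ≤ Cost l1 0 w iw := hcost
      _ = ∫⁻ t in Ioc (0:ℝ) T, ENNReal.ofReal (l1 * v t) := h4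
  have hvnn : 0 ≤ ∫ t in (0:ℝ)..T, l1 * v t :=
    intervalIntegral.integral_nonneg hT0 fun t _ => mul_nonneg hl1.le (hvr t).1
  exact (ENNReal.ofReal_le_ofReal_iff hvnn).1 hchain
end
end

section
/- (Γ-liminf inequality.) Fix initial data i₀ ∈ (0,1), s₀ ∈ (0,1−i₀] and an increasing sequence T_n → ∞. Let (u_n) be controls such that i^{u_n}(t) ≤ i_M for all t, u_n = 0 a.e. on (T_n,∞), and u_n converges weakly* to u in L^∞(0,∞) (i.e. ∫₀^∞ u_n·g dt → ∫₀^∞ u·g dt for every g ∈ L¹(0,∞)). Then i^u(t) ≤ i_M for all t, and liminf_{n→∞} ∫₀^{T_n} (λ₁·u_n + λ₂·i^{u_n}) dt ≥ ∫₀^∞ (λ₁·u + λ₂·i^u) dt. -/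
open MeasureTheory Filter Set intervalIntegral
open scoped ENNReal

noncomputable section

lemma intInt_bdd {f : ℝ → ℝ} {a b C : ℝ} (hm : AEStronglyMeasurable f volume)
    (hb : ∀ x ∈ Set.uIoc a b, |f x| ≤ C) : IntervalIntegrable f volume a b := by
  rw [intervalIntegrable_iff]
  apply Measure.integrableOn_of_bounded (M := C)
  · rw [Set.uIoc]; exact measure_Ioc_lt_top.ne
  · exact hm
  · exact (ae_restrict_mem measurableSet_uIoc).mono fun x hx => by
      simpa [Real.norm_eq_abs] using hb x hx

lemma cont_bound {f : ℝ → ℝ} (hf : Continuous f) (a b : ℝ) :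
    ∃ C, 0 ≤ C ∧ ∀ x ∈ Set.uIcc a b, |f x| ≤ C := by
  obtain ⟨C, hC⟩ := (isCompact_uIcc (a := a) (b := b)).exists_bound_of_continuousOn hf.continuousOn
  exact ⟨C, le_trans (abs_nonneg _) (by simpa [Real.norm_eq_abs] using hC a left_mem_uIcc),
    fun x hx => by simpa [Real.norm_eq_abs] using hC x hx⟩

lemma ftc_cont {φ : ℝ → ℝ} (hφ : Continuous φ) (a t : ℝ) :
    HasDerivAt (fun x => ∫ τ in a..x, φ τ) (φ t) t :=
  intervalIntegral.integral_hasDerivAt_right (hφ.intervalIntegrable _ _)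
    hφ.stronglyMeasurable.stronglyMeasurableAtFilter hφ.continuousAt

lemma gronwall_integral_form {φ : ℝ → ℝ} {b C K : ℝ} (hK : 0 < K) (hC : 0 ≤ C)
    (hφ : Continuous φ) (hφ0 : ∀ t ∈ Set.Icc (0:ℝ) b, 0 ≤ φ t)
    (h : ∀ t ∈ Set.Icc (0:ℝ) b, φ t ≤ C + K * ∫ τ in (0:ℝ)..t, φ τ) :
    ∀ t ∈ Set.Icc (0:ℝ) b, φ t ≤ C * Real.exp (K * t) := by
  set F : ℝ → ℝ := fun x => ∫ τ in (0:ℝ)..x, φ τ with hF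
  have hF' : ∀ x, HasDerivAt F (φ x) x := fun x => ftc_cont hφ 0 x
  have hFc : Continuous F := by
    apply continuous_iff_continuousAt.2 fun x => (hF' x).continuousAt
  have key : ∀ t ∈ Set.Icc (0:ℝ) b, ‖F t‖ ≤ gronwallBound 0 K C (t - 0) := by
    apply norm_le_gronwallBound_of_norm_deriv_right_le hFc.continuousOn
      (fun x hx => (hF' x).hasDerivWithinAt)
    · simp [hF, intervalIntegral.integral_same]
    · intro x hx
      have hx' : x ∈ Set.Icc (0:ℝ) b := ⟨hx.1, le_of_lt hx.2⟩
      have h1 : φ x ≤ C + K * F x := h x hx'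
      have h2 : F x ≤ ‖F x‖ := le_abs_self _
      have h3 : ‖φ x‖ ≤ C + K * ‖F x‖ := by
        rw [Real.norm_eq_abs, abs_of_nonneg (hφ0 x hx')]
        nlinarith
      linarith [h3]
  intro t ht
  have h4 := key t ht
  rw [gronwallBound_of_K_ne_0 (ne_of_gt hK)] at h4
  have h5 : F t ≤ C / K * (Real.exp (K * (t - 0)) - 1) := by
    calc F t ≤ ‖F t‖ := le_abs_self _
    _ ≤ _ := by simpa using h4
  calc φ t ≤ C + K * F t := h t ht
  _ ≤ C + K * (C / K * (Real.exp (K * (t-0)) - 1)) := by nlinarith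
  _ = C * Real.exp (K * t) := by field_simp; ring
lemma gronwall_zero_rev {φ : ℝ → ℝ} {b K : ℝ} (hK : 0 < K) (hb : 0 ≤ b) (hφ : Continuous φ)
    (hφ0 : ∀ t ∈ Set.Icc (0:ℝ) b, 0 ≤ φ t)
    (h : ∀ t ∈ Set.Icc (0:ℝ) b, φ t ≤ K * ∫ τ in t..b, φ τ) :
    ∀ t ∈ Set.Icc (0:ℝ) b, φ t = 0 := by
  set ψ : ℝ → ℝ := fun r => φ (b - r) with hψ
  have hψc : Continuous ψ := hφ.comp (continuous_const.sub continuous_id)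
  have hmem : ∀ r ∈ Set.Icc (0:ℝ) b, b - r ∈ Set.Icc (0:ℝ) b := fun r hr =>
    ⟨by linarith [hr.2], by linarith [hr.1]⟩
  have key : ∀ r ∈ Set.Icc (0:ℝ) b, ψ r ≤ 0 + K * ∫ τ in (0:ℝ)..r, ψ τ := by
    intro r hr
    have hsub : (∫ τ in (0:ℝ)..r, φ (b - τ)) = ∫ τ in b - r..b, φ τ := by
      simpa using intervalIntegral.integral_comp_sub_left (a := (0:ℝ)) (b := r) φ b
    rw [show (∫ τ in (0:ℝ)..r, ψ τ) = ∫ τ in (0:ℝ)..r, φ (b - τ) from rfl, hsub, zero_add]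
    exact h (b - r) (hmem r hr)
  have hz : ∀ r ∈ Set.Icc (0:ℝ) b, ψ r ≤ 0 * Real.exp (K * r) :=
    gronwall_integral_form hK le_rfl hψc (fun r hr => hφ0 _ (hmem r hr)) key
  intro t ht
  have h1 := hz (b - t) (hmem t ht)
  have h2 : ψ (b - t) = φ t := by simp [hψ]
  have := hφ0 t ht
  simp only [zero_mul] at h1
  rw [h2] at h1
  linarith

lemma X_intInt {β umax : ℝ} {u s i : ℝ → ℝ} (hu : IsControl umax u)
    (hs : Continuous s) (hi : Continuous i) (a b : ℝ) :
    IntervalIntegrable (fun τ => (β - u τ) * s τ * i τ) volume a b := by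
  obtain ⟨Cs, hCs0, hCs⟩ := cont_bound hs a b
  obtain ⟨Ci, hCi0, hCi⟩ := cont_bound hi a b
  apply intInt_bdd (C := (|β| + umax) * Cs * Ci)
  · exact (((measurable_const.sub hu.1).mul hs.measurable).mul
      hi.measurable).aestronglyMeasurable
  · intro x hx
    have hx' : x ∈ Set.uIcc a b := Set.uIoc_subset_uIcc hx
    have hux := hu.2 x
    have humax0 : (0:ℝ) ≤ umax := le_trans hux.1 hux.2
    have h1 : |β - u x| ≤ |β| + umax := by
      have h2 := le_abs_self β; have h3 := neg_abs_le β
      rw [abs_le]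
      exact ⟨by linarith [hux.2], by linarith [hux.1]⟩
    have hb0 : (0:ℝ) ≤ |β| + umax := by positivity
    rw [abs_mul, abs_mul]
    exact mul_le_mul (mul_le_mul h1 (hCs x hx') (abs_nonneg _) hb0)
      (hCi x hx') (abs_nonneg _) (by positivity)

lemma Y_intInt {β γ umax : ℝ} {u s i : ℝ → ℝ} (hu : IsControl umax u)
    (hs : Continuous s) (hi : Continuous i) (a b : ℝ) :
    IntervalIntegrable (fun τ => (β - u τ) * s τ * i τ - γ * i τ) volume a b :=
  (X_intInt hu hs hi a b).sub ((continuous_const.mul hi).intervalIntegrable a b)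

lemma Xneg_intInt {β umax : ℝ} {u s i : ℝ → ℝ} (hu : IsControl umax u)
    (hs : Continuous s) (hi : Continuous i) (a b : ℝ) :
    IntervalIntegrable (fun τ => -((β - u τ) * s τ * i τ)) volume a b := by
  exact (X_intInt (β := β) hu hs hi a b).neg

lemma Yneg_intInt {β γ umax : ℝ} {u s i : ℝ → ℝ} (hu : IsControl umax u)
    (hs : Continuous s) (hi : Continuous i) (a b : ℝ) :
    IntervalIntegrable (fun τ => -((β - u τ) * s τ * i τ - γ * i τ)) volume a b := by
  exact (Y_intInt (β := β) (γ := γ) hu hs hi a b).neg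

lemma sir_bounds {β γ umax : ℝ} {u s i : ℝ → ℝ} {s₀ i₀ : ℝ}
    (hγ : 0 < γ) (humaxβ : umax < β)
    (hu : IsControl umax u) (hsol : SIRSol β γ u s i s₀ i₀)
    (hs₀ : 0 < s₀) (hi₀ : 0 < i₀) (hsum : s₀ + i₀ ≤ 1) :
    ∀ t, 0 ≤ t → 0 < s t ∧ 0 < i t ∧ s t ≤ s₀ ∧ s t + i t ≤ s₀ + i₀ := by
  obtain ⟨hsc, hic, hseq, hieq⟩ := hsol
  have humax0 : (0:ℝ) ≤ umax := le_trans (hu.2 0).1 (hu.2 0).2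
  have hβ : 0 < β := lt_of_le_of_lt humax0 humaxβ
  have hs0 : s 0 = s₀ := by simpa using hseq 0 le_rfl
  have hi0 : i 0 = i₀ := by simpa using hieq 0 le_rfl
  -- bounds from nonnegativity
  have bounds : ∀ T, 0 ≤ T → (∀ τ ∈ Set.Icc (0:ℝ) T, 0 ≤ s τ ∧ 0 ≤ i τ) →
      ∀ τ ∈ Set.Icc (0:ℝ) T, s τ ≤ s₀ ∧ s τ + i τ ≤ s₀ + i₀ := by
    intro T hT hnn τ hτ
    have hτsub : Set.Icc (0:ℝ) τ ⊆ Set.Icc 0 T := Set.Icc_subset_Icc le_rfl hτ.2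
    have hXnn : ∀ x ∈ Set.Icc (0:ℝ) τ, 0 ≤ (β - u x) * s x * i x := by
      intro x hx
      have h1 := hnn x (hτsub hx)
      have h2 := (hu.2 x).2
      have h3 : 0 ≤ β - u x := by linarith
      exact mul_nonneg (mul_nonneg h3 h1.1) h1.2
    have hXint := X_intInt (β := β) hu hsc hic 0 τ
    have hXnn' : 0 ≤ ∫ x in (0:ℝ)..τ, (β - u x) * s x * i x :=
      intervalIntegral.integral_nonneg hτ.1 hXnn
    have hst : s τ = s₀ + -∫ x in (0:ℝ)..τ, (β - u x) * s x * i x := by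
      rw [← intervalIntegral.integral_neg]; exact hseq τ hτ.1
    constructor
    · linarith [hst]
    · have h2 := hieq τ hτ.1
      have h3 : (∫ x in (0:ℝ)..τ, -((β - u x) * s x * i x)) +
          ∫ x in (0:ℝ)..τ, ((β - u x) * s x * i x - γ * i x)
          = -(γ * ∫ x in (0:ℝ)..τ, i x) := by
        rw [← intervalIntegral.integral_add (Xneg_intInt (β := β) hu hsc hic 0 τ) (Y_intInt hu hsc hic 0 τ)]
        have : (fun x => -((β - u x) * s x * i x) +
            ((β - u x) * s x * i x - γ * i x)) = fun x => -(γ * i x) :=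
          funext fun x => by ring
        rw [this, intervalIntegral.integral_neg, intervalIntegral.integral_const_mul]
      have h4 : 0 ≤ ∫ x in (0:ℝ)..τ, i x :=
        intervalIntegral.integral_nonneg hτ.1 (fun x hx => (hnn x (hτsub hx)).2)
      have h5 := hseq τ hτ.1
      have h6 : s τ + i τ = s₀ + i₀ + -(γ * ∫ x in (0:ℝ)..τ, i x) := by
        rw [h5, h2, ← h3]; ring
      nlinarith
  -- positivity for all times
  have hposAll : ∀ τ, 0 ≤ τ → 0 < s τ ∧ 0 < i τ := by
    set S := {t : ℝ | 0 ≤ t ∧ (s t ≤ 0 ∨ i t ≤ 0)} with hSdef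
    have hScl : IsClosed S := by
      have hEq : S = Set.Ici 0 ∩ (s ⁻¹' Set.Iic 0 ∪ i ⁻¹' Set.Iic 0) := by
        ext t; simp [hSdef, Set.mem_Ici, Set.mem_Iic]
      rw [hEq]
      exact isClosed_Ici.inter ((isClosed_Iic.preimage hsc).union (isClosed_Iic.preimage hic))
    by_cases hS : S.Nonempty
    · exfalso
      have hbdd : BddBelow S := ⟨0, fun x hx => hx.1⟩
      set t₁ := sInf S with ht₁def
      have htS : t₁ ∈ S := hScl.csInf_mem hS hbdd
      have ht₁0 : 0 ≤ t₁ := htS.1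
      have hpos_lt : ∀ τ, 0 ≤ τ → τ < t₁ → 0 < s τ ∧ 0 < i τ := by
        intro τ h0 hlt
        by_contra hc
        rcases not_and_or.1 hc with h | h
        · exact absurd (csInf_le hbdd ⟨h0, Or.inl (not_lt.1 h)⟩) (not_le.2 hlt)
        · exact absurd (csInf_le hbdd ⟨h0, Or.inr (not_lt.1 h)⟩) (not_le.2 hlt)
      have h0t₁ : 0 < t₁ := by
        rcases eq_or_lt_of_le ht₁0 with h | h
        · exfalso
          rcases htS.2 with h2 | h2
          · rw [← h] at h2; rw [hs0] at h2; linarith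
          · rw [← h] at h2; rw [hi0] at h2; linarith
        · exact h
      have hnn' : ∀ τ ∈ Set.Icc (0:ℝ) t₁, 0 ≤ s τ ∧ 0 ≤ i τ := by
        have hcl : IsClosed {τ : ℝ | 0 ≤ s τ ∧ 0 ≤ i τ} := by
          have : {τ : ℝ | 0 ≤ s τ ∧ 0 ≤ i τ} = s ⁻¹' Set.Ici 0 ∩ i ⁻¹' Set.Ici 0 := rfl
          rw [this]
          exact (isClosed_Ici.preimage hsc).inter (isClosed_Ici.preimage hic)
        have hsub : Set.Icc (0:ℝ) t₁ ⊆ {τ : ℝ | 0 ≤ s τ ∧ 0 ≤ i τ} := by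
          rw [← closure_Ico h0t₁.ne]
          apply hcl.closure_subset_iff.2
          intro τ hτ
          exact ⟨(hpos_lt τ hτ.1 hτ.2).1.le, (hpos_lt τ hτ.1 hτ.2).2.le⟩
        exact fun τ hτ => hsub hτ
      have hbnd := bounds t₁ ht₁0 hnn'
      have hi1 : ∀ τ ∈ Set.Icc (0:ℝ) t₁, i τ ≤ 1 := by
        intro τ hτ
        have := (hbnd τ hτ).2
        have := (hnn' τ hτ).1
        linarith
      have hs1 : ∀ τ ∈ Set.Icc (0:ℝ) t₁, s τ ≤ 1 := by
        intro τ hτ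
        have := (hbnd τ hτ).1
        linarith
      rcases htS.2 with hcase | hcase
      · -- s t₁ = 0
        have hst₁ : s t₁ = 0 := le_antisymm hcase (hnn' t₁ ⟨ht₁0, le_rfl⟩).1
        have key : ∀ t ∈ Set.Icc (0:ℝ) t₁, s t ≤ β * ∫ τ in t..t₁, s τ := by
          intro t ht
          have e1 := hseq t₁ ht₁0
          have e2 := hseq t ht.1
          have e3 := intervalIntegral.integral_add_adjacent_intervals
            (Xneg_intInt (β := β) hu hsc hic 0 t)
            (Xneg_intInt (β := β) hu hsc hic t t₁)
          have e4 : s t = ∫ τ in t..t₁, (β - u τ) * s τ * i τ := by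
            have : s t₁ = s t + ∫ τ in t..t₁, -((β - u τ) * s τ * i τ) := by
              rw [e1, e2, ← e3]; ring
            rw [intervalIntegral.integral_neg] at this
            rw [hst₁] at this
            linarith
          rw [e4, ← intervalIntegral.integral_const_mul]
          apply intervalIntegral.integral_mono_on ht.2
            (X_intInt (β := β) hu hsc hic t t₁)
            ((continuous_const.mul hsc).intervalIntegrable t t₁)
          intro x hx
          have hx' : x ∈ Set.Icc (0:ℝ) t₁ := ⟨le_trans ht.1 hx.1, hx.2⟩
          have h1 := hnn' x hx'
          have h2 := hi1 x hx'
          have h3 := (hu.2 x).1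
          have h4 := (hu.2 x).2
          have hβu : 0 ≤ β - u x := by linarith
          have q1 := mul_le_of_le_one_right (mul_nonneg hβu h1.1) h2
          have q2 := mul_le_mul_of_nonneg_right (by linarith : β - u x ≤ β) h1.1
          exact q1.trans q2
        have hz := gronwall_zero_rev hβ ht₁0 hsc (fun τ hτ => (hnn' τ hτ).1) key
        have := hz 0 ⟨le_rfl, ht₁0⟩
        rw [hs0] at this; linarith
      · -- i t₁ = 0
        have hit₁ : i t₁ = 0 := le_antisymm hcase (hnn' t₁ ⟨ht₁0, le_rfl⟩).2
        have key : ∀ t ∈ Set.Icc (0:ℝ) t₁, i t ≤ (β + γ) * ∫ τ in t..t₁, i τ := by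
          intro t ht
          have e1 := hieq t₁ ht₁0
          have e2 := hieq t ht.1
          have e3 := intervalIntegral.integral_add_adjacent_intervals
            (Y_intInt (β := β) (γ := γ) hu hsc hic 0 t) (Y_intInt (β := β) (γ := γ) hu hsc hic t t₁)
          have e4 : i t = ∫ τ in t..t₁, -((β - u τ) * s τ * i τ - γ * i τ) := by
            rw [intervalIntegral.integral_neg]
            have : i t₁ = i t + ∫ τ in t..t₁, ((β - u τ) * s τ * i τ - γ * i τ) := by
              rw [e1, e2, ← e3]; ring
            rw [hit₁] at this
            linarith
          rw [e4, ← intervalIntegral.integral_const_mul]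
          apply intervalIntegral.integral_mono_on ht.2
            (Yneg_intInt (β := β) (γ := γ) hu hsc hic t t₁)
            ((continuous_const.mul hic).intervalIntegrable t t₁)
          intro x hx
          have hx' : x ∈ Set.Icc (0:ℝ) t₁ := ⟨le_trans ht.1 hx.1, hx.2⟩
          have h1 := hnn' x hx'
          have h2 := hs1 x hx'
          have h3 := (hu.2 x).1
          have h4 := (hu.2 x).2
          have hβu : 0 ≤ β - u x := by linarith
          have hX0 : 0 ≤ (β - u x) * s x * i x := mul_nonneg (mul_nonneg hβu h1.1) h1.2
          have q1 := mul_le_mul_of_nonneg_right (by linarith : γ ≤ β + γ) h1.2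
          show _ ≤ (β + γ) * i x
          linarith
        have hz := gronwall_zero_rev (by positivity : (0:ℝ) < β + γ) ht₁0 hic
          (fun τ hτ => (hnn' τ hτ).2) key
        have := hz 0 ⟨le_rfl, ht₁0⟩
        rw [hi0] at this; linarith
    · intro τ hτ
      rw [Set.not_nonempty_iff_eq_empty] at hS
      have h1 : τ ∉ S := by rw [hS]; exact Set.notMem_empty τ
      constructor
      · by_contra h; exact h1 ⟨hτ, Or.inl (not_lt.1 h)⟩
      · by_contra h; exact h1 ⟨hτ, Or.inr (not_lt.1 h)⟩
  intro t ht
  have hnn : ∀ τ ∈ Set.Icc (0:ℝ) t, 0 ≤ s τ ∧ 0 ≤ i τ := fun τ hτ =>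
    ⟨(hposAll τ hτ.1).1.le, (hposAll τ hτ.1).2.le⟩
  have hb := bounds t ht hnn t ⟨ht, le_rfl⟩
  exact ⟨(hposAll t ht).1, (hposAll t ht).2, hb.1, hb.2⟩

lemma U_intInt {umax : ℝ} {w f : ℝ → ℝ} (hw : IsControl umax w)
    (hf : Continuous f) (a b : ℝ) :
    IntervalIntegrable (fun τ => w τ * f τ) volume a b := by
  obtain ⟨Cf, hCf0, hCf⟩ := cont_bound hf a b
  apply intInt_bdd (C := umax * Cf)
  · exact (hw.1.mul hf.measurable).aestronglyMeasurable
  · intro x hx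
    have h1 := hw.2 x
    have h3 : |w x| ≤ umax := abs_le.2 ⟨by linarith [h1.1, le_trans h1.1 h1.2], h1.2⟩
    rw [abs_mul]
    exact mul_le_mul h3 (hCf x (Set.uIoc_subset_uIcc hx)) (abs_nonneg _)
      (le_trans (abs_nonneg _) h3)

lemma Z_intInt {umax : ℝ} {w v f : ℝ → ℝ} (hw : IsControl umax w) (hv : IsControl umax v)
    (hf : Continuous f) (a b : ℝ) :
    IntervalIntegrable (fun τ => (w τ - v τ) * f τ) volume a b := by
  obtain ⟨Cf, hCf0, hCf⟩ := cont_bound hf a b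
  apply intInt_bdd (C := umax * Cf)
  · exact ((hw.1.sub hv.1).mul hf.measurable).aestronglyMeasurable
  · intro x hx
    have h1 := hw.2 x; have h2 := hv.2 x
    have h3 : |w x - v x| ≤ umax := abs_le.2 ⟨by linarith [h1.1, h2.2], by linarith [h1.2, h2.1]⟩
    rw [abs_mul]
    exact mul_le_mul h3 (hCf x (Set.uIoc_subset_uIcc hx)) (abs_nonneg _)
      (le_trans (abs_nonneg _) h3)

lemma V_intInt {β umax : ℝ} {w g : ℝ → ℝ} (hw : IsControl umax w) (hg : Continuous g) (a b : ℝ) :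
    IntervalIntegrable (fun τ => (β - w τ) * g τ) volume a b := by
  obtain ⟨Cg, hCg0, hCg⟩ := cont_bound hg a b
  apply intInt_bdd (C := (|β| + umax) * Cg)
  · exact ((measurable_const.sub hw.1).mul hg.measurable).aestronglyMeasurable
  · intro x hx
    have hux := hw.2 x
    have humax0 : (0:ℝ) ≤ umax := le_trans hux.1 hux.2
    have h1 : |β - w x| ≤ |β| + umax := by
      have h2 := le_abs_self β; have h3 := neg_abs_le β
      rw [abs_le]; exact ⟨by linarith [hux.2], by linarith [hux.1]⟩
    rw [abs_mul]
    exact mul_le_mul h1 (hCg x (Set.uIoc_subset_uIcc hx)) (abs_nonneg _) (by positivity)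

lemma sir_stability {β γ umax : ℝ} {un : ℕ → ℝ → ℝ} {sn iN : ℕ → ℝ → ℝ}
    {u s i : ℝ → ℝ} {s₀ i₀ : ℝ}
    (hγ : 0 < γ) (humax : 0 < umax) (humaxβ : umax < β)
    (hun : ∀ n, IsControl umax (un n)) (hu : IsControl umax u)
    (hsoln : ∀ n, SIRSol β γ (un n) (sn n) (iN n) s₀ i₀)
    (hsol : SIRSol β γ u s i s₀ i₀)
    (hs₀ : 0 < s₀) (hi₀ : 0 < i₀) (hsum : s₀ + i₀ ≤ 1)
    (hweak : WeakStarLim un u) :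
    ∀ t, 0 ≤ t → Tendsto (fun n => iN n t) atTop (nhds (i t)) := by
  have hβ : 0 < β := lt_trans humax humaxβ
  have hsc : Continuous s := hsol.1
  have hic : Continuous i := hsol.2.1
  have hseq := hsol.2.2.1
  have hieq := hsol.2.2.2
  have hscn : ∀ n, Continuous (sn n) := fun n => (hsoln n).1
  have hicn : ∀ n, Continuous (iN n) := fun n => (hsoln n).2.1
  have hseqn := fun n => (hsoln n).2.2.1
  have hieqn := fun n => (hsoln n).2.2.2
  have P := sir_bounds hγ humaxβ hu hsol hs₀ hi₀ hsum
  have Pn := fun n => sir_bounds hγ humaxβ (hun n) (hsoln n) hs₀ hi₀ hsum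
  -- uniform bounds
  have hbs : ∀ τ, 0 ≤ τ → |s τ| ≤ 1 ∧ |i τ| ≤ 1 := by
    intro τ hτ
    obtain ⟨p1, p2, p3, p4⟩ := P τ hτ
    exact ⟨abs_le.2 ⟨by linarith, by linarith⟩, abs_le.2 ⟨by linarith, by linarith⟩⟩
  have hbsn : ∀ n τ, 0 ≤ τ → |sn n τ| ≤ 1 ∧ |iN n τ| ≤ 1 := by
    intro n τ hτ
    obtain ⟨p1, p2, p3, p4⟩ := Pn n τ hτ
    exact ⟨abs_le.2 ⟨by linarith, by linarith⟩, abs_le.2 ⟨by linarith, by linarith⟩⟩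
  -- pointwise convergence of the error integrals
  have hEptw : ∀ r, 0 ≤ r →
      Tendsto (fun n => ∫ τ in (0:ℝ)..r, (un n τ - u τ) * (s τ * i τ)) atTop (nhds 0) := by
    intro r hr
    set g : ℝ → ℝ := (Set.Ioc (0:ℝ) r).indicator (fun τ => s τ * i τ) with hg
    have hgint : IntegrableOn g (Set.Ioi (0:ℝ)) volume := by
      have : Integrable g volume := by
        rw [hg, integrable_indicator_iff measurableSet_Ioc]
        exact (hsc.mul hic).integrableOn_Ioc
      exact this.integrableOn
    have key : ∀ w : ℝ → ℝ, Measurable w →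
        (∫ x in Set.Ioi (0:ℝ), w x * g x) = ∫ τ in (0:ℝ)..r, w τ * (s τ * i τ) := by
      intro w hw
      have h1 : (fun x => w x * g x) =
          (Set.Ioc (0:ℝ) r).indicator (fun x => w x * (s x * i x)) := by
        funext x
        by_cases hx : x ∈ Set.Ioc (0:ℝ) r
        · simp [hg, Set.indicator_of_mem hx]
        · simp [hg, Set.indicator_of_notMem hx]
      rw [h1, MeasureTheory.integral_indicator measurableSet_Ioc,
        Measure.restrict_restrict measurableSet_Ioc,
        Set.inter_eq_self_of_subset_left Set.Ioc_subset_Ioi_self,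
        intervalIntegral.integral_of_le hr]
    have h2 := hweak g hgint
    rw [key u hu.1] at h2
    have h3 : (fun n => ∫ x in Set.Ioi (0:ℝ), un n x * g x)
        = fun n => ∫ τ in (0:ℝ)..r, un n τ * (s τ * i τ) :=
      funext fun n => key (un n) (hun n).1
    rw [h3] at h2
    have h4 : (fun n => ∫ τ in (0:ℝ)..r, (un n τ - u τ) * (s τ * i τ))
        = fun n => (∫ τ in (0:ℝ)..r, un n τ * (s τ * i τ)) -
            ∫ τ in (0:ℝ)..r, u τ * (s τ * i τ) := by
      funext n
      rw [← intervalIntegral.integral_sub (U_intInt (f := fun τ => s τ * i τ) (hun n) (hsc.mul hic) 0 r)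
        (U_intInt (f := fun τ => s τ * i τ) hu (hsc.mul hic) 0 r)]
      exact intervalIntegral.integral_congr fun x _ => by ring
    rw [h4]
    have h5 := h2.sub (tendsto_const_nhds
      (x := ∫ τ in (0:ℝ)..r, u τ * (s τ * i τ)) (f := atTop))
    simpa using h5
  -- Lipschitz bound
  have hELip : ∀ n r₁ r₂, 0 ≤ r₁ → 0 ≤ r₂ →
      |(∫ τ in (0:ℝ)..r₁, (un n τ - u τ) * (s τ * i τ)) -
        ∫ τ in (0:ℝ)..r₂, (un n τ - u τ) * (s τ * i τ)| ≤ umax * |r₁ - r₂| := by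
    intro n r₁ r₂ h1 h2
    rw [intervalIntegral.integral_interval_sub_left
      (Z_intInt (f := fun τ => s τ * i τ) (hun n) hu (hsc.mul hic) 0 r₁)
        (Z_intInt (f := fun τ => s τ * i τ) (hun n) hu (hsc.mul hic) 0 r₂)]
    have := intervalIntegral.norm_integral_le_of_norm_le_const
      (C := umax) (a := r₂) (b := r₁) (f := fun τ => (un n τ - u τ) * (s τ * i τ)) ?_
    · simpa [Real.norm_eq_abs, abs_sub_comm r₁ r₂] using this
    · intro x hx
      have hx0 : 0 ≤ x := by
        rcases Set.mem_uIoc.1 hx with h | h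
        · exact le_trans h2 h.1.le
        · exact le_trans h1 h.1.le
      have hw1 := (hun n).2 x; have hw2 := hu.2 x
      have h3 : |un n x - u x| ≤ umax :=
        abs_le.2 ⟨by linarith [hw1.1, hw2.2], by linarith [hw1.2, hw2.1]⟩
      have h4 : |s x * i x| ≤ 1 := by
        rw [abs_mul]
        exact mul_le_one₀ ((hbs x hx0).1) (abs_nonneg _) ((hbs x hx0).2)
      rw [Real.norm_eq_abs, abs_mul]
      calc |un n x - u x| * |s x * i x| ≤ umax * 1 :=
        mul_le_mul h3 h4 (abs_nonneg _) humax.le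
      _ = umax := mul_one _
  -- uniform convergence on [0, T]
  have hEunif : ∀ T, 0 ≤ T → ∀ ε, 0 < ε → ∀ᶠ n in atTop, ∀ r ∈ Set.Icc (0:ℝ) T,
      |∫ τ in (0:ℝ)..r, (un n τ - u τ) * (s τ * i τ)| ≤ ε := by
    intro T hT ε hε
    rcases eq_or_lt_of_le hT with hT0 | hT0
    · apply Filter.Eventually.of_forall
      intro n r hr
      have : r = 0 := le_antisymm (hT0 ▸ hr.2) hr.1
      rw [this]
      simp [intervalIntegral.integral_same, hε.le]
    · obtain ⟨N, hN⟩ := exists_nat_gt (2 * umax * T / ε)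
      have hN0 : (0:ℝ) < N := lt_of_le_of_lt (by positivity) hN
      have hev : ∀ᶠ n in atTop, ∀ k : Fin (N + 1),
          |∫ τ in (0:ℝ)..((k:ℕ) * T / N), (un n τ - u τ) * (s τ * i τ)| ≤ ε / 2 := by
        rw [eventually_all]
        intro k
        have hp := hEptw ((k:ℕ) * T / N)
          (div_nonneg (mul_nonneg (Nat.cast_nonneg _) hT) hN0.le)
        have hb : Set.Icc (-(ε/2)) (ε/2) ∈ nhds (0:ℝ) :=
          Icc_mem_nhds (by linarith) (by linarith)
        filter_upwards [hp hb] with n hn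
        exact abs_le.2 ⟨hn.1, hn.2⟩
      filter_upwards [hev] with n hn
      intro r hr
      set k : ℕ := ⌊r * N / T⌋₊ with hk
      have hk1 : (k:ℝ) ≤ r * N / T := Nat.floor_le (div_nonneg (mul_nonneg hr.1 hN0.le) hT)
      have hk2 : r * N / T < k + 1 := Nat.lt_floor_add_one _
      have hkN : k ≤ N := by
        have h6 : r * N / T ≤ N := by
          rw [div_le_iff₀ hT0]
          nlinarith [hr.2]
        calc k = ⌊r * N / T⌋₊ := hk
        _ ≤ ⌊(N:ℝ)⌋₊ := Nat.floor_mono h6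
        _ = N := Nat.floor_natCast N
      have e1 : (k:ℝ) * T ≤ r * N := by
        have := mul_le_mul_of_nonneg_right hk1 hT
        rwa [div_mul_cancel₀ _ (ne_of_gt hT0)] at this
      have e2 : r * N < ((k:ℝ) + 1) * T := by
        have := mul_lt_mul_of_pos_right hk2 hT0
        rwa [div_mul_cancel₀ _ (ne_of_gt hT0)] at this
      have hp1 : (k:ℝ) * T / N ≤ r := by rw [div_le_iff₀ hN0]; linarith
      have hp2 : r - (k:ℝ) * T / N ≤ T / N := by
        rw [sub_le_iff_le_add, ← add_div, le_div_iff₀ hN0]; nlinarith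
      have hk' : |∫ τ in (0:ℝ)..((k:ℝ) * T / N), (un n τ - u τ) * (s τ * i τ)| ≤ ε / 2 :=
        hn ⟨k, Nat.lt_succ_of_le hkN⟩
      have hlip := hELip n r ((k:ℝ) * T / N) hr.1 (div_nonneg (mul_nonneg (Nat.cast_nonneg _) hT) hN0.le)
      have habs : |r - (k:ℝ) * T / N| = r - (k:ℝ) * T / N := abs_of_nonneg (by linarith)
      have hstep : umax * |r - (k:ℝ) * T / N| ≤ umax * (T / N) := by
        rw [habs]
        exact mul_le_mul_of_nonneg_left hp2 humax.le
      have hTN : umax * (T / N) ≤ ε / 2 := by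
        rw [div_lt_iff₀ hε] at hN
        rw [← mul_div_assoc, div_le_iff₀ hN0]
        nlinarith
      have htri : |∫ τ in (0:ℝ)..r, (un n τ - u τ) * (s τ * i τ)| ≤
          |(∫ τ in (0:ℝ)..r, (un n τ - u τ) * (s τ * i τ)) -
            ∫ τ in (0:ℝ)..((k:ℝ) * T / N), (un n τ - u τ) * (s τ * i τ)| +
          |∫ τ in (0:ℝ)..((k:ℝ) * T / N), (un n τ - u τ) * (s τ * i τ)| := by
        simpa using abs_add_le
          ((∫ τ in (0:ℝ)..r, (un n τ - u τ) * (s τ * i τ)) -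
            ∫ τ in (0:ℝ)..((k:ℝ) * T / N), (un n τ - u τ) * (s τ * i τ))
          (∫ τ in (0:ℝ)..((k:ℝ) * T / N), (un n τ - u τ) * (s τ * i τ))
      linarith
  -- now the comparison argument
  intro t ht
  rw [Metric.tendsto_atTop]
  intro ε hε
  set K : ℝ := 2 * β + γ with hK
  have hKpos : 0 < K := by positivity
  set ε' : ℝ := ε / (4 * Real.exp (K * t)) with hε'
  have hexp : 0 < Real.exp (K * t) := Real.exp_pos _
  have hε'pos : 0 < ε' := by positivity
  obtain ⟨N₀, hN₀⟩ := eventually_atTop.1 (hEunif t ht ε' hε'pos)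
  refine ⟨N₀, fun n hn => ?_⟩
  have hE := hN₀ n hn
  set Δ : ℝ → ℝ := fun τ => |sn n τ - s τ| + |iN n τ - i τ| with hΔ
  have hΔc : Continuous Δ := (((hscn n).sub hsc).abs).add (((hicn n).sub hic).abs)
  have hΔnn : ∀ τ, 0 ≤ Δ τ := fun τ => add_nonneg (abs_nonneg _) (abs_nonneg _)
  have key : ∀ r ∈ Set.Icc (0:ℝ) t, Δ r ≤ 2 * ε' + K * ∫ τ in (0:ℝ)..r, Δ τ := by
    intro r hr
    have hr0 : 0 ≤ r := hr.1
    have hgc : Continuous (fun τ => sn n τ * iN n τ - s τ * i τ) :=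
      ((hscn n).mul (hicn n)).sub (hsc.mul hic)
    have hApos : IntervalIntegrable
        (fun τ => (β - un n τ) * (sn n τ * iN n τ - s τ * i τ)) volume 0 r :=
      V_intInt (hun n) hgc 0 r
    have hAneg : IntervalIntegrable
        (fun τ => -((β - un n τ) * (sn n τ * iN n τ - s τ * i τ))) volume 0 r := hApos.neg
    have hZ : IntervalIntegrable (fun τ => (un n τ - u τ) * (s τ * i τ)) volume 0 r :=
      Z_intInt (hun n) hu (hsc.mul hic) 0 r
    have hZneg : IntervalIntegrable (fun τ => -((un n τ - u τ) * (s τ * i τ))) volume 0 r :=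
      hZ.neg
    have hG : IntervalIntegrable (fun τ => -(γ * (iN n τ - i τ))) volume 0 r :=
      Continuous.intervalIntegrable (by fun_prop) 0 r
    have hΔint : IntervalIntegrable Δ volume 0 r := hΔc.intervalIntegrable 0 r
    have hΔint0 : 0 ≤ ∫ τ in (0:ℝ)..r, Δ τ :=
      intervalIntegral.integral_nonneg hr0 (fun x _ => hΔnn x)
    have hAbd : ∀ x ∈ Set.Icc (0:ℝ) r,
        |(β - un n x) * (sn n x * iN n x - s x * i x)| ≤ β * Δ x := by
      intro x hx
      have hx0 : 0 ≤ x := hx.1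
      have hb1 := hbsn n x hx0
      have hb2 := hbs x hx0
      have hw := (hun n).2 x
      have hβu : |β - un n x| ≤ β := abs_le.2 ⟨by linarith [hw.2], by linarith [hw.1]⟩
      have hsplit : |sn n x * iN n x - s x * i x| ≤
          |sn n x| * |iN n x - i x| + |i x| * |sn n x - s x| := by
        have h8 : sn n x * iN n x - s x * i x
            = sn n x * (iN n x - i x) + i x * (sn n x - s x) := by ring
        rw [h8]
        refine (abs_add_le _ _).trans ?_
        rw [abs_mul, abs_mul]
      have h9 : |sn n x| * |iN n x - i x| + |i x| * |sn n x - s x| ≤ Δ x := by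
        have q1 := mul_le_mul_of_nonneg_right hb1.1 (abs_nonneg (iN n x - i x))
        have q2 := mul_le_mul_of_nonneg_right hb2.2 (abs_nonneg (sn n x - s x))
        simp only [hΔ, one_mul] at *
        linarith
      rw [abs_mul]
      exact mul_le_mul hβu (le_trans hsplit h9) (abs_nonneg _) hβ.le
    have ds : sn n r - s r
        = (∫ τ in (0:ℝ)..r, -((β - un n τ) * (sn n τ * iN n τ - s τ * i τ)))
          + ∫ τ in (0:ℝ)..r, (un n τ - u τ) * (s τ * i τ) := by
      have q0 : sn n r - s r = (∫ τ in (0:ℝ)..r, -((β - un n τ) * sn n τ * iN n τ))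
          - ∫ τ in (0:ℝ)..r, -((β - u τ) * s τ * i τ) := by
        rw [hseqn n r hr0, hseq r hr0]; ring
      have q1 : (∫ τ in (0:ℝ)..r, -((β - un n τ) * sn n τ * iN n τ))
          - ∫ τ in (0:ℝ)..r, -((β - u τ) * s τ * i τ)
          = ∫ τ in (0:ℝ)..r,
            (-((β - un n τ) * sn n τ * iN n τ) - -((β - u τ) * s τ * i τ)) :=
        (intervalIntegral.integral_sub (Xneg_intInt (hun n) (hscn n) (hicn n) 0 r)
          (Xneg_intInt hu hsc hic 0 r)).symm
      have q2 : (∫ τ in (0:ℝ)..r,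
            (-((β - un n τ) * sn n τ * iN n τ) - -((β - u τ) * s τ * i τ)))
          = ∫ τ in (0:ℝ)..r, (-((β - un n τ) * (sn n τ * iN n τ - s τ * i τ))
              + (un n τ - u τ) * (s τ * i τ)) :=
        intervalIntegral.integral_congr fun x _ => by ring
      have q3 : (∫ τ in (0:ℝ)..r, (-((β - un n τ) * (sn n τ * iN n τ - s τ * i τ))
              + (un n τ - u τ) * (s τ * i τ)))
          = (∫ τ in (0:ℝ)..r, -((β - un n τ) * (sn n τ * iN n τ - s τ * i τ)))
            + ∫ τ in (0:ℝ)..r, (un n τ - u τ) * (s τ * i τ) :=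
        intervalIntegral.integral_add hAneg hZ
      rw [q0, q1, q2, q3]
    have di : iN n r - i r
        = (∫ τ in (0:ℝ)..r, (β - un n τ) * (sn n τ * iN n τ - s τ * i τ))
          + ((∫ τ in (0:ℝ)..r, -((un n τ - u τ) * (s τ * i τ)))
            + ∫ τ in (0:ℝ)..r, -(γ * (iN n τ - i τ))) := by
      have q0 : iN n r - i r
          = (∫ τ in (0:ℝ)..r, ((β - un n τ) * sn n τ * iN n τ - γ * iN n τ))
            - ∫ τ in (0:ℝ)..r, ((β - u τ) * s τ * i τ - γ * i τ) := by
        rw [hieqn n r hr0, hieq r hr0]; ring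
      have q1 : (∫ τ in (0:ℝ)..r, ((β - un n τ) * sn n τ * iN n τ - γ * iN n τ))
            - ∫ τ in (0:ℝ)..r, ((β - u τ) * s τ * i τ - γ * i τ)
          = ∫ τ in (0:ℝ)..r, (((β - un n τ) * sn n τ * iN n τ - γ * iN n τ)
              - ((β - u τ) * s τ * i τ - γ * i τ)) :=
        (intervalIntegral.integral_sub
          (Y_intInt (β := β) (γ := γ) (hun n) (hscn n) (hicn n) 0 r)
          (Y_intInt (β := β) (γ := γ) hu hsc hic 0 r)).symm
      have q2 : (∫ τ in (0:ℝ)..r, (((β - un n τ) * sn n τ * iN n τ - γ * iN n τ)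
              - ((β - u τ) * s τ * i τ - γ * i τ)))
          = ∫ τ in (0:ℝ)..r, ((β - un n τ) * (sn n τ * iN n τ - s τ * i τ)
              + (-((un n τ - u τ) * (s τ * i τ)) + -(γ * (iN n τ - i τ)))) :=
        intervalIntegral.integral_congr fun x _ => by ring
      have q3 : (∫ τ in (0:ℝ)..r, ((β - un n τ) * (sn n τ * iN n τ - s τ * i τ)
              + (-((un n τ - u τ) * (s τ * i τ)) + -(γ * (iN n τ - i τ)))))
          = (∫ τ in (0:ℝ)..r, (β - un n τ) * (sn n τ * iN n τ - s τ * i τ))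
            + ∫ τ in (0:ℝ)..r, (-((un n τ - u τ) * (s τ * i τ)) + -(γ * (iN n τ - i τ))) :=
        intervalIntegral.integral_add hApos (hZneg.add hG)
      have q4 : (∫ τ in (0:ℝ)..r, (-((un n τ - u τ) * (s τ * i τ)) + -(γ * (iN n τ - i τ))))
          = (∫ τ in (0:ℝ)..r, -((un n τ - u τ) * (s τ * i τ)))
            + ∫ τ in (0:ℝ)..r, -(γ * (iN n τ - i τ)) :=
        intervalIntegral.integral_add hZneg hG
      rw [q0, q1, q2, q3, q4]
    have hE_r : |∫ τ in (0:ℝ)..r, (un n τ - u τ) * (s τ * i τ)| ≤ ε' := hE r ⟨hr0, hr.2⟩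
    have bApos : |∫ τ in (0:ℝ)..r, (β - un n τ) * (sn n τ * iN n τ - s τ * i τ)|
        ≤ β * ∫ τ in (0:ℝ)..r, Δ τ := by
      calc |∫ τ in (0:ℝ)..r, (β - un n τ) * (sn n τ * iN n τ - s τ * i τ)|
          ≤ ∫ τ in (0:ℝ)..r, |(β - un n τ) * (sn n τ * iN n τ - s τ * i τ)| :=
            intervalIntegral.abs_integral_le_integral_abs hr0
        _ ≤ ∫ τ in (0:ℝ)..r, β * Δ τ :=
            intervalIntegral.integral_mono_on hr0 hApos.abs
              ((continuous_const.mul hΔc).intervalIntegrable 0 r) hAbd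
        _ = β * ∫ τ in (0:ℝ)..r, Δ τ := intervalIntegral.integral_const_mul _ _
    have bAneg : |∫ τ in (0:ℝ)..r, -((β - un n τ) * (sn n τ * iN n τ - s τ * i τ))|
        ≤ β * ∫ τ in (0:ℝ)..r, Δ τ := by
      rw [intervalIntegral.integral_neg, abs_neg]
      exact bApos
    have bZneg : |∫ τ in (0:ℝ)..r, -((un n τ - u τ) * (s τ * i τ))| ≤ ε' := by
      rw [intervalIntegral.integral_neg, abs_neg]
      exact hE_r
    have bG : |∫ τ in (0:ℝ)..r, -(γ * (iN n τ - i τ))| ≤ γ * ∫ τ in (0:ℝ)..r, Δ τ := by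
      rw [intervalIntegral.integral_neg, abs_neg, intervalIntegral.integral_const_mul,
        abs_mul, abs_of_pos hγ]
      apply mul_le_mul_of_nonneg_left _ hγ.le
      calc |∫ τ in (0:ℝ)..r, (iN n τ - i τ)| ≤ ∫ τ in (0:ℝ)..r, |iN n τ - i τ| :=
          intervalIntegral.abs_integral_le_integral_abs hr0
        _ ≤ ∫ τ in (0:ℝ)..r, Δ τ := by
          apply intervalIntegral.integral_mono_on hr0
            ((((hicn n).sub hic).abs).intervalIntegrable 0 r) hΔint
          intro x _
          exact le_add_of_nonneg_left (abs_nonneg _)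
    have t1 : |sn n r - s r| ≤ β * (∫ τ in (0:ℝ)..r, Δ τ) + ε' := by
      rw [ds]
      exact (abs_add_le _ _).trans (add_le_add bAneg hE_r)
    have t2 : |iN n r - i r| ≤ β * (∫ τ in (0:ℝ)..r, Δ τ) + (ε' + γ * ∫ τ in (0:ℝ)..r, Δ τ) := by
      rw [di]
      refine (abs_add_le _ _).trans (add_le_add bApos ?_)
      exact (abs_add_le _ _).trans (add_le_add bZneg bG)
    have : Δ r = |sn n r - s r| + |iN n r - i r| := rfl
    rw [this, hK]
    linarith
  have hgr := gronwall_integral_form hKpos (by positivity) hΔc (fun τ _ => hΔnn τ) key t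
    ⟨ht, le_rfl⟩
  have hfin : |iN n t - i t| ≤ 2 * ε' * Real.exp (K * t) :=
    le_trans (le_add_of_nonneg_left (abs_nonneg _)) hgr
  have hcalc : 2 * ε' * Real.exp (K * t) = ε / 2 := by
    rw [hε']
    field_simp
    ring
  rw [Real.dist_eq]
  rw [hcalc] at hfin
  linarith
/-- Γ-liminf inequality: for controls `u_n` vanishing after `T_n`, feasible and weakly*
converging to `u`, the limit control is feasible and the liminf of the finite-horizon
costs dominates the infinite-horizon cost of `u`. -/
theorem statement13 (β γ umax iM l1 l2 : ℝ) (hβ : 0 < β) (hγ : 0 < γ)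
    (humax : 0 < umax) (humaxβ : umax < β) (hiM : iM ∈ Set.Ioo (0:ℝ) 1)
    (hl1 : 0 < l1) (hl2 : 0 ≤ l2)
    (i₀ s₀ : ℝ) (hi₀ : i₀ ∈ Set.Ioo (0:ℝ) 1) (hs₀ : s₀ ∈ Set.Ioc (0:ℝ) (1 - i₀))
    (Tn : ℕ → ℝ) (hTn : StrictMono Tn) (hTn0 : ∀ n, 0 < Tn n)
    (hTtop : Filter.Tendsto Tn Filter.atTop Filter.atTop)
    (un : ℕ → ℝ → ℝ) (sn iN : ℕ → ℝ → ℝ) (u s i : ℝ → ℝ)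
    (hun : ∀ n, IsControl umax (un n)) (hu : IsControl umax u)
    (hsoln : ∀ n, SIRSol β γ (un n) (sn n) (iN n) s₀ i₀)
    (hsol : SIRSol β γ u s i s₀ i₀)
    (hadm : ∀ n, Admissible iM (iN n))
    (hzero : ∀ n, ∀ᵐ t : ℝ, t ∈ Set.Ioi (Tn n) → un n t = 0)
    (hweak : WeakStarLim un u) :
    Admissible iM i ∧
    Cost l1 l2 u i ≤
      Filter.liminf (fun n => CostT l1 l2 (Tn n) (un n) (iN n)) Filter.atTop := by
  have hsum : s₀ + i₀ ≤ 1 := by have := hs₀.2; linarith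
  have hstab := sir_stability hγ humax humaxβ hun hu hsoln hsol hs₀.1 hi₀.1 hsum hweak
  have hadm' : Admissible iM i := by
    intro t ht
    exact le_of_tendsto (hstab t ht) (Filter.Eventually.of_forall fun n => hadm n t ht)
  refine ⟨hadm', ?_⟩
  have hic : Continuous i := hsol.2.1
  have Pn := fun n => sir_bounds hγ humaxβ (hun n) (hsoln n) hs₀.1 hi₀.1 hsum
  have P := sir_bounds hγ humaxβ hu hsol hs₀.1 hi₀.1 hsum
  have hiNb : ∀ n t, 0 ≤ t → 0 ≤ iN n t ∧ iN n t ≤ 1 := by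
    intro n t ht
    obtain ⟨p1, p2, p3, p4⟩ := Pn n t ht
    exact ⟨p2.le, by linarith⟩
  have hib : ∀ t, 0 ≤ t → 0 ≤ i t ∧ i t ≤ 1 := by
    intro t ht
    obtain ⟨p1, p2, p3, p4⟩ := P t ht
    exact ⟨p2.le, by linarith⟩
  set F : ℝ → ℝ≥0∞ := fun τ => ENNReal.ofReal (l1 * u τ + l2 * i τ) with hF
  have hFm : Measurable F :=
    ((measurable_const.mul hu.1).add (measurable_const.mul hic.measurable)).ennreal_ofReal
  have main : ∀ M : ℕ, (∫⁻ t in Set.Ioc (0:ℝ) (M:ℝ), F t) ≤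
      Filter.liminf (fun n => CostT l1 l2 (Tn n) (un n) (iN n)) Filter.atTop := by
    intro M
    -- convergence of ∫ un over Ioc 0 M
    have huconv : Tendsto (fun n => ∫ t in Set.Ioc (0:ℝ) (M:ℝ), un n t) atTop
        (nhds (∫ t in Set.Ioc (0:ℝ) (M:ℝ), u t)) := by
      set g : ℝ → ℝ := (Set.Ioc (0:ℝ) (M:ℝ)).indicator (fun _ => 1) with hg
      have hgint : IntegrableOn g (Set.Ioi (0:ℝ)) volume := by
        have : Integrable g volume := by
          rw [hg, integrable_indicator_iff measurableSet_Ioc]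
          exact integrableOn_const measure_Ioc_lt_top.ne
        exact this.integrableOn
      have key : ∀ w : ℝ → ℝ, Measurable w →
          (∫ x in Set.Ioi (0:ℝ), w x * g x) = ∫ t in Set.Ioc (0:ℝ) (M:ℝ), w t := by
        intro w hw
        have h1 : (fun x => w x * g x) = (Set.Ioc (0:ℝ) (M:ℝ)).indicator w := by
          funext x
          by_cases hx : x ∈ Set.Ioc (0:ℝ) (M:ℝ)
          · simp [hg, Set.indicator_of_mem hx]
          · simp [hg, Set.indicator_of_notMem hx]
        rw [h1, MeasureTheory.integral_indicator measurableSet_Ioc,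
          Measure.restrict_restrict measurableSet_Ioc,
          Set.inter_eq_self_of_subset_left Set.Ioc_subset_Ioi_self]
      have h2 := hweak g hgint
      rw [key u hu.1] at h2
      have h3 : (fun n => ∫ x in Set.Ioi (0:ℝ), un n x * g x)
          = fun n => ∫ t in Set.Ioc (0:ℝ) (M:ℝ), un n t := funext fun n => key (un n) (hun n).1
      rwa [h3] at h2
    -- convergence of ∫ iN over Ioc 0 M
    have hiconv : Tendsto (fun n => ∫ t in Set.Ioc (0:ℝ) (M:ℝ), iN n t) atTop
        (nhds (∫ t in Set.Ioc (0:ℝ) (M:ℝ), i t)) := by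
      apply MeasureTheory.tendsto_integral_of_dominated_convergence (bound := fun _ => (1:ℝ))
      · exact fun n => ((hsoln n).2.1.measurable.aestronglyMeasurable).restrict
      · exact integrableOn_const measure_Ioc_lt_top.ne
      · intro n
        filter_upwards [ae_restrict_mem measurableSet_Ioc] with t htmem
        have h5 := hiNb n t htmem.1.le
        rw [Real.norm_eq_abs]
        exact abs_le.2 ⟨by linarith [h5.1], h5.2⟩
      · filter_upwards [ae_restrict_mem measurableSet_Ioc] with t htmem
        exact hstab t htmem.1.le
    -- splitting of the lintegral
    have split : ∀ w j : ℝ → ℝ, Measurable w → Measurable j →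
        (∀ t, t ∈ Set.Ioc (0:ℝ) (M:ℝ) → 0 ≤ w t ∧ w t ≤ umax) →
        (∀ t, t ∈ Set.Ioc (0:ℝ) (M:ℝ) → 0 ≤ j t ∧ j t ≤ 1) →
        (∫⁻ t in Set.Ioc (0:ℝ) (M:ℝ), ENNReal.ofReal (l1 * w t + l2 * j t))
          = ENNReal.ofReal (l1 * ∫ t in Set.Ioc (0:ℝ) (M:ℝ), w t)
            + ENNReal.ofReal (l2 * ∫ t in Set.Ioc (0:ℝ) (M:ℝ), j t) := by
      intro w j hwm hjm hwb hjb
      have hwint : IntegrableOn w (Set.Ioc (0:ℝ) (M:ℝ)) volume := by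
        apply Measure.integrableOn_of_bounded (M := umax) measure_Ioc_lt_top.ne
          hwm.aestronglyMeasurable
        filter_upwards [ae_restrict_mem measurableSet_Ioc] with x hx
        rw [Real.norm_eq_abs]
        exact abs_le.2 ⟨by linarith [(hwb x hx).1, le_trans (hwb x hx).1 (hwb x hx).2],
          (hwb x hx).2⟩
      have hjint : IntegrableOn j (Set.Ioc (0:ℝ) (M:ℝ)) volume := by
        apply Measure.integrableOn_of_bounded (M := 1) measure_Ioc_lt_top.ne
          hjm.aestronglyMeasurable
        filter_upwards [ae_restrict_mem measurableSet_Ioc] with x hx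
        rw [Real.norm_eq_abs]
        exact abs_le.2 ⟨by linarith [(hjb x hx).1], (hjb x hx).2⟩
      have hsplit_ae : (∫⁻ t in Set.Ioc (0:ℝ) (M:ℝ), ENNReal.ofReal (l1 * w t + l2 * j t))
          = ∫⁻ t in Set.Ioc (0:ℝ) (M:ℝ),
              (ENNReal.ofReal (l1 * w t) + ENNReal.ofReal (l2 * j t)) := by
        apply setLIntegral_congr_fun measurableSet_Ioc
        intro x hx
        dsimp only
        rw [ENNReal.ofReal_add (mul_nonneg hl1.le (hwb x hx).1) (mul_nonneg hl2 (hjb x hx).1)]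
      rw [hsplit_ae, lintegral_add_left (f := fun t => ENNReal.ofReal (l1 * w t)) ((measurable_const.mul hwm).ennreal_ofReal)]
      have e1 : (∫⁻ t in Set.Ioc (0:ℝ) (M:ℝ), ENNReal.ofReal (l1 * w t))
          = ENNReal.ofReal (∫ t in Set.Ioc (0:ℝ) (M:ℝ), l1 * w t) := by
        rw [ofReal_integral_eq_lintegral_ofReal (hwint.const_mul l1)]
        filter_upwards [ae_restrict_mem measurableSet_Ioc] with x hx
        exact mul_nonneg hl1.le (hwb x hx).1
      have e2 : (∫⁻ t in Set.Ioc (0:ℝ) (M:ℝ), ENNReal.ofReal (l2 * j t))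
          = ENNReal.ofReal (∫ t in Set.Ioc (0:ℝ) (M:ℝ), l2 * j t) := by
        rw [ofReal_integral_eq_lintegral_ofReal (hjint.const_mul l2)]
        filter_upwards [ae_restrict_mem measurableSet_Ioc] with x hx
        exact mul_nonneg hl2 (hjb x hx).1
      rw [e1, e2, MeasureTheory.integral_const_mul, MeasureTheory.integral_const_mul]
    have hAn : ∀ n, (∫⁻ t in Set.Ioc (0:ℝ) (M:ℝ),
          ENNReal.ofReal (l1 * un n t + l2 * iN n t))
        = ENNReal.ofReal (l1 * ∫ t in Set.Ioc (0:ℝ) (M:ℝ), un n t)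
          + ENNReal.ofReal (l2 * ∫ t in Set.Ioc (0:ℝ) (M:ℝ), iN n t) := fun n =>
      split (un n) (iN n) (hun n).1 (hsoln n).2.1.measurable
        (fun t _ => ⟨((hun n).2 t).1, ((hun n).2 t).2⟩)
        (fun t ht => hiNb n t ht.1.le)
    have hA : (∫⁻ t in Set.Ioc (0:ℝ) (M:ℝ), F t)
        = ENNReal.ofReal (l1 * ∫ t in Set.Ioc (0:ℝ) (M:ℝ), u t)
          + ENNReal.ofReal (l2 * ∫ t in Set.Ioc (0:ℝ) (M:ℝ), i t) :=
      split u i hu.1 hic.measurable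
        (fun t _ => ⟨(hu.2 t).1, (hu.2 t).2⟩)
        (fun t ht => hib t ht.1.le)
    have hlim : Tendsto (fun n => ∫⁻ t in Set.Ioc (0:ℝ) (M:ℝ),
        ENNReal.ofReal (l1 * un n t + l2 * iN n t)) atTop
        (nhds (∫⁻ t in Set.Ioc (0:ℝ) (M:ℝ), F t)) := by
      rw [hA]
      have h6 : (fun n => ∫⁻ t in Set.Ioc (0:ℝ) (M:ℝ),
          ENNReal.ofReal (l1 * un n t + l2 * iN n t))
          = fun n => ENNReal.ofReal (l1 * ∫ t in Set.Ioc (0:ℝ) (M:ℝ), un n t)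
            + ENNReal.ofReal (l2 * ∫ t in Set.Ioc (0:ℝ) (M:ℝ), iN n t) := funext hAn
      rw [h6]
      exact (ENNReal.tendsto_ofReal (huconv.const_mul l1)).add
        (ENNReal.tendsto_ofReal (hiconv.const_mul l2))
    have hle : ∀ᶠ n in atTop, (∫⁻ t in Set.Ioc (0:ℝ) (M:ℝ),
        ENNReal.ofReal (l1 * un n t + l2 * iN n t)) ≤ CostT l1 l2 (Tn n) (un n) (iN n) := by
      filter_upwards [hTtop.eventually_ge_atTop (M:ℝ)] with n hn
      exact lintegral_mono_set (Set.Ioc_subset_Ioc_right hn)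
    calc (∫⁻ t in Set.Ioc (0:ℝ) (M:ℝ), F t)
        = Filter.liminf (fun n => ∫⁻ t in Set.Ioc (0:ℝ) (M:ℝ),
            ENNReal.ofReal (l1 * un n t + l2 * iN n t)) Filter.atTop := hlim.liminf_eq.symm
      _ ≤ Filter.liminf (fun n => CostT l1 l2 (Tn n) (un n) (iN n)) Filter.atTop :=
          Filter.liminf_le_liminf hle
  have hCost : Cost l1 l2 u i = ⨆ M : ℕ, ∫⁻ t in Set.Ioc (0:ℝ) (M:ℝ), F t := by
    have hUnion : (⋃ M : ℕ, Set.Ioc (0:ℝ) (M:ℝ)) = Set.Ioi 0 := by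
      ext x
      simp only [Set.mem_iUnion, Set.mem_Ioc, Set.mem_Ioi]
      constructor
      · rintro ⟨M, h1, _⟩; exact h1
      · intro hx
        obtain ⟨M, hM⟩ := exists_nat_gt x
        exact ⟨M, hx, hM.le⟩
    have hdir : Directed (· ⊆ ·) (fun M : ℕ => Set.Ioc (0:ℝ) (M:ℝ)) := by
      intro a b
      exact ⟨max a b, Set.Ioc_subset_Ioc_right (by exact_mod_cast le_max_left a b),
        Set.Ioc_subset_Ioc_right (by exact_mod_cast le_max_right a b)⟩
    calc Cost l1 l2 u i = (volume.withDensity F) (Set.Ioi 0) :=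
        (withDensity_apply F measurableSet_Ioi).symm
      _ = (volume.withDensity F) (⋃ M : ℕ, Set.Ioc (0:ℝ) (M:ℝ)) := by rw [hUnion]
      _ = ⨆ M : ℕ, (volume.withDensity F) (Set.Ioc (0:ℝ) (M:ℝ)) := hdir.measure_iUnion
      _ = ⨆ M : ℕ, ∫⁻ t in Set.Ioc (0:ℝ) (M:ℝ), F t :=
          iSup_congr fun M => withDensity_apply F measurableSet_Ioc
  rw [hCost]
  exact iSup_le main
end
end
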